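/- arXiv:1407.4238 — 3 statements merged into one kernel-verified Lean document; each statement's English description precedes it below -/
import Mathlib

section
/- The number of semistandard Young tableaux of a fixed skew shape λ/μ with entries in {1,…,n} and fixed weight is invariant under permuting the entries of the weight vector; equivalently, the skew Schur polynomial s_{λ/μ}(x_1,…,x_n) is a symmetric polynomial. -/
/-!
STATEMENT 1: The number of semistandard skew tableaux of shape λ/μ with entries in
{1,…,n} and a fixed weight is invariant under permuting the weight vector;
equivalently the skew Schur polynomial is symmetric.

A skew tableau is encoded as its list of rows (entries in `Fin n`); row `i` occupies
the columns `μ_i, …, λ_i − 1`.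
-/

namespace KP

variable (n : ℕ)

/-- Semistandard skew tableau of shape `lam/mu` (partitions as lists of row lengths). -/
def IsSkewSSYT (lam mu : List ℕ) (T : List (List (Fin n))) : Prop :=
  T.length = lam.length ∧
  (∀ i : ℕ, (T.getD i []).length = lam.getD i 0 - mu.getD i 0) ∧
  (∀ i : ℕ, (T.getD i []).Pairwise (· ≤ ·)) ∧
  ∀ i j : ℕ, mu.getD i 0 ≤ j → mu.getD (i+1) 0 ≤ j →
    ∀ x ∈ (T.getD i [])[j - mu.getD i 0]?,
    ∀ y ∈ (T.getD (i+1) [])[j - mu.getD (i+1) 0]?, x < y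

/-- The weight (content) of a tableau. -/
def wtT (T : List (List (Fin n))) : Fin n → ℕ := fun k => T.flatten.count k

section Aux

variable {n}

lemma sorted_get?_iff {L : List (Fin n)} (hL : L.Pairwise (· ≤ ·)) (p : ℕ) (x : Fin n) :
    L[p]? = some x ↔
      L.countP (fun b => decide (b < x)) ≤ p ∧ p < L.countP (fun b => decide (b ≤ x)) := by
  induction L generalizing p with
  | nil => simp
  | cons a L ih =>
    have ha : ∀ b ∈ L, a ≤ b := fun b hb => (List.pairwise_cons.mp hL).1 b hb
    have hL' := (List.pairwise_cons.mp hL).2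
    have hclt : L.countP (fun b => decide (b < a)) = 0 := by
      rw [List.countP_eq_zero]; intro b hb; simpa using not_lt.2 (ha b hb)
    have hlt_cons : (a::L).countP (fun b => decide (b < x))
        = L.countP (fun b => decide (b < x)) + (if a < x then 1 else 0) := by
      rw [List.countP_cons]; by_cases h : a < x <;> simp [h]
    have hle_cons : (a::L).countP (fun b => decide (b ≤ x))
        = L.countP (fun b => decide (b ≤ x)) + (if a ≤ x then 1 else 0) := by
      rw [List.countP_cons]; by_cases h : a ≤ x <;> simp [h]
    cases p with
    | zero =>
      rw [hlt_cons, hle_cons]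
      simp only [List.getElem?_cons_zero, Option.some.injEq]
      constructor
      · rintro rfl
        simp [hclt]
      · rintro ⟨h1, h2⟩
        by_contra hne
        rcases lt_or_gt_of_ne (fun h => hne h) with h | h
        · rw [if_pos h] at h1; omega
        · have hle0 : L.countP (fun b => decide (b ≤ x)) = 0 := by
            rw [List.countP_eq_zero]; intro b hb
            simpa using not_le.2 (lt_of_lt_of_le h (ha b hb))
          rw [if_neg (not_le.2 h), hle0] at h2; omega
    | succ p =>
      rw [List.getElem?_cons_succ, ih hL', hlt_cons, hle_cons]
      rcases lt_trichotomy a x with h | h | h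
      · rw [if_pos h, if_pos h.le]; omega
      · subst h
        rw [if_neg (lt_irrefl a), if_pos le_rfl, hclt]
        have : L.countP (fun b => decide (b < a)) = 0 := hclt
        omega
      · have hle0 : L.countP (fun b => decide (b ≤ x)) = 0 := by
          rw [List.countP_eq_zero]; intro b hb
          simpa using not_le.2 (lt_of_lt_of_le h (ha b hb))
        rw [if_neg (not_lt.2 h.le), if_neg (not_le.2 h), hle0]
        have : L.countP (fun b => decide (b < x)) ≤ L.countP (fun b => decide (b ≤ x)) :=
          List.countP_mono_left (fun b _ hb => by simpa using le_of_lt (by simpa using hb))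
        omega

lemma countP_eq_sum_count (L : List (Fin n)) (p : Fin n → Bool) :
    L.countP p = ∑ j : Fin n, if p j then L.count j else 0 := by
  induction L with
  | nil => simp
  | cons a L ih =>
    rw [List.countP_cons, ih]
    have : ∀ j : Fin n, (if p j then (a::L).count j else 0)
        = (if p j then L.count j else 0) + (if j = a then (if p j then 1 else 0) else 0) := by
      intro j
      rw [List.count_cons]
      by_cases h : j = a
      · subst h; simp only [List.count_cons_self, beq_self_eq_true, if_pos rfl]
        split_ifs <;> omega
      · have : (a == j) = false := by simpa using fun hh => h hh.symm
        simp [this, h]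
    rw [Finset.sum_congr rfl (fun j _ => this j), Finset.sum_add_distrib,
      Finset.sum_ite_eq' Finset.univ a (fun j => if p j then 1 else 0)]
    simp





def ofCounts (c : Fin n → ℕ) : List (Fin n) :=
  (List.finRange n).flatMap fun j => List.replicate (c j) j

lemma ofCounts_sorted (c : Fin n → ℕ) : (ofCounts c).Pairwise (· ≤ ·) := by
  unfold ofCounts
  rw [List.flatMap, List.pairwise_flatten]
  constructor
  · intro l hl
    simp only [List.mem_map] at hl
    obtain ⟨j, _, rfl⟩ := hl
    exact List.pairwise_replicate.2 (Or.inr le_rfl)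
  · rw [List.pairwise_map]
    refine List.Pairwise.imp_of_mem ?_ (List.pairwise_lt_finRange n)
    intro a b _ _ hab x hx y hy
    rw [List.eq_of_mem_replicate hx, List.eq_of_mem_replicate hy]
    exact hab.le

lemma count_ofCounts (c : Fin n → ℕ) (x : Fin n) : (ofCounts c).count x = c x := by
  unfold ofCounts
  rw [List.count_flatMap]
  have : ∀ j : Fin n, (List.count x ∘ fun j => List.replicate (c j) j) j
      = (if j = x then c j else 0) := by
    intro j
    simp only [Function.comp_apply, List.count_replicate]
    by_cases h : j = x <;> simp [h]
  rw [List.map_congr_left (fun j _ => this j), ← Fin.sum_univ_def]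
  simp

lemma length_ofCounts (c : Fin n → ℕ) : (ofCounts c).length = ∑ j : Fin n, c j := by
  unfold ofCounts
  rw [List.length_flatMap]
  have : ∀ j : Fin n, (List.length ∘ fun j => List.replicate (c j) j) j = c j := by
    intro j; simp
  simp only [List.length_replicate]; rw [← Fin.sum_univ_def]






lemma countP_val_congr (L : List (Fin n)) (x : Fin n) :
    L.countP (fun b => decide (b < x)) = L.countP (fun b => decide (b.val < x.val)) :=
  List.countP_congr (fun b _ => by simp only [decide_eq_true_eq]; exact Fin.lt_def)

lemma countP_val_congr' (L : List (Fin n)) (x : Fin n) :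
    L.countP (fun b => decide (b ≤ x)) = L.countP (fun b => decide (b.val < x.val + 1)) :=
  List.countP_congr (fun b _ => by simp only [decide_eq_true_eq]; rw [Fin.le_def, Nat.lt_succ_iff])

lemma countP_val_mono (L : List (Fin n)) {k k' : ℕ} (h : k ≤ k') :
    L.countP (fun b => decide (b.val < k)) ≤ L.countP (fun b => decide (b.val < k')) :=
  List.countP_mono_left (fun b _ hb => by simp only [decide_eq_true_eq] at *; omega)

/-- Characterization of an entry of a sorted list in terms of threshold counts. -/
lemma sorted_get?_iff_val {L : List (Fin n)} (hL : L.Pairwise (· ≤ ·)) (p : ℕ) (x : Fin n) :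
    L[p]? = some x ↔
      L.countP (fun b => decide (b.val < x.val)) ≤ p ∧
        p < L.countP (fun b => decide (b.val < x.val + 1)) := by
  rw [sorted_get?_iff hL, countP_val_congr, countP_val_congr']

lemma colStrict_iff {R Q : List (Fin n)} (hR : R.Pairwise (· ≤ ·)) (hQ : Q.Pairwise (· ≤ ·))
    {m1 m2 l1 l2 : ℕ} (hm : m2 ≤ m1) (hl : l2 ≤ l1) (hml1 : m1 ≤ l1) (hml2 : m2 ≤ l2)
    (hRlen : R.length = l1 - m1) (hQlen : Q.length = l2 - m2) :
    (∀ j : ℕ, m1 ≤ j → m2 ≤ j →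
      ∀ x ∈ R[j - m1]?, ∀ y ∈ Q[j - m2]?, x < y) ↔
    (∀ k : ℕ, m2 + Q.countP (fun b => decide (b.val < k + 1)) ≤
        m1 + R.countP (fun b => decide (b.val < k))) := by
  constructor
  · intro hstrict k
    by_contra hcon
    push_neg at hcon
    set j := m1 + R.countP (fun b => decide (b.val < k)) with hj
    have hjl2 : j < m2 + Q.countP (fun b => decide (b.val < k + 1)) := hcon
    have hQle : Q.countP (fun b => decide (b.val < k + 1)) ≤ Q.length := List.countP_le_length
    have hjlt : j - m2 < Q.length := by omega
    have hy := List.getElem?_eq_getElem hjlt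
    set y := Q[j - m2]'hjlt with hy'
    have hychar := (sorted_get?_iff_val hQ (j - m2) y).1 hy
    have hyk : y.val ≤ k := by
      by_contra hyk
      push_neg at hyk
      have := countP_val_mono Q (show k + 1 ≤ y.val by omega)
      omega
    by_cases hp1 : R.countP (fun b => decide (b.val < k)) < R.length
    · have hx := List.getElem?_eq_getElem hp1
      set x := R[R.countP (fun b => decide (b.val < k))]'hp1 with hx'
      have hxchar := (sorted_get?_iff_val hR _ x).1 hx
      have hxk : k ≤ x.val := by
        by_contra hxk
        push_neg at hxk
        have := countP_val_mono R (show x.val + 1 ≤ k by omega)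
        omega
      have hlt := hstrict j (by omega) (by omega) x (by
          rw [Option.mem_def, show j - m1 = R.countP (fun b => decide (b.val < k)) by omega]
          exact hx) y (by rw [Option.mem_def]; exact hy)
      have : x.val < y.val := hlt
      omega
    · push_neg at hp1
      have : R.countP (fun b => decide (b.val < k)) = R.length :=
        le_antisymm (List.countP_le_length) hp1
      omega
  · intro hint j hm1j hm2j x hx y hy
    rw [Option.mem_def] at hx hy
    have hxchar := (sorted_get?_iff_val hR _ x).1 hx
    have hychar := (sorted_get?_iff_val hQ _ y).1 hy
    by_contra hxy
    push_neg at hxy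
    have hmono := countP_val_mono R (show y.val ≤ x.val from hxy)
    have := hint y.val
    omega





def IsGT (lam mu : List ℕ) (g : Fin (n+1) → ℕ → ℕ) : Prop :=
  (∀ i, g 0 i = mu.getD i 0) ∧
  (∀ i, g (Fin.last n) i = lam.getD i 0) ∧
  (∀ k : Fin n, ∀ i, g k.castSucc i ≤ g k.succ i) ∧
  (∀ k : Fin n, ∀ i, g k.succ (i+1) ≤ g k.castSucc i)

def GTset (lam mu : List ℕ) (w : Fin n → ℕ) : Set (Fin (n+1) → ℕ → ℕ) :=
  {g | IsGT lam mu g ∧ ∀ k : Fin n,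
    w k + ∑ i ∈ Finset.range lam.length, g k.castSucc i
      = ∑ i ∈ Finset.range lam.length, g k.succ i}

lemma level_mono {g : Fin (n+1) → ℕ → ℕ}
    (hmono : ∀ k : Fin n, ∀ i, g k.castSucc i ≤ g k.succ i) :
    ∀ (t kv : ℕ) (h : kv + t ≤ n) (i : ℕ),
      g ⟨kv, by omega⟩ i ≤ g ⟨kv + t, by omega⟩ i := by
  intro t
  induction t with
  | zero => intro kv h i; exact le_rfl
  | succ t ih =>
    intro kv h i
    refine le_trans (ih kv (by omega) i) ?_
    have := hmono ⟨kv + t, by omega⟩ i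
    rw [Fin.castSucc_mk, Fin.succ_mk] at this
    exact le_of_le_of_eq (le_trans le_rfl this) (by congr 1)

lemma IsGT.le_lam {lam mu : List ℕ} {g : Fin (n+1) → ℕ → ℕ} (hGT : IsGT lam mu g)
    (k : Fin (n+1)) (i : ℕ) : g k i ≤ lam.getD i 0 := by
  obtain ⟨h0, hl, hmono, hstrip⟩ := hGT
  have := level_mono hmono (n - k.val) k.val (by omega) i
  have hk : (⟨k.val, by omega⟩ : Fin (n+1)) = k := by ext; rfl
  have hlast : (⟨k.val + (n - k.val), by omega⟩ : Fin (n+1)) = Fin.last n := by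
    ext; simp; omega
  rw [hk, hlast, hl i] at this
  exact this

lemma IsGT.vanish {lam mu : List ℕ} {g : Fin (n+1) → ℕ → ℕ} (hGT : IsGT lam mu g)
    (k : Fin (n+1)) {i : ℕ} (hi : lam.length ≤ i) : g k i = 0 := by
  have := hGT.le_lam k i
  rwa [List.getD_eq_default _ _ hi, Nat.le_zero] at this

def bkLo (m : ℕ) (hm : m + 2 ≤ n) (g : Fin (n+1) → ℕ → ℕ) (i : ℕ) : ℕ :=
  max (g ⟨m, by omega⟩ i) (g ⟨m+2, by omega⟩ (i+1))

def bkHi (m : ℕ) (hm : m + 2 ≤ n) (g : Fin (n+1) → ℕ → ℕ) (i : ℕ) : ℕ :=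
  if i = 0 then g ⟨m+2, by omega⟩ 0 else min (g ⟨m, by omega⟩ (i-1)) (g ⟨m+2, by omega⟩ i)

/-- The Bender–Knuth involution on GT patterns, acting at level `m+1`. -/
def bk (m : ℕ) (hm : m + 2 ≤ n) (g : Fin (n+1) → ℕ → ℕ) : Fin (n+1) → ℕ → ℕ :=
  fun k i => if k.val = m + 1 then bkLo m hm g i + bkHi m hm g i - g k i else g k i

lemma bk_apply_ne (m : ℕ) (hm : m + 2 ≤ n) (g : Fin (n+1) → ℕ → ℕ) {k : Fin (n+1)}
    (hk : k.val ≠ m + 1) (i : ℕ) : bk m hm g k i = g k i := if_neg hk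

lemma bk_apply_mid (m : ℕ) (hm : m + 2 ≤ n) (g : Fin (n+1) → ℕ → ℕ) (i : ℕ) :
    bk m hm g ⟨m+1, by omega⟩ i = bkLo m hm g i + bkHi m hm g i - g ⟨m+1, by omega⟩ i :=
  if_pos rfl

lemma lo_hi_sum (d u : ℕ → ℕ) (N : ℕ) (hu : u N = 0) :
    ∑ i ∈ Finset.range N,
        (max (d i) (u (i+1)) + (if i = 0 then u 0 else min (d (i-1)) (u i)))
      = ∑ i ∈ Finset.range N, d i + ∑ i ∈ Finset.range N, u i := by
  cases N with
  | zero => simp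
  | succ M =>
    rw [Finset.sum_add_distrib]
    rw [Finset.sum_range_succ (fun i => max (d i) (u (i+1)))]
    rw [Finset.sum_range_succ' (fun i => if i = 0 then u 0 else min (d (i-1)) (u i))]
    rw [Finset.sum_range_succ d, Finset.sum_range_succ' u]
    have h1 : (∑ i ∈ Finset.range M, if i + 1 = 0 then u 0 else min (d (i+1-1)) (u (i+1)))
        = ∑ i ∈ Finset.range M, min (d i) (u (i+1)) :=
      Finset.sum_congr rfl (fun i _ => by simp)
    rw [h1]
    have h2 : max (d M) (u (M+1)) = d M := by rw [hu]; omega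
    rw [h2]
    have key : ∑ i ∈ Finset.range M, max (d i) (u (i+1)) + ∑ i ∈ Finset.range M, min (d i) (u (i+1))
        = ∑ i ∈ Finset.range M, d i + ∑ i ∈ Finset.range M, u (i+1) := by
      rw [← Finset.sum_add_distrib, ← Finset.sum_add_distrib]
      exact Finset.sum_congr rfl (fun i _ => by omega)
    have h3 : (if 0 = 0 then u 0 else min (d (0-1)) (u 0)) = u 0 := if_pos rfl
    rw [h3]
    omega



section BK

variable {lam mu : List ℕ} {g : Fin (n+1) → ℕ → ℕ}

lemma IsGT.mono' (hGT : IsGT lam mu g) (kv : ℕ) (h : kv < n) (i : ℕ) :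
    g ⟨kv, by omega⟩ i ≤ g ⟨kv+1, by omega⟩ i := by
  have := hGT.2.2.1 ⟨kv, h⟩ i
  rwa [Fin.castSucc_mk, Fin.succ_mk] at this

lemma IsGT.strip' (hGT : IsGT lam mu g) (kv : ℕ) (h : kv < n) (i : ℕ) :
    g ⟨kv+1, by omega⟩ (i+1) ≤ g ⟨kv, by omega⟩ i := by
  have := hGT.2.2.2 ⟨kv, h⟩ i
  rwa [Fin.castSucc_mk, Fin.succ_mk] at this

lemma bkLo_le (m : ℕ) (hm : m + 2 ≤ n) (hGT : IsGT lam mu g) (i : ℕ) :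
    bkLo m hm g i ≤ g ⟨m+1, by omega⟩ i := by
  unfold bkLo
  refine max_le (hGT.mono' m (by omega) i) ?_
  exact hGT.strip' (m+1) (by omega) i

lemma le_bkHi (m : ℕ) (hm : m + 2 ≤ n) (hGT : IsGT lam mu g) (i : ℕ) :
    g ⟨m+1, by omega⟩ i ≤ bkHi m hm g i := by
  unfold bkHi
  rcases Nat.eq_zero_or_pos i with rfl | hi
  · rw [if_pos rfl]
    exact hGT.mono' (m+1) (by omega) 0
  · rw [if_neg (by omega)]
    refine le_min ?_ (hGT.mono' (m+1) (by omega) i)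
    have := hGT.strip' m (by omega) (i-1)
    have hi1 : i - 1 + 1 = i := by omega
    rwa [hi1] at this

lemma bk_isGT (m : ℕ) (hm : m + 2 ≤ n) (hGT : IsGT lam mu g) : IsGT lam mu (bk m hm g) := by
  have h0 := hGT.1
  have hl := hGT.2.1
  refine ⟨?_, ?_, ?_, ?_⟩
  · intro i
    rw [bk_apply_ne m hm g (k := 0) (show ¬((0 : Fin (n+1)).val = m + 1) by simp) i]
    exact h0 i
  · intro i
    rw [bk_apply_ne m hm g (k := Fin.last n) (show ¬(n = m + 1) by omega) i]
    exact hl i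
  · rintro ⟨kv, hk⟩ i
    rw [Fin.castSucc_mk, Fin.succ_mk]
    rcases eq_or_ne kv m with heq | hkm
    · subst heq
      rw [bk_apply_ne kv hm g (k := ⟨kv, by omega⟩) (show ¬(kv = kv + 1) by omega) i]
      rw [show (bk kv hm g ⟨kv+1, by omega⟩ i) = bkLo kv hm g i + bkHi kv hm g i - g ⟨kv+1, by omega⟩ i
        from bk_apply_mid kv hm g i]
      have h1 : g ⟨kv, by omega⟩ i ≤ bkLo kv hm g i := le_max_left _ _
      have h2 := bkLo_le kv hm hGT i
      have h3 := le_bkHi kv hm hGT i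
      omega
    · rcases eq_or_ne kv (m+1) with heq | hkm1
      · subst heq
        rw [show (bk m hm g ⟨m+1, by omega⟩ i) = bkLo m hm g i + bkHi m hm g i - g ⟨m+1, by omega⟩ i
          from bk_apply_mid m hm g i]
        rw [bk_apply_ne m hm g (k := ⟨m+1+1, by omega⟩) (show ¬(m + 1 + 1 = m + 1) by omega) i]
        have h2 := bkLo_le m hm hGT i
        have h3 := le_bkHi m hm hGT i
        have h4 : bkHi m hm g i ≤ g ⟨m+1+1, by omega⟩ i := by
          unfold bkHi
          rcases Nat.eq_zero_or_pos i with rfl | hi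
          · rw [if_pos rfl]
          · rw [if_neg (by omega)]
            exact min_le_right _ _
        omega
      · rw [bk_apply_ne m hm g (k := ⟨kv, by omega⟩) (show ¬(kv = m + 1) from hkm1) i,
          bk_apply_ne m hm g (k := ⟨kv+1, by omega⟩) (show ¬(kv + 1 = m + 1) by omega) i]
        exact hGT.mono' kv (by omega) i
  · rintro ⟨kv, hk⟩ i
    rw [Fin.castSucc_mk, Fin.succ_mk]
    rcases eq_or_ne kv m with heq | hkm
    · subst heq
      rw [bk_apply_ne kv hm g (k := ⟨kv, by omega⟩) (show ¬(kv = kv + 1) by omega) i]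
      rw [show (bk kv hm g ⟨kv+1, by omega⟩ (i+1))
          = bkLo kv hm g (i+1) + bkHi kv hm g (i+1) - g ⟨kv+1, by omega⟩ (i+1)
        from bk_apply_mid kv hm g (i+1)]
      have h3 := le_bkHi kv hm hGT (i+1)
      have h4 : bkHi kv hm g (i+1) ≤ g ⟨kv, by omega⟩ i := by
        unfold bkHi
        rw [if_neg (by omega)]
        have he : i + 1 - 1 = i := by omega
        rw [he]
        exact min_le_left _ _
      have h2 := bkLo_le kv hm hGT (i+1)
      omega
    · rcases eq_or_ne kv (m+1) with heq | hkm1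
      · subst heq
        rw [show (bk m hm g ⟨m+1, by omega⟩ i) = bkLo m hm g i + bkHi m hm g i - g ⟨m+1, by omega⟩ i
          from bk_apply_mid m hm g i]
        rw [bk_apply_ne m hm g (k := ⟨m+1+1, by omega⟩) (show ¬(m + 1 + 1 = m + 1) by omega) (i+1)]
        have h1 : g ⟨m+1+1, by omega⟩ (i+1) ≤ bkLo m hm g i := by
          exact le_max_right (g ⟨m, by omega⟩ i) (g ⟨m+2, by omega⟩ (i+1))
        have h2 := bkLo_le m hm hGT i
        have h3 := le_bkHi m hm hGT i
        omega
      · rw [bk_apply_ne m hm g (k := ⟨kv+1, by omega⟩) (show ¬(kv + 1 = m + 1) by omega) (i+1),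
          bk_apply_ne m hm g (k := ⟨kv, by omega⟩) (show ¬(kv = m + 1) from hkm1) i]
        exact hGT.strip' kv (by omega) i

lemma bk_bk (m : ℕ) (hm : m + 2 ≤ n) (hGT : IsGT lam mu g) : bk m hm (bk m hm g) = g := by
  funext k i
  rcases eq_or_ne k.val (m+1) with hk | hk
  · have hmlt : m + 1 < n + 1 := by omega
    have hkeq : k = ⟨m+1, hmlt⟩ := Fin.ext hk
    rw [hkeq]
    have hLo : ∀ j, bkLo m hm (bk m hm g) j = bkLo m hm g j := by
      intro j
      unfold bkLo
      rw [bk_apply_ne m hm g (show ¬(m = m + 1) by omega),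
        bk_apply_ne m hm g (show ¬(m + 2 = m + 1) by omega)]
    have hHi : ∀ j, bkHi m hm (bk m hm g) j = bkHi m hm g j := by
      intro j
      unfold bkHi
      rcases Nat.eq_zero_or_pos j with rfl | hj
      · rw [if_pos rfl, if_pos rfl, bk_apply_ne m hm g (show ¬(m + 2 = m + 1) by omega)]
      · rw [if_neg (by omega), if_neg (by omega),
          bk_apply_ne m hm g (show ¬(m = m + 1) by omega),
          bk_apply_ne m hm g (show ¬(m + 2 = m + 1) by omega)]
    rw [bk_apply_mid m hm _ i, hLo, hHi, bk_apply_mid m hm g i]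
    have h2 := bkLo_le m hm hGT i
    have h3 := le_bkHi m hm hGT i
    omega
  · rw [bk_apply_ne m hm _ hk i, bk_apply_ne m hm g hk i]

lemma bk_mem {w : Fin n → ℕ} (m : ℕ) (hm : m + 2 ≤ n) (ha : m < n) (hb : m + 1 < n)
    (hg : g ∈ GTset lam mu w) :
    bk m hm g ∈ GTset lam mu (w ∘ (Equiv.swap ⟨m, ha⟩ ⟨m+1, hb⟩)) := by
  obtain ⟨hGT, hwt⟩ := hg
  have ha' : m < n + 1 := by omega
  have hb' : m + 1 < n + 1 := by omega
  have hc' : m + 2 < n + 1 := by omega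
  refine ⟨bk_isGT m hm hGT, ?_⟩
  have hvan : g ⟨m+2, hc'⟩ lam.length = 0 := hGT.vanish _ le_rfl
  have hsum0 := lo_hi_sum (fun i => g ⟨m, ha'⟩ i) (fun i => g ⟨m+2, hc'⟩ i) lam.length hvan
  have hpt : ∀ i, bk m hm g ⟨m+1, hb'⟩ i + g ⟨m+1, hb'⟩ i
      = bkLo m hm g i + bkHi m hm g i := by
    intro i
    rw [show bk m hm g ⟨m+1, hb'⟩ i = bkLo m hm g i + bkHi m hm g i - g ⟨m+1, hb'⟩ i
      from bk_apply_mid m hm g i]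
    have h2 := bkLo_le m hm hGT i
    have h3 := le_bkHi m hm hGT i
    omega
  have hsum : ∑ i ∈ Finset.range lam.length, bk m hm g ⟨m+1, hb'⟩ i
        + ∑ i ∈ Finset.range lam.length, g ⟨m+1, hb'⟩ i
      = ∑ i ∈ Finset.range lam.length, g ⟨m, ha'⟩ i
        + ∑ i ∈ Finset.range lam.length, g ⟨m+2, hc'⟩ i := by
    rw [← Finset.sum_add_distrib, Finset.sum_congr rfl (fun i _ => hpt i)]
    have : ∀ i, bkLo m hm g i + bkHi m hm g i
        = max (g ⟨m, ha'⟩ i) (g ⟨m+2, hc'⟩ (i+1))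
          + (if i = 0 then g ⟨m+2, hc'⟩ 0 else min (g ⟨m, ha'⟩ (i-1)) (g ⟨m+2, hc'⟩ i)) := by
      intro i; rfl
    rw [Finset.sum_congr rfl (fun i _ => this i)]
    exact hsum0
  clear hsum0
  have wa : w ⟨m, ha⟩ + ∑ i ∈ Finset.range lam.length, g ⟨m, ha'⟩ i
      = ∑ i ∈ Finset.range lam.length, g ⟨m+1, hb'⟩ i := hwt ⟨m, ha⟩
  have wb : w ⟨m+1, hb⟩ + ∑ i ∈ Finset.range lam.length, g ⟨m+1, hb'⟩ i
      = ∑ i ∈ Finset.range lam.length, g ⟨m+2, hc'⟩ i := hwt ⟨m+1, hb⟩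
  intro k
  rcases eq_or_ne k.val m with hkm | hkm
  · have hkeq : k = ⟨m, ha⟩ := Fin.ext hkm
    rw [hkeq, Fin.castSucc_mk, Fin.succ_mk, Function.comp_apply, Equiv.swap_apply_left]
    have e1 : ∀ i, bk m hm g ⟨m, ha'⟩ i = g ⟨m, ha'⟩ i :=
      fun i => bk_apply_ne m hm g (show ¬(m = m+1) by omega) i
    rw [Finset.sum_congr rfl (fun i _ => e1 i)]
    show w ⟨m+1, hb⟩ + ∑ i ∈ Finset.range lam.length, g ⟨m, ha'⟩ i
      = ∑ i ∈ Finset.range lam.length, bk m hm g ⟨m+1, hb'⟩ i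
    omega
  · rcases eq_or_ne k.val (m+1) with hkm1 | hkm1
    · have hkeq : k = ⟨m+1, hb⟩ := Fin.ext hkm1
      rw [hkeq, Fin.castSucc_mk, Fin.succ_mk, Function.comp_apply, Equiv.swap_apply_right]
      have e1 : ∀ i, bk m hm g ⟨m+1+1, by omega⟩ i = g ⟨m+2, hc'⟩ i :=
        fun i => bk_apply_ne m hm g (show ¬(m+1+1 = m+1) by omega) i
      rw [Finset.sum_congr rfl (fun i _ => e1 i)]
      show w ⟨m, ha⟩ + ∑ i ∈ Finset.range lam.length, bk m hm g ⟨m+1, hb'⟩ i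
        = ∑ i ∈ Finset.range lam.length, g ⟨m+2, hc'⟩ i
      omega
    · have hca : (k.castSucc).val ≠ m + 1 := by
        rw [Fin.coe_castSucc]; omega
      have hsa : (k.succ).val ≠ m + 1 := by
        rw [Fin.val_succ]; omega
      have e1 : ∀ i, bk m hm g k.castSucc i = g k.castSucc i :=
        fun i => bk_apply_ne m hm g hca i
      have e2 : ∀ i, bk m hm g k.succ i = g k.succ i :=
        fun i => bk_apply_ne m hm g hsa i
      rw [Finset.sum_congr rfl (fun i _ => e1 i), Finset.sum_congr rfl (fun i _ => e2 i),
        Function.comp_apply,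
        Equiv.swap_apply_of_ne_of_ne (Fin.ne_of_val_ne hkm) (Fin.ne_of_val_ne hkm1)]
      exact hwt k

lemma gt_ncard_swap (lam mu : List ℕ) (w : Fin n → ℕ) (a b : Fin n)
    (hab : (b : ℕ) = (a : ℕ) + 1) :
    (GTset lam mu w).ncard = (GTset lam mu (w ∘ Equiv.swap a b)).ncard := by
  have hm : (a : ℕ) + 2 ≤ n := by have := b.isLt; omega
  have pb : (a : ℕ) + 1 < n := by omega
  have hae : (⟨(a : ℕ), a.isLt⟩ : Fin n) = a := rfl
  have hbe : (⟨(a : ℕ) + 1, pb⟩ : Fin n) = b := Fin.ext hab.symm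
  have hsw : Equiv.swap (⟨(a : ℕ), a.isLt⟩ : Fin n) ⟨(a : ℕ) + 1, pb⟩ = Equiv.swap a b := by
    rw [hae, hbe]
  have himg : bk (a : ℕ) hm '' GTset lam mu w = GTset lam mu (w ∘ Equiv.swap a b) := by
    apply Set.Subset.antisymm
    · rintro _ ⟨g, hg, rfl⟩
      have h2 := bk_mem (g := g) (a : ℕ) hm a.isLt pb hg
      rwa [hsw] at h2
    · intro h hh
      have h1 := bk_mem (g := h) (a : ℕ) hm a.isLt pb hh
      rw [hsw] at h1
      have hws : (w ∘ Equiv.swap a b) ∘ Equiv.swap a b = w := by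
        funext x; simp [Equiv.swap_apply_self]
      rw [hws] at h1
      exact ⟨bk (a : ℕ) hm h, h1, bk_bk (a : ℕ) hm hh.1⟩
  rw [← himg]
  rw [Set.ncard_image_of_injOn]
  intro g hg g' hg' he
  have := congrArg (bk (a : ℕ) hm) he
  rwa [bk_bk (a : ℕ) hm hg.1, bk_bk (a : ℕ) hm hg'.1] at this

end BK



lemma getD_antitone {l : List ℕ} (hl : l.Pairwise (· ≥ ·)) (i : ℕ) :
    l.getD (i+1) 0 ≤ l.getD i 0 := by
  by_cases h : i + 1 < l.length
  · have hi : i < l.length := by omega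
    rw [List.getD_eq_getElem l 0 h, List.getD_eq_getElem l 0 hi]
    exact List.pairwise_iff_get.mp hl ⟨i, hi⟩ ⟨i+1, h⟩ (by simp)
  · rw [List.getD_eq_default l 0 (by omega)]
    exact Nat.zero_le _

lemma countP_val_succ (L : List (Fin n)) (x : Fin n) :
    L.countP (fun b => decide (b.val < x.val + 1))
      = L.countP (fun b => decide (b.val < x.val)) + L.count x := by
  induction L with
  | nil => simp
  | cons a L ih =>
    rw [List.countP_cons, List.countP_cons, List.count_cons, ih]
    simp only [decide_eq_true_eq, beq_iff_eq, Fin.ext_iff]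
    split_ifs <;> omega

lemma sum_map_getD (T : List (List (Fin n))) (f : List (Fin n) → ℕ) :
    (T.map f).sum = ∑ i ∈ Finset.range T.length, f (T.getD i []) := by
  induction T with
  | nil => simp
  | cons R T ih =>
    rw [List.map_cons, List.sum_cons, ih, List.length_cons,
      Finset.sum_range_succ' (fun i => f ((R::T).getD i []))]
    simp only [List.getD_cons_succ, List.getD_cons_zero]
    omega

/-- From a skew tableau to a GT-type pattern. -/
def encode (mu : List ℕ) (T : List (List (Fin n))) : Fin (n+1) → ℕ → ℕ :=
  fun k i => mu.getD i 0 + (T.getD i []).countP (fun b => decide (b.val < k.val))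

lemma encode_mem {lam mu : List ℕ}
    (hlam : lam.Pairwise (· ≥ ·)) (hmu : mu.Pairwise (· ≥ ·))
    (hsub : ∀ i : ℕ, mu.getD i 0 ≤ lam.getD i 0)
    {w : Fin n → ℕ} {T : List (List (Fin n))}
    (hT : IsSkewSSYT n lam mu T) (hw : wtT n T = w) :
    encode mu T ∈ GTset lam mu w := by
  obtain ⟨hlen, hrlen, hsort, hcol⟩ := hT
  constructor
  · refine ⟨fun i => ?_, fun i => ?_, fun k i => ?_, fun k i => ?_⟩
    · show mu.getD i 0 + _ = mu.getD i 0
      rw [List.countP_eq_zero.mpr (fun b _ => by simp)]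
      omega
    · show mu.getD i 0 + _ = lam.getD i 0
      rw [List.countP_eq_length.mpr (fun b _ => by simpa using b.isLt)]
      rw [hrlen i]
      have := hsub i
      omega
    · show mu.getD i 0 + _ ≤ mu.getD i 0 + _
      have : (k.castSucc).val ≤ k.succ.val := by
        rw [Fin.coe_castSucc, Fin.val_succ]; omega
      exact Nat.add_le_add_left
        (List.countP_mono_left (fun b _ hb => by
          simp only [decide_eq_true_eq] at *; omega)) _
    · have key := (colStrict_iff (hsort i) (hsort (i+1)) (getD_antitone hmu i)
        (getD_antitone hlam i) (hsub i) (hsub (i+1)) (hrlen i) (hrlen (i+1))).mp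
        (fun j => hcol i j) k.val
      show mu.getD (i+1) 0 + _ ≤ mu.getD i 0 + _
      rw [Fin.val_succ, Fin.coe_castSucc]
      exact key
  · intro k
    have hwk : w k = ∑ i ∈ Finset.range lam.length, (T.getD i []).count k := by
      rw [← hw]
      show (T.flatten).count k = _
      rw [List.count_flatten, sum_map_getD, hlen]
    have hpt : ∀ i, (T.getD i []).count k + encode mu T k.castSucc i
        = encode mu T k.succ i := by
      intro i
      show _ + (mu.getD i 0 + _) = mu.getD i 0 + _
      have := countP_val_succ (T.getD i []) k
      rw [Fin.val_succ, Fin.coe_castSucc]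
      omega
    rw [hwk, ← Finset.sum_congr rfl (fun i _ => hpt i), Finset.sum_add_distrib]

lemma encode_injOn {lam mu : List ℕ} {T T' : List (List (Fin n))}
    (hT : IsSkewSSYT n lam mu T) (hT' : IsSkewSSYT n lam mu T')
    (he : encode mu T = encode mu T') : T = T' := by
  have hrow : ∀ i, T.getD i [] = T'.getD i [] := by
    intro i
    refine List.Perm.eq_of_pairwise' (hT.2.2.1 i) (hT'.2.2.1 i)
      (List.perm_iff_count.mpr fun x => ?_)
    have h1 := congrFun (congrFun he ⟨x.val + 1, by omega⟩) i
    have h0 := congrFun (congrFun he ⟨x.val, by omega⟩) i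
    simp only [encode] at h1 h0
    have c1 := countP_val_succ (T.getD i []) x
    have c2 := countP_val_succ (T'.getD i []) x
    omega
  have hlen : T.length = T'.length := by rw [hT.1, hT'.1]
  refine List.ext_getElem hlen (fun i h1 h2 => ?_)
  have := hrow i
  rwa [List.getD_eq_getElem _ _ h1, List.getD_eq_getElem _ _ h2] at this

lemma encode_surjOn {lam mu : List ℕ}
    (hlam : lam.Pairwise (· ≥ ·)) (hmu : mu.Pairwise (· ≥ ·))
    (hsub : ∀ i : ℕ, mu.getD i 0 ≤ lam.getD i 0)
    {w : Fin n → ℕ} {g : Fin (n+1) → ℕ → ℕ} (hg : g ∈ GTset lam mu w) :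
    ∃ T : List (List (Fin n)),
      (IsSkewSSYT n lam mu T ∧ wtT n T = w) ∧ encode mu T = g := by
  obtain ⟨hGT, hwt⟩ := hg
  set N := lam.length with hN
  set c : ℕ → Fin n → ℕ := fun i j => g j.succ i - g j.castSucc i with hc
  refine ⟨(List.range N).map (fun i => ofCounts (c i)), ?_⟩
  set T : List (List (Fin n)) := (List.range N).map (fun i => ofCounts (c i)) with hT
  have hTlen : T.length = N := by rw [hT]; simp
  have hrow : ∀ i, i < N → T.getD i [] = ofCounts (c i) := by
    intro i hi
    rw [List.getD_eq_getElem?_getD, hT, List.getElem?_map, List.getElem?_range hi]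
    simp
  have hrow' : ∀ i, N ≤ i → T.getD i [] = [] := by
    intro i hi
    exact List.getD_eq_default _ _ (by omega)
  have hmuz : ∀ i, N ≤ i → mu.getD i 0 = 0 := by
    intro i hi
    have h1 : lam.getD i 0 = 0 := List.getD_eq_default _ _ (by omega)
    have := hsub i
    omega
  -- telescoping sums of counts
  have tele : ∀ (i t : ℕ) (ht : t ≤ n),
      mu.getD i 0 + ∑ j : Fin n, (if j.val < t then c i j else 0) = g ⟨t, by omega⟩ i := by
    intro i t
    induction t with
    | zero =>
      intro ht
      simpa using (hGT.1 i).symm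
    | succ t ih =>
      intro ht
      have htn : t < n := by omega
      have split : ∀ j : Fin n, (if j.val < t + 1 then c i j else 0)
          = (if j.val < t then c i j else 0) + (if j = ⟨t, htn⟩ then c i j else 0) := by
        intro j
        simp only [Fin.ext_iff]
        split_ifs <;> simp_all <;> omega
      rw [Finset.sum_congr rfl (fun j _ => split j), Finset.sum_add_distrib,
        Finset.sum_ite_eq' Finset.univ (⟨t, htn⟩ : Fin n) (c i)]
      simp only [Finset.mem_univ, if_pos]
      have hih := ih (by omega)
      have hcc : c i ⟨t, htn⟩ = g ⟨t+1, by omega⟩ i - g ⟨t, by omega⟩ i := by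
        show g (Fin.succ ⟨t, htn⟩) i - g (Fin.castSucc ⟨t, htn⟩) i = _
        rw [Fin.succ_mk, Fin.castSucc_mk]
      have hmono := hGT.mono' t htn i
      omega
  -- the key pointwise identity : encode T = g
  have hA : ∀ (k : Fin (n+1)) (i : ℕ),
      mu.getD i 0 + (T.getD i []).countP (fun b => decide (b.val < k.val)) = g k i := by
    intro k i
    by_cases hi : i < N
    · rw [hrow i hi, countP_eq_sum_count]
      have heq : ∀ j : Fin n, (if (fun b => decide (b.val < k.val)) j
            then (ofCounts (c i)).count j else 0)
          = (if j.val < k.val then c i j else 0) := by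
        intro j
        rw [count_ofCounts]
        simp
      rw [Finset.sum_congr rfl (fun j _ => heq j)]
      have := tele i k.val (by omega)
      have hk : (⟨k.val, by omega⟩ : Fin (n+1)) = k := rfl
      rwa [hk] at this
    · rw [hrow' i (by omega)]
      have h3 : g k i = 0 := hGT.vanish k (by omega)
      have := hmuz i (by omega)
      simp only [List.countP_nil]
      omega
  have hrowlen : ∀ i : ℕ, (T.getD i []).length = lam.getD i 0 - mu.getD i 0 := by
    intro i
    by_cases hi : i < N
    · rw [hrow i hi, length_ofCounts]
      have h1 := tele i n le_rfl
      have h2 : (∑ j : Fin n, if j.val < n then c i j else 0) = ∑ j : Fin n, c i j :=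
        Finset.sum_congr rfl (fun j _ => if_pos j.isLt)
      have h3 : (⟨n, by omega⟩ : Fin (n+1)) = Fin.last n := rfl
      rw [h2, h3] at h1
      rw [hGT.2.1 i] at h1
      omega
    · rw [hrow' i (by omega)]
      have h1 : lam.getD i 0 = 0 := List.getD_eq_default _ _ (by omega)
      have := hsub i
      simp only [List.length_nil]
      omega
  have hsort : ∀ i : ℕ, (T.getD i []).Pairwise (· ≤ ·) := by
    intro i
    by_cases hi : i < N
    · rw [hrow i hi]; exact ofCounts_sorted (c i)
    · rw [hrow' i (by omega)]; exact List.Pairwise.nil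
  refine ⟨⟨⟨hTlen, hrowlen, hsort, ?_⟩, ?_⟩, ?_⟩
  · -- column strictness
    intro i
    refine (colStrict_iff (hsort i) (hsort (i+1)) (getD_antitone hmu i)
      (getD_antitone hlam i) (hsub i) (hsub (i+1)) (hrowlen i) (hrowlen (i+1))).mpr ?_
    intro k
    by_cases hk : k < n
    · have h1 := hA ⟨k+1, by omega⟩ (i+1)
      have h2 := hA ⟨k, by omega⟩ i
      have h3 := hGT.strip' k hk i
      simp only at h1 h2
      omega
    · -- k ≥ n : both counts are full lengths
      have e1 : (T.getD (i+1) []).countP (fun b => decide (b.val < k + 1))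
          = (T.getD (i+1) []).length :=
        List.countP_eq_length.mpr (fun b _ => decide_eq_true (by have := b.isLt; omega))
      have e2 : (T.getD i []).countP (fun b => decide (b.val < k))
          = (T.getD i []).length :=
        List.countP_eq_length.mpr (fun b _ => decide_eq_true (by have := b.isLt; omega))
      rw [e1, e2, hrowlen i, hrowlen (i+1)]
      have l1 := getD_antitone hlam i
      have l2 := getD_antitone hmu i
      have := hsub i
      have := hsub (i+1)
      omega
  · -- weight
    funext k
    show (T.flatten).count k = w k
    rw [List.count_flatten, sum_map_getD, hTlen]
    have hptc : ∀ i ∈ Finset.range N, (T.getD i []).count k = c i k := by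
      intro i hi
      rw [hrow i (Finset.mem_range.mp hi), count_ofCounts]
    rw [Finset.sum_congr rfl hptc]
    have hwk := hwt k
    have hpt : ∀ i ∈ Finset.range N, c i k + g k.castSucc i = g k.succ i := by
      intro i _
      have hmono := hGT.2.2.1 k i
      show g k.succ i - g k.castSucc i + g k.castSucc i = g k.succ i
      omega
    have hsum : ∑ i ∈ Finset.range N, c i k + ∑ i ∈ Finset.range N, g k.castSucc i
        = ∑ i ∈ Finset.range N, g k.succ i := by
      rw [← Finset.sum_add_distrib]
      exact Finset.sum_congr rfl hpt
    omega
  · -- encode T = g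
    funext k i
    exact hA k i

lemma swap_decomp {x y z : Fin n} (hxz : x ≠ z) (hzy : z ≠ y) (hxy : x ≠ y) :
    Equiv.swap x y = Equiv.swap x z * Equiv.swap z y * Equiv.swap x z := by
  ext t
  simp only [Equiv.Perm.mul_apply]
  by_cases h1 : t = x
  · subst h1
    rw [Equiv.swap_apply_left, Equiv.swap_apply_left, Equiv.swap_apply_left,
      Equiv.swap_apply_of_ne_of_ne hxy.symm hzy.symm]
  · by_cases h2 : t = y
    · subst h2
      rw [Equiv.swap_apply_right, Equiv.swap_apply_of_ne_of_ne (Ne.symm hxy) hzy.symm,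
        Equiv.swap_apply_right, Equiv.swap_apply_right]
    · by_cases h3 : t = z
      · subst h3
        rw [Equiv.swap_apply_right, Equiv.swap_apply_of_ne_of_ne hxz hxy,
          Equiv.swap_apply_left, Equiv.swap_apply_of_ne_of_ne hxz.symm hzy]
      · rw [Equiv.swap_apply_of_ne_of_ne h1 h2, Equiv.swap_apply_of_ne_of_ne h1 h3,
          Equiv.swap_apply_of_ne_of_ne h3 h2, Equiv.swap_apply_of_ne_of_ne h1 h3]

lemma gt_ncard_perm (lam mu : List ℕ) (σ : Equiv.Perm (Fin n)) (w : Fin n → ℕ) :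
    (GTset lam mu w).ncard = (GTset lam mu (w ∘ σ)).ncard := by
  have hmul : ∀ (σ τ : Equiv.Perm (Fin n)),
      (∀ v : Fin n → ℕ, (GTset lam mu v).ncard = (GTset lam mu (v ∘ σ)).ncard) →
      (∀ v : Fin n → ℕ, (GTset lam mu v).ncard = (GTset lam mu (v ∘ τ)).ncard) →
      ∀ v : Fin n → ℕ, (GTset lam mu v).ncard = (GTset lam mu (v ∘ (σ * τ))).ncard := by
    intro σ τ hσ hτ v
    have he : v ∘ ⇑(σ * τ) = (v ∘ ⇑σ) ∘ ⇑τ := by funext x; rfl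
    rw [he, ← hτ (v ∘ ⇑σ), ← hσ v]
  have hswap : ∀ (d : ℕ) (x y : Fin n), (y : ℕ) = (x : ℕ) + d + 1 →
      ∀ v : Fin n → ℕ, (GTset lam mu v).ncard = (GTset lam mu (v ∘ Equiv.swap x y)).ncard := by
    intro d
    induction d with
    | zero => intro x y h v; exact gt_ncard_swap lam mu v x y (by omega)
    | succ d ih =>
      intro x y h v
      have hz : (x : ℕ) + 1 < n := by have := y.isLt; omega
      set z : Fin n := ⟨(x : ℕ) + 1, hz⟩ with hzdef
      have hxz : x ≠ z := by
        intro hh; apply_fun Fin.val at hh; simp [hzdef] at hh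
      have hzy : z ≠ y := by
        intro hh; apply_fun Fin.val at hh; simp [hzdef] at hh; omega
      have hxy : x ≠ y := by
        intro hh; apply_fun Fin.val at hh; omega
      rw [swap_decomp hxz hzy hxy]
      exact hmul _ _ (hmul _ _ (fun v => gt_ncard_swap lam mu v x z rfl)
        (fun v => ih z y (by simp [hzdef]; omega) v)) (fun v => gt_ncard_swap lam mu v x z rfl) v
  have hswap' : ∀ (x y : Fin n), x ≠ y →
      ∀ v : Fin n → ℕ, (GTset lam mu v).ncard = (GTset lam mu (v ∘ Equiv.swap x y)).ncard := by
    intro x y hxy v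
    rcases Nat.lt_trichotomy (x : ℕ) (y : ℕ) with h | h | h
    · exact hswap ((y : ℕ) - (x : ℕ) - 1) x y (by omega) v
    · exact absurd (Fin.ext h) hxy
    · rw [Equiv.swap_comm]
      exact hswap ((x : ℕ) - (y : ℕ) - 1) y x (by omega) v
  have main : ∀ σ : Equiv.Perm (Fin n), ∀ v : Fin n → ℕ,
      (GTset lam mu v).ncard = (GTset lam mu (v ∘ σ)).ncard := by
    intro σ
    refine Equiv.Perm.swap_induction_on σ ?_ ?_
    · intro v
      have : v ∘ ⇑(1 : Equiv.Perm (Fin n)) = v := by funext x; rfl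
      rw [this]
    · intro f x y hxy ihf
      exact hmul _ _ (hswap' x y hxy) ihf
  exact main σ w

lemma ssyt_ncard_eq_gt (lam mu : List ℕ)
    (hlam : lam.Pairwise (· ≥ ·)) (hmu : mu.Pairwise (· ≥ ·))
    (hsub : ∀ i : ℕ, mu.getD i 0 ≤ lam.getD i 0) (w : Fin n → ℕ) :
    {T : List (List (Fin n)) | IsSkewSSYT n lam mu T ∧ wtT n T = w}.ncard
      = (GTset lam mu w).ncard := by
  have himg : encode mu '' {T : List (List (Fin n)) | IsSkewSSYT n lam mu T ∧ wtT n T = w}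
      = GTset lam mu w := by
    apply Set.Subset.antisymm
    · rintro _ ⟨T, ⟨h1, h2⟩, rfl⟩
      exact encode_mem hlam hmu hsub h1 h2
    · intro g hg
      obtain ⟨T, hT, he⟩ := encode_surjOn hlam hmu hsub hg
      exact ⟨T, hT, he⟩
  rw [← himg, Set.ncard_image_of_injOn]
  intro T hT T' hT' he
  exact encode_injOn hT.1 hT'.1 he

end Aux

theorem skew_kostka_symmetric (lam mu : List ℕ)
    (hlam : lam.Pairwise (· ≥ ·)) (hmu : mu.Pairwise (· ≥ ·))
    (hsub : ∀ i : ℕ, mu.getD i 0 ≤ lam.getD i 0)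
    (w : Fin n → ℕ) (σ : Equiv.Perm (Fin n)) :
    {T : List (List (Fin n)) | IsSkewSSYT n lam mu T ∧ wtT n T = w}.ncard =
    {T : List (List (Fin n)) | IsSkewSSYT n lam mu T ∧ wtT n T = w ∘ σ}.ncard := by
  rw [ssyt_ncard_eq_gt lam mu hlam hmu hsub w,
    ssyt_ncard_eq_gt lam mu hlam hmu hsub (w ∘ σ)]
  exact gt_ncard_perm lam mu σ w

end KP
end

section
/- The map σ : SST_{[n]}(λ) → SST_{[n]}(λ + (1^n)), which replaces the −1st column of a rational semistandard tableau having entries −b_1,…,−b_t by a new first column with entries [n]∖{b_1,…,b_t}, is a well-defined weight-shifting bijection, i.e. it is a bijection and wt(σ(T)) = wt(T) + (ε_1 + ⋯ + ε_n) for all T. -/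
/-!
STATEMENT 3: The map `σ : SST_{[n]}(λ) → SST_{[n]}(λ + (1ⁿ))`, replacing the `−1`-st
column `{−b₁, …, −b_t}` of a rational semistandard tableau by a new first column
`[n] ∖ {b₁,…,b_t}`, is a weight-shifting bijection.

A rational semistandard tableau of rank `n` is encoded as a pair
`(negCols, posCols)`: `negCols = [C₋₁, C₋₂, …]` lists the columns of negative index,
each recorded by the strictly increasing list of `b`'s such that `−b` is an entry, and
`posCols = [C₁, C₂, …]` lists the columns of positive index.
-/

namespace KP

variable (n : ℕ)

/-- A rational tableau: (columns of negative index, columns of positive index). -/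
abbrev RatTab := List (List (Fin n)) × List (List (Fin n))

def IsColStrict (c : List (Fin n)) : Prop := c.Chain' (· < ·)

/-- Adjacent positive columns (left `c`, right `c'`): rows weakly increase. -/
def PosAdj (c c' : List (Fin n)) : Prop :=
  c'.length ≤ c.length ∧ ∀ i : ℕ, ∀ x ∈ (c)[i]?, ∀ y ∈ c'[i]?, x ≤ y

/-- Adjacent negative columns: column `−j` (stored list `v`) and `−(j+1)` (stored `u`);
the stored `b`-values weakly increase when moving to the left. -/
def NegAdj (v u : List (Fin n)) : Prop :=
  u.length ≤ v.length ∧ ∀ i : ℕ, ∀ x ∈ v[i]?, ∀ y ∈ u[i]?, x ≤ y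

/-- The complement `[n] ∖ q` as a strictly increasing list. -/
def compl (q : List (Fin n)) : List (Fin n) :=
  (List.finRange n).filter (fun i => i ∉ q)

/-- The matching condition between the `−1`-st and `1`-st columns. -/
def Matching (T : RatTab n) : Prop :=
  (T.2.headD []).length + (T.1.headD []).length ≤ n ∧
  ∀ i : ℕ, ∀ x ∈ (compl n (T.1.headD []))[i]?, ∀ y ∈ (T.2.headD [])[i]?, x ≤ y

/-- A rational semistandard tableau of rank `n`. -/
def IsRat (T : RatTab n) : Prop :=
  (∀ c ∈ T.1, IsColStrict n c ∧ c ≠ []) ∧ (∀ c ∈ T.2, IsColStrict n c ∧ c ≠ []) ∧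
  T.1.Chain' (NegAdj n) ∧ T.2.Chain' (PosAdj n) ∧ Matching n T

/-- `T` has shape `λ ∈ ℤ₊ⁿ`: the `j`-th positive column has `#{i | λ_i ≥ j}` boxes and
the `j`-th negative column has `#{i | λ_i ≤ −j}` boxes. -/
def HasShape (T : RatTab n) (lam : Fin n → ℤ) : Prop :=
  (∀ j : ℕ, (T.2.getD j []).length
      = (Finset.univ.filter (fun i : Fin n => ((j : ℤ) + 1) ≤ lam i)).card) ∧
  (∀ j : ℕ, (T.1.getD j []).length
      = (Finset.univ.filter (fun i : Fin n => lam i ≤ -((j : ℤ) + 1))).card)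

/-- The weight of a rational tableau: `wt(T) = Σ (m_i⁺ − m_i⁻) ε_i`. -/
def wtRat (T : RatTab n) : Fin n → ℤ :=
  fun i => (T.2.flatten.count i : ℤ) - (T.1.flatten.count i : ℤ)

/-- The map `σ`: the `−1`-st column is replaced by the complementary first column. -/
def sigmaMap (T : RatTab n) : RatTab n :=
  (T.1.tail,
    if (compl n (T.1.headD [])).isEmpty then T.2 else compl n (T.1.headD []) :: T.2)


def invMap (S : RatTab n) : RatTab n :=
  (if (compl n (S.2.headD [])).isEmpty then S.1 else compl n (S.2.headD []) :: S.1,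
   S.2.tail)


section Helpers
variable {n}

lemma mem_compl {q : List (Fin n)} {x : Fin n} : x ∈ compl n q ↔ x ∉ q := by
  simp [compl]

lemma strict_pairwise {c : List (Fin n)} (h : IsColStrict n c) : c.Pairwise (· < ·) :=
  List.isChain_iff_pairwise.mp h

lemma strict_nodup {c : List (Fin n)} (h : IsColStrict n c) : c.Nodup :=
  (strict_pairwise h).imp ne_of_lt

lemma strict_length_le {c : List (Fin n)} (h : IsColStrict n c) : c.length ≤ n := by
  simpa using (strict_nodup h).length_le_card

lemma strict_getElem_lt {l : List (Fin n)} (h : IsColStrict n l) {i j : ℕ}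
    (hi : i < l.length) (hj : j < l.length) (hij : i < j) : l[i] < l[j] :=
  List.pairwise_iff_getElem.mp (strict_pairwise h) i j hi hj hij

lemma nil_strict : IsColStrict n ([] : List (Fin n)) := List.isChain_nil

lemma filter_strict (p : Fin n → Bool) {c : List (Fin n)} (h : IsColStrict n c) :
    IsColStrict n (c.filter p) :=
  List.isChain_iff_pairwise.mpr ((strict_pairwise h).sublist List.filter_sublist)

lemma finRange_strict : IsColStrict n (List.finRange n) :=
  List.isChain_iff_pairwise.mpr (List.pairwise_lt_finRange n)

lemma compl_strict (q : List (Fin n)) : IsColStrict n (compl n q) :=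
  filter_strict _ finRange_strict

lemma strict_ext {a b : List (Fin n)} (ha : IsColStrict n a) (hb : IsColStrict n b)
    (h : ∀ x, x ∈ a ↔ x ∈ b) : a = b :=
  List.Perm.eq_of_pairwise (fun _ _ _ _ h1 h2 => absurd (h1.trans h2) (lt_irrefl _))
    (strict_pairwise ha) (strict_pairwise hb)
    ((List.perm_ext_iff_of_nodup (strict_nodup ha) (strict_nodup hb)).mpr h)

lemma filter_mem_eq {q : List (Fin n)} (hq : IsColStrict n q) :
    (List.finRange n).filter (fun i => i ∈ q) = q :=
  strict_ext (filter_strict _ finRange_strict) hq (by simp)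

lemma length_add_compl {q : List (Fin n)} (hq : IsColStrict n q) :
    q.length + (compl n q).length = n := by
  have h := List.length_eq_length_filter_add (l := List.finRange n)
      (fun i : Fin n => decide (i ∈ q))
  rw [List.length_finRange] at h
  have h1 : (List.filter (fun i => decide (i ∈ q)) (List.finRange n)).length = q.length :=
    congrArg List.length (filter_mem_eq hq)
  have h2 : (List.filter (fun x => !decide (x ∈ q)) (List.finRange n)).length
      = (compl n q).length :=
    congrArg List.length
      (List.filter_congr (fun a _ => by simp [decide_not]) : _ = compl n q)
  omega

lemma compl_compl {q : List (Fin n)} (hq : IsColStrict n q) : compl n (compl n q) = q :=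
  strict_ext (compl_strict _) hq (by intro x; simp [mem_compl])

lemma compl_nil : compl n ([] : List (Fin n)) = List.finRange n :=
  List.filter_eq_self.mpr (by simp)

lemma compl_finRange : compl n (List.finRange n) = [] :=
  List.filter_eq_nil_iff.mpr (by simp)

lemma eq_finRange_of_length {c : List (Fin n)} (hc : IsColStrict n c) (h : c.length = n) :
    c = List.finRange n := by
  calc c = (List.finRange n).filter (fun i => i ∈ c) := (filter_mem_eq hc).symm
    _ = List.finRange n := List.filter_eq_self.mpr
        (List.length_filter_eq_length_iff.mp (by rw [filter_mem_eq hc, h, List.length_finRange]))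

end Helpers

section Helpers2
variable {n : ℕ}

lemma adj_iff {a b : List (Fin n)} :
    NegAdj n a b ↔ b.length ≤ a.length ∧
      ∀ i : ℕ, (h1 : i < a.length) → (h2 : i < b.length) → a[i] ≤ b[i] := by
  unfold NegAdj
  refine and_congr_right fun _ => ?_
  constructor
  · intro h i h1 h2
    exact h i _ (by simp [List.getElem?_eq_getElem h1]) _ (by simp [List.getElem?_eq_getElem h2])
  · intro h i x hx y hy
    rw [Option.mem_def, List.getElem?_eq_some_iff] at hx hy
    obtain ⟨h1, rfl⟩ := hx; obtain ⟨h2, rfl⟩ := hy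
    simpa using h i h1 h2

lemma posAdj_iff_negAdj {a b : List (Fin n)} : PosAdj n a b ↔ NegAdj n a b := Iff.rfl

lemma adj_nil (a : List (Fin n)) : NegAdj n a [] :=
  adj_iff.mpr ⟨by simp, fun i _ h2 => by simp at h2⟩

lemma matching_iff {T : RatTab n} (hq : IsColStrict n (T.1.headD [])) :
    Matching n T ↔ NegAdj n (compl n (T.1.headD [])) (T.2.headD []) := by
  have hl := length_add_compl hq
  unfold Matching NegAdj
  exact and_congr_left fun _ => by omega

/-- number of entries of `l` that are `≤ m` -/
def fc (l : List (Fin n)) (m : Fin n) : ℕ := (l.filter (fun x => x ≤ m)).length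

lemma fc_le_length (l : List (Fin n)) (m : Fin n) : fc l m ≤ l.length :=
  List.length_filter_le _ _

lemma le_fc_of_getElem_le {l : List (Fin n)} (hc : IsColStrict n l) {i : ℕ}
    (hi : i < l.length) {m : Fin n} (h : l[i] ≤ m) : i + 1 ≤ fc l m := by
  have hsub : (l.take (i+1)).filter (fun x => x ≤ m) = l.take (i+1) := by
    rw [List.filter_eq_self]
    intro a ha
    rw [List.mem_take_iff_getElem] at ha
    obtain ⟨j, hj, rfl⟩ := ha
    simp only [decide_eq_true_eq]
    have hjl : j < l.length := lt_of_lt_of_le hj (min_le_right _ _)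
    have hji : j ≤ i := by have := lt_of_lt_of_le hj (min_le_left _ _); omega
    rcases Nat.lt_or_ge j i with hlt | hge
    · exact le_trans (le_of_lt (strict_getElem_lt hc hjl hi hlt)) h
    · have : j = i := le_antisymm hji hge
      subst this; exact h
  have hle : ((l.take (i+1)).filter (fun x => x ≤ m)).length ≤ fc l m :=
    List.Sublist.length_le (List.Sublist.filter _ (List.take_sublist (i+1) l))
  rw [hsub, List.length_take] at hle
  omega

lemma getElem_le_of_le_fc {l : List (Fin n)} (hc : IsColStrict n l) {i : ℕ}
    (hi : i < l.length) {m : Fin n} (h : i + 1 ≤ fc l m) : l[i] ≤ m := by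
  by_contra hlt
  push_neg at hlt
  have hdrop : (l.drop i).filter (fun x => x ≤ m) = [] := by
    rw [List.filter_eq_nil_iff]
    intro a ha
    rw [List.mem_drop_iff_getElem] at ha
    obtain ⟨j, hj, rfl⟩ := ha
    simp only [decide_eq_true_eq, not_le]
    rcases Nat.eq_zero_or_pos j with rfl | hjpos
    · simpa using hlt
    · exact lt_trans hlt (strict_getElem_lt hc (i := i) (j := i + j) (by omega)
        (by omega) (by omega))
  have hsplit : fc l m
      = ((l.take i).filter (fun x => x ≤ m)).length
        + ((l.drop i).filter (fun x => x ≤ m)).length := by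
    rw [fc, ← List.length_append, ← List.filter_append, List.take_append_drop]
  rw [hdrop] at hsplit
  have htake : ((l.take i).filter (fun x => x ≤ m)).length ≤ i :=
    le_trans (List.length_filter_le _ _) (by simp [List.length_take])
  simp at hsplit
  omega

lemma fc_le_of_adj {a b : List (Fin n)} (ha : IsColStrict n a) (hb : IsColStrict n b)
    (h : NegAdj n a b) (m : Fin n) : fc b m ≤ fc a m := by
  rcases Nat.eq_zero_or_pos (fc b m) with h0 | hpos
  · omega
  have hkb : fc b m ≤ b.length := fc_le_length b m
  have h1 : fc b m - 1 < b.length := by omega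
  have hb1 : b[fc b m - 1] ≤ m := getElem_le_of_le_fc hb h1 (by omega)
  have h2 : fc b m - 1 < a.length := lt_of_lt_of_le h1 (adj_iff.mp h).1
  have ha1 : a[fc b m - 1] ≤ b[fc b m - 1] := (adj_iff.mp h).2 _ h2 h1
  have := le_fc_of_getElem_le ha h2 (le_trans ha1 hb1)
  omega

lemma filter_comm' (p r : Fin n → Bool) (l : List (Fin n)) :
    (l.filter p).filter r = (l.filter r).filter p := by
  rw [List.filter_filter, List.filter_filter]
  exact List.filter_congr fun a _ => Bool.and_comm _ _

lemma fc_finRange (m : Fin n) : fc (List.finRange n) m = m.val + 1 := by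
  classical
  have hnd : ((List.finRange n).filter (fun x => x ≤ m)).Nodup :=
    (List.nodup_finRange n).filter _
  rw [fc, ← List.toFinset_card_of_nodup hnd]
  have : ((List.finRange n).filter (fun x => x ≤ m)).toFinset = Finset.Iic m := by
    ext x; simp [List.mem_filter]
  rw [this, Fin.card_Iic]

lemma fc_compl_add {q : List (Fin n)} (hq : IsColStrict n q) (m : Fin n) :
    fc (compl n q) m + fc q m = m.val + 1 := by
  have hsplit := List.length_eq_length_filter_add
      (l := (List.finRange n).filter (fun x => x ≤ m)) (fun i : Fin n => decide (i ∈ q))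
  have e1 : (((List.finRange n).filter (fun x => x ≤ m)).filter
      (fun i : Fin n => decide (i ∈ q))).length = fc q m := by
    rw [filter_comm', filter_mem_eq hq]; rfl
  have e2 : (((List.finRange n).filter (fun x => x ≤ m)).filter
      (fun i : Fin n => !decide (i ∈ q))).length = fc (compl n q) m := by
    rw [show (fun i : Fin n => !decide (i ∈ q)) = (fun i : Fin n => decide (i ∉ q)) from
      funext fun a => by simp [decide_not]]
    rw [filter_comm']; rfl
  rw [show (List.filter (fun x => decide (x ≤ m)) (List.finRange n)).length = m.val + 1
    from fc_finRange m] at hsplit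
  omega

lemma compl_adj {a b : List (Fin n)} (ha : IsColStrict n a) (hb : IsColStrict n b)
    (h : NegAdj n a b) : NegAdj n (compl n b) (compl n a) := by
  have hla := length_add_compl ha
  have hlb := length_add_compl hb
  have hlen : b.length ≤ a.length := (adj_iff.mp h).1
  rw [adj_iff]
  refine ⟨by omega, fun i h1 h2 => ?_⟩
  set m := (compl n a)[i] with hm
  have s1 : i + 1 ≤ fc (compl n a) m := le_fc_of_getElem_le (compl_strict a) h2 le_rfl
  have s2 : fc b m ≤ fc a m := fc_le_of_adj ha hb h m
  have s3 := fc_compl_add ha m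
  have s4 := fc_compl_add hb m
  have s5 : i + 1 ≤ fc (compl n b) m := by omega
  exact getElem_le_of_le_fc (compl_strict b) h1 s5

lemma count_add_count_compl {q : List (Fin n)} (hq : IsColStrict n q) (i : Fin n) :
    q.count i + (compl n q).count i = 1 := by
  by_cases h : i ∈ q
  · rw [List.count_eq_one_of_mem (strict_nodup hq) h,
      List.count_eq_zero_of_not_mem (by simp [mem_compl, h])]
  · rw [List.count_eq_zero_of_not_mem h,
      List.count_eq_one_of_mem (strict_nodup (compl_strict q)) (mem_compl.mpr h)]

end Helpers2


section Helpers3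
variable {n : ℕ}

lemma headD_strict {L : List (List (Fin n))} (h : ∀ c ∈ L, IsColStrict n c ∧ c ≠ []) :
    IsColStrict n (L.headD []) := by
  cases L with
  | nil => exact nil_strict
  | cons a l => exact (h a (List.mem_cons_self)).1

lemma getD_zero (L : List (List (Fin n))) : L.getD 0 [] = L.headD [] := by
  cases L <;> rfl

lemma tail_getD (L : List (List (Fin n))) (j : ℕ) : L.tail.getD j [] = L.getD (j+1) [] := by
  cases L <;> simp

lemma head_adj {L : List (List (Fin n))} (h : L.Chain' (NegAdj n)) :
    NegAdj n (L.headD []) (L.tail.headD []) := by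
  match L with
  | [] => exact adj_nil _
  | [a] => exact adj_nil _
  | a :: b :: l => exact (List.isChain_cons_cons.mp h).1

lemma head_adj_pos {L : List (List (Fin n))} (h : L.Chain' (PosAdj n)) :
    NegAdj n (L.headD []) (L.tail.headD []) := by
  match L with
  | [] => exact adj_nil _
  | [a] => exact adj_nil _
  | a :: b :: l => exact posAdj_iff_negAdj.mp (List.isChain_cons_cons.mp h).1

lemma eq_nil_of_getD_len {L : List (List (Fin n))} (hne : ∀ c ∈ L, c ≠ [])
    (h : (L.getD 0 []).length = 0) : L = [] := by
  cases L with
  | nil => rfl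
  | cons a l =>
    exact absurd (List.eq_nil_of_length_eq_zero (by simpa using h))
      (hne a (List.mem_cons_self))

lemma eq_nil_of_headD_nil {L : List (List (Fin n))} (hne : ∀ c ∈ L, c ≠ [])
    (h : L.headD [] = []) : L = [] := by
  cases L with
  | nil => rfl
  | cons a l => exact absurd h (hne a (List.mem_cons_self))

lemma cons_headD_tail {L : List (List (Fin n))} (h : L ≠ []) : L.headD [] :: L.tail = L := by
  cases L with
  | nil => exact absurd rfl h
  | cons a l => rfl

lemma col_list_nil {L : List (List (Fin n))} (hn : n = 0)
    (h : ∀ c ∈ L, IsColStrict n c ∧ c ≠ []) : L = [] := by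
  cases L with
  | nil => rfl
  | cons a l =>
    have hne := (h a (List.mem_cons_self)).2
    cases a with
    | nil => exact absurd rfl hne
    | cons x xs => subst hn; exact x.elim0

lemma card_congr_pred {p q : Fin n → Prop} [DecidablePred p] [DecidablePred q]
    (h : ∀ i, p i ↔ q i) :
    (Finset.univ.filter p).card = (Finset.univ.filter q).card := by
  congr 1
  exact Finset.filter_congr fun i _ => h i

lemma card_compl_split (mu : Fin n → ℤ) :
    (Finset.univ.filter (fun i : Fin n => mu i ≤ -1)).card
      + (Finset.univ.filter (fun i : Fin n => 0 ≤ mu i)).card = n := by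
  classical
  have h := Finset.card_filter_add_card_filter_not
      (s := (Finset.univ : Finset (Fin n))) (p := fun i => mu i ≤ -1)
  rw [Finset.card_univ, Fintype.card_fin] at h
  have h2 : (Finset.univ.filter (fun i : Fin n => 0 ≤ mu i)).card
      = (Finset.univ.filter (fun i : Fin n => ¬ (mu i ≤ -1))).card :=
    card_congr_pred (fun i => by omega)
  omega

lemma forall_of_card_filter {p : Fin n → Prop} [DecidablePred p]
    (h : (Finset.univ.filter p).card = n) : ∀ i, p i := by
  intro i
  have huniv : (Finset.univ.filter p) = Finset.univ :=
    Finset.eq_univ_of_card _ (by rw [h, Fintype.card_fin])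
  have hi : i ∈ Finset.univ.filter p := huniv.symm ▸ Finset.mem_univ i
  exact (Finset.mem_filter.mp hi).2

lemma card_filter_eq_zero {p : Fin n → Prop} [DecidablePred p] (h : ∀ i, ¬ p i) :
    (Finset.univ.filter p).card = 0 := by
  rw [Finset.card_eq_zero, Finset.filter_eq_empty_iff]
  exact fun i _ => h i

lemma flatten_count_head (L : List (List (Fin n))) (i : Fin n) :
    L.flatten.count i = (L.headD []).count i + L.tail.flatten.count i := by
  cases L with
  | nil => simp
  | cons a l => simp [List.count_append]

end Helpers3

section Main
variable {n : ℕ}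

lemma weight_shift' {T : RatTab n} (hT : IsRat n T) (i : Fin n) :
    wtRat n (sigmaMap n T) i = wtRat n T i + 1 := by
  obtain ⟨T1, T2⟩ := T
  have hneg : ∀ c ∈ T1, IsColStrict n c ∧ c ≠ [] := hT.1
  have hq : IsColStrict n (T1.headD []) := headD_strict hneg
  have hcount := count_add_count_compl hq i
  have hkey := flatten_count_head T1 i
  by_cases hemp : (compl n (T1.headD [])).isEmpty
  · have hce : compl n (T1.headD []) = [] := List.isEmpty_iff.mp hemp
    rw [hce] at hcount
    simp only [List.count_nil] at hcount
    have hs : sigmaMap n (T1, T2) = (T1.tail, T2) := by unfold sigmaMap; rw [if_pos hemp]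
    rw [hs]
    show (T2.flatten.count i : ℤ) - (T1.tail.flatten.count i : ℤ)
        = (T2.flatten.count i : ℤ) - (T1.flatten.count i : ℤ) + 1
    omega
  · have hs : sigmaMap n (T1, T2) = (T1.tail, compl n (T1.headD []) :: T2) := by
      unfold sigmaMap; rw [if_neg hemp]
    rw [hs]
    show (((compl n (T1.headD []) :: T2).flatten).count i : ℤ)
        - (T1.tail.flatten.count i : ℤ)
        = (T2.flatten.count i : ℤ) - (T1.flatten.count i : ℤ) + 1
    rw [List.flatten_cons, List.count_append]
    push_cast
    omega

lemma sigma_mem {lam : Fin n → ℤ} {T : RatTab n} (hT : IsRat n T) (hSh : HasShape n T lam) :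
    IsRat n (sigmaMap n T) ∧ HasShape n (sigmaMap n T) (fun i => lam i + 1) := by
  obtain ⟨T1, T2⟩ := T
  obtain ⟨hneg, hpos, hnchain, hpchain, hmatch⟩ := hT
  have hneg : ∀ c ∈ T1, IsColStrict n c ∧ c ≠ [] := hneg
  have hpos : ∀ c ∈ T2, IsColStrict n c ∧ c ≠ [] := hpos
  have hnchain : T1.Chain' (NegAdj n) := hnchain
  have hpchain : T2.Chain' (PosAdj n) := hpchain
  have hShP : ∀ j : ℕ, (T2.getD j []).length
      = (Finset.univ.filter (fun i : Fin n => ((j : ℤ) + 1) ≤ lam i)).card := hSh.1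
  have hShN : ∀ j : ℕ, (T1.getD j []).length
      = (Finset.univ.filter (fun i : Fin n => lam i ≤ -((j : ℤ) + 1))).card := hSh.2
  have hq : IsColStrict n (T1.headD []) := headD_strict hneg
  have hcl := length_add_compl hq
  have hnegS : ∀ c ∈ T1.tail, IsColStrict n c ∧ c ≠ [] :=
    fun c hc => hneg c (List.mem_of_mem_tail hc)
  have hq' : IsColStrict n (T1.tail.headD []) := headD_strict hnegS
  have ht0 : (T1.headD []).length
      = (Finset.univ.filter (fun i : Fin n => lam i ≤ -1)).card := by
    rw [← getD_zero, hShN 0]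
    exact card_congr_pred (fun i => by push_cast; omega)
  by_cases hemp : (compl n (T1.headD [])).isEmpty
  · -- complement is empty
    have hce : compl n (T1.headD []) = [] := List.isEmpty_iff.mp hemp
    have hql : (T1.headD []).length = n := by
      rw [hce] at hcl; simpa using hcl
    have hall : ∀ i : Fin n, lam i ≤ -1 :=
      forall_of_card_filter (p := fun i => lam i ≤ -1) (by omega)
    have hT2 : T2 = [] := by
      have hm : (T2.headD []).length + (T1.headD []).length ≤ n := hmatch.1
      exact eq_nil_of_headD_nil (fun c hc => (hpos c hc).2)
        (List.eq_nil_of_length_eq_zero (by omega))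
    have hs : sigmaMap n (T1, T2) = (T1.tail, T2) := by
      unfold sigmaMap; rw [if_pos hemp]
    rw [hs, hT2]
    refine ⟨⟨hnegS, by simp, hnchain.tail, List.isChain_nil, ?_, ?_⟩, ?_, ?_⟩
    · -- Matching length part
      show (([] : List (List (Fin n))).headD []).length + (T1.tail.headD []).length ≤ n
      simpa using strict_length_le hq'
    · intro i x hx y hy
      simp at hy
    · intro j
      show (([] : List (List (Fin n))).getD j []).length = _
      rw [List.getD_nil]
      simp only [List.length_nil]
      exact (card_filter_eq_zero
        (fun i => by have := hall i; intro hcon; push_cast at hcon; omega)).symm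
    · intro j
      show (T1.tail.getD j []).length = _
      rw [tail_getD, hShN (j+1)]
      exact card_congr_pred (fun i => by push_cast; omega)
  · -- complement nonempty
    have hcne : compl n (T1.headD []) ≠ [] := fun h => by
      rw [h] at hemp; simp at hemp
    have hs : sigmaMap n (T1, T2) = (T1.tail, compl n (T1.headD []) :: T2) := by
      unfold sigmaMap; rw [if_neg hemp]
    rw [hs]
    have hmatch' : NegAdj n (compl n (T1.headD [])) (T2.headD []) :=
      (matching_iff (T := (T1, T2)) hq).mp hmatch
    refine ⟨⟨hnegS, ?_, hnchain.tail, ?_, ?_⟩, ?_, ?_⟩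
    · intro c hc
      rcases List.mem_cons.mp hc with rfl | hc'
      · exact ⟨compl_strict _, hcne⟩
      · exact hpos c hc'
    · show List.IsChain _ (_ :: _)
      rw [List.isChain_cons]
      refine ⟨?_, hpchain⟩
      intro y hy
      have hyd : T2.headD [] = y := by
        cases T2 with
        | nil => simp at hy
        | cons a l =>
          simp only [List.head?_cons, Option.mem_some_iff] at hy
          rw [← hy]; rfl
      exact posAdj_iff_negAdj.mpr (hyd ▸ hmatch')
    · -- Matching
      rw [matching_iff (T := (T1.tail, compl n (T1.headD []) :: T2)) hq']
      show NegAdj n (compl n (T1.tail.headD [])) (compl n (T1.headD []))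
      exact compl_adj hq hq' (head_adj hnchain)
    · -- HasShape positive part
      intro j
      cases j with
      | zero =>
        show (compl n (T1.headD [])).length = _
        have hsplit := card_compl_split lam
        have he : (Finset.univ.filter (fun i : Fin n => (((0:ℕ) : ℤ) + 1) ≤ lam i + 1)).card
            = (Finset.univ.filter (fun i : Fin n => 0 ≤ lam i)).card :=
          card_congr_pred (fun i => by push_cast; omega)
        rw [he]
        omega
      | succ j =>
        show (T2.getD j []).length = _
        rw [hShP j]
        exact card_congr_pred (fun i => by push_cast; omega)
    · -- HasShape negative part
      intro j
      show (T1.tail.getD j []).length = _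
      rw [tail_getD, hShN (j+1)]
      exact card_congr_pred (fun i => by push_cast; omega)

lemma inv_mem {lam : Fin n → ℤ} {S : RatTab n} (hS : IsRat n S)
    (hSh : HasShape n S (fun i => lam i + 1)) :
    IsRat n (invMap n S) ∧ HasShape n (invMap n S) lam := by
  obtain ⟨S1, S2⟩ := S
  obtain ⟨hneg, hpos, hnchain, hpchain, hmatch⟩ := hS
  have hneg : ∀ c ∈ S1, IsColStrict n c ∧ c ≠ [] := hneg
  have hpos : ∀ c ∈ S2, IsColStrict n c ∧ c ≠ [] := hpos
  have hnchain : S1.Chain' (NegAdj n) := hnchain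
  have hpchain : S2.Chain' (PosAdj n) := hpchain
  have hShP : ∀ j : ℕ, (S2.getD j []).length
      = (Finset.univ.filter (fun i : Fin n => ((j : ℤ) + 1) ≤ lam i + 1)).card := hSh.1
  have hShN : ∀ j : ℕ, (S1.getD j []).length
      = (Finset.univ.filter (fun i : Fin n => lam i + 1 ≤ -((j : ℤ) + 1))).card := hSh.2
  have hc : IsColStrict n (S2.headD []) := headD_strict hpos
  have hr : IsColStrict n (S1.headD []) := headD_strict hneg
  have hcl := length_add_compl hc
  have hposT : ∀ c ∈ S2.tail, IsColStrict n c ∧ c ≠ [] :=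
    fun c hc => hpos c (List.mem_of_mem_tail hc)
  have hc0 : (S2.headD []).length
      = (Finset.univ.filter (fun i : Fin n => 0 ≤ lam i)).card := by
    rw [← getD_zero, hShP 0]
    exact card_congr_pred (fun i => by push_cast; omega)
  have hsplit := card_compl_split lam
  by_cases hemp : (compl n (S2.headD [])).isEmpty
  · -- complement of the first positive column is empty
    have hce : compl n (S2.headD []) = [] := List.isEmpty_iff.mp hemp
    have hcle : (S2.headD []).length = n := by
      rw [hce] at hcl; simpa using hcl
    have hall : ∀ i : Fin n, 0 ≤ lam i :=
      forall_of_card_filter (p := fun i => 0 ≤ lam i) (by omega)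
    have hS1 : S1 = [] := by
      apply eq_nil_of_getD_len (fun c hc => (hneg c hc).2)
      rw [hShN 0]
      exact card_filter_eq_zero
        (fun i => by have := hall i; intro hcon; push_cast at hcon; omega)
    have hcfr : S2.headD [] = List.finRange n := eq_finRange_of_length hc hcle
    have hs : invMap n (S1, S2) = (S1, S2.tail) := by
      unfold invMap; rw [if_pos hemp]
    rw [hs, hS1]
    refine ⟨⟨by simp, hposT, List.isChain_nil, hpchain.tail, ?_⟩, ?_, ?_⟩
    · -- Matching
      rw [matching_iff (T := (([] : List (List (Fin n))), S2.tail)) nil_strict]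
      show NegAdj n (compl n []) (S2.tail.headD [])
      rw [compl_nil, ← hcfr]
      exact head_adj_pos hpchain
    · intro j
      show (S2.tail.getD j []).length = _
      rw [tail_getD, hShP (j+1)]
      exact card_congr_pred (fun i => by push_cast; omega)
    · intro j
      show (([] : List (List (Fin n))).getD j []).length = _
      rw [List.getD_nil]
      simp only [List.length_nil]
      exact (card_filter_eq_zero
        (fun i => by have := hall i; intro hcon; push_cast at hcon; omega)).symm
  · -- complement nonempty
    have hcne : compl n (S2.headD []) ≠ [] := fun h => by
      rw [h] at hemp; simp at hemp
    have hs : invMap n (S1, S2) = (compl n (S2.headD []) :: S1, S2.tail) := by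
      unfold invMap; rw [if_neg hemp]
    rw [hs]
    have hmatch' : NegAdj n (compl n (S1.headD [])) (S2.headD []) :=
      (matching_iff (T := (S1, S2)) hr).mp hmatch
    refine ⟨⟨?_, hposT, ?_, hpchain.tail, ?_⟩, ?_, ?_⟩
    · intro c hcm
      rcases List.mem_cons.mp hcm with rfl | hc'
      · exact ⟨compl_strict _, hcne⟩
      · exact hneg c hc'
    · -- chain of negative columns
      show List.IsChain _ (_ :: _)
      rw [List.isChain_cons]
      refine ⟨?_, hnchain⟩
      intro y hy
      have hyd : S1.headD [] = y := by
        cases S1 with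
        | nil => simp at hy
        | cons a l =>
          simp only [List.head?_cons, Option.mem_some_iff] at hy
          rw [← hy]; rfl
      have h2 := compl_adj (compl_strict (S1.headD [])) hc hmatch'
      rw [compl_compl hr] at h2
      exact hyd ▸ h2
    · -- Matching
      rw [matching_iff (T := (compl n (S2.headD []) :: S1, S2.tail)) (compl_strict _)]
      show NegAdj n (compl n (compl n (S2.headD []))) (S2.tail.headD [])
      rw [compl_compl hc]
      exact head_adj_pos hpchain
    · -- HasShape positive part
      intro j
      show (S2.tail.getD j []).length = _
      rw [tail_getD, hShP (j+1)]
      exact card_congr_pred (fun i => by push_cast; omega)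
    · -- HasShape negative part
      intro j
      cases j with
      | zero =>
        show (compl n (S2.headD [])).length = _
        have he : (Finset.univ.filter (fun i : Fin n => lam i ≤ -(((0:ℕ) : ℤ) + 1))).card
            = (Finset.univ.filter (fun i : Fin n => lam i ≤ -1)).card :=
          card_congr_pred (fun i => by push_cast; omega)
        rw [he]
        omega
      | succ j =>
        show (S1.getD j []).length = _
        rw [hShN j]
        exact card_congr_pred (fun i => by push_cast; omega)

lemma isEmpty_compl_nil_iff : ((compl n ([] : List (Fin n))).isEmpty = true) ↔ n = 0 := by
  rw [compl_nil, List.isEmpty_iff]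
  constructor
  · intro h
    have := congrArg List.length h
    simpa using this
  · intro h
    subst h; rfl

lemma left_inv' {T : RatTab n} (hT : IsRat n T) : invMap n (sigmaMap n T) = T := by
  obtain ⟨T1, T2⟩ := T
  obtain ⟨hneg, hpos, hnchain, hpchain, hmatch⟩ := hT
  have hneg : ∀ c ∈ T1, IsColStrict n c ∧ c ≠ [] := hneg
  have hpos : ∀ c ∈ T2, IsColStrict n c ∧ c ≠ [] := hpos
  cases T1 with
  | nil =>
    rcases Nat.eq_zero_or_pos n with hn | hn
    · -- n = 0
      have hT2 : T2 = [] := col_list_nil hn hpos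
      subst hT2
      have hcond : (compl n (([] : List (List (Fin n))).headD [])).isEmpty = true := by
        show (compl n ([] : List (Fin n))).isEmpty = true
        exact isEmpty_compl_nil_iff.mpr hn
      have hs : sigmaMap n (([] : List (List (Fin n))), ([] : List (List (Fin n))))
          = ([], []) := by
        unfold sigmaMap; rw [if_pos hcond]; rfl
      rw [hs]
      unfold invMap
      rw [if_pos hcond]
      rfl
    · -- n > 0
      have hcond : ¬ (compl n (([] : List (List (Fin n))).headD [])).isEmpty = true := by
        show ¬ (compl n ([] : List (Fin n))).isEmpty = true
        rw [isEmpty_compl_nil_iff]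
        omega
      have hs : sigmaMap n (([] : List (List (Fin n))), T2)
          = ([], compl n ([] : List (Fin n)) :: T2) := by
        unfold sigmaMap; rw [if_neg hcond]; rfl
      rw [hs]
      have hcond2 : (compl n ((compl n ([] : List (Fin n)) :: T2).headD [])).isEmpty
          = true := by
        show (compl n (compl n ([] : List (Fin n)))).isEmpty = true
        rw [compl_compl nil_strict]
        rfl
      unfold invMap
      rw [if_pos hcond2]
      rfl
  | cons q rest =>
    have hqst : IsColStrict n q ∧ q ≠ [] := hneg q (List.mem_cons_self)
    by_cases hemp : (compl n ((q :: rest).headD [])).isEmpty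
    · have hce : compl n q = [] := List.isEmpty_iff.mp hemp
      have hcl := length_add_compl hqst.1
      have hql : q.length = n := by rw [hce] at hcl; simpa using hcl
      have hqfr : q = List.finRange n := eq_finRange_of_length hqst.1 hql
      have hn0 : 0 < n := by
        rcases Nat.eq_zero_or_pos n with h0 | h0
        · exact absurd (List.eq_nil_of_length_eq_zero (by omega)) hqst.2
        · exact h0
      have hT2 : T2 = [] := by
        have hm : (T2.headD []).length + ((q :: rest).headD []).length ≤ n := hmatch.1
        have hm' : (T2.headD []).length + q.length ≤ n := hm
        exact eq_nil_of_headD_nil (fun c hc => (hpos c hc).2)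
          (List.eq_nil_of_length_eq_zero (by omega))
      have hs : sigmaMap n (q :: rest, T2) = (rest, T2) := by
        unfold sigmaMap; rw [if_pos hemp]; rfl
      rw [hs, hT2]
      have hcond : ¬ (compl n (([] : List (List (Fin n))).headD [])).isEmpty = true := by
        show ¬ (compl n ([] : List (Fin n))).isEmpty = true
        rw [isEmpty_compl_nil_iff]
        omega
      unfold invMap
      rw [if_neg hcond]
      show (compl n ([] : List (Fin n)) :: rest, ([] : List (List (Fin n))).tail)
          = (q :: rest, [])
      rw [compl_nil, ← hqfr]
      rfl
    · have hcne : compl n q ≠ [] := fun h => by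
        rw [show ((q :: rest).headD []) = q from rfl, h] at hemp
        simp at hemp
      have hs : sigmaMap n (q :: rest, T2) = (rest, compl n q :: T2) := by
        unfold sigmaMap; rw [if_neg hemp]; rfl
      rw [hs]
      have hcond : ¬ (compl n ((compl n q :: T2).headD [])).isEmpty = true := by
        show ¬ (compl n (compl n q)).isEmpty = true
        rw [compl_compl hqst.1, List.isEmpty_iff]
        exact hqst.2
      unfold invMap
      rw [if_neg hcond]
      show (compl n (compl n q) :: rest, (compl n q :: T2).tail) = (q :: rest, T2)
      rw [compl_compl hqst.1]
      show ((q :: rest : List (List (Fin n))), T2) = (q :: rest, T2)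
      rfl

lemma right_inv' {mu : Fin n → ℤ} {S : RatTab n} (hS : IsRat n S) (hSh : HasShape n S mu) :
    sigmaMap n (invMap n S) = S := by
  obtain ⟨S1, S2⟩ := S
  obtain ⟨hneg, hpos, hnchain, hpchain, hmatch⟩ := hS
  have hneg : ∀ c ∈ S1, IsColStrict n c ∧ c ≠ [] := hneg
  have hpos : ∀ c ∈ S2, IsColStrict n c ∧ c ≠ [] := hpos
  have hShP : ∀ j : ℕ, (S2.getD j []).length
      = (Finset.univ.filter (fun i : Fin n => ((j : ℤ) + 1) ≤ mu i)).card := hSh.1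
  have hShN : ∀ j : ℕ, (S1.getD j []).length
      = (Finset.univ.filter (fun i : Fin n => mu i ≤ -((j : ℤ) + 1))).card := hSh.2
  have hc : IsColStrict n (S2.headD []) := headD_strict hpos
  by_cases hemp : (compl n (S2.headD [])).isEmpty
  · -- complement empty: S2's head is the full column [n]
    have hce : compl n (S2.headD []) = [] := List.isEmpty_iff.mp hemp
    have hcl := length_add_compl hc
    have hcle : (S2.headD []).length = n := by rw [hce] at hcl; simpa using hcl
    have hall : ∀ i : Fin n, ((0:ℕ) : ℤ) + 1 ≤ mu i := by
      apply forall_of_card_filter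
      rw [← hShP 0, getD_zero]
      exact hcle
    have hS1 : S1 = [] := by
      apply eq_nil_of_getD_len (fun c hcc => (hneg c hcc).2)
      rw [hShN 0]
      exact card_filter_eq_zero
        (fun i => by have := hall i; intro hcon; push_cast at hcon this; omega)
    have hs : invMap n (S1, S2) = (S1, S2.tail) := by
      unfold invMap; rw [if_pos hemp]
    rw [hs, hS1]
    rcases Nat.eq_zero_or_pos n with hn | hn
    · -- n = 0
      have hS2 : S2 = [] := col_list_nil hn hpos
      subst hS2
      have hcond : (compl n (([] : List (List (Fin n))).headD [])).isEmpty = true := by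
        show (compl n ([] : List (Fin n))).isEmpty = true
        exact isEmpty_compl_nil_iff.mpr hn
      unfold sigmaMap
      rw [if_pos hcond]
      rfl
    · have hcfr : S2.headD [] = List.finRange n := eq_finRange_of_length hc hcle
      have hS2ne : S2 ≠ [] := by
        intro h
        rw [h] at hcle
        simp at hcle
        omega
      have hcond : ¬ (compl n (([] : List (List (Fin n))).headD [])).isEmpty = true := by
        show ¬ (compl n ([] : List (Fin n))).isEmpty = true
        rw [isEmpty_compl_nil_iff]
        omega
      unfold sigmaMap
      rw [if_neg hcond]
      show (([] : List (List (Fin n))), compl n ([] : List (Fin n)) :: S2.tail) = ([], S2)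
      rw [compl_nil, ← hcfr, cons_headD_tail hS2ne]
  · -- complement nonempty
    have hs : invMap n (S1, S2) = (compl n (S2.headD []) :: S1, S2.tail) := by
      unfold invMap; rw [if_neg hemp]
    rw [hs]
    have hcompl : compl n (compl n (S2.headD [])) = S2.headD [] := compl_compl hc
    by_cases hc0 : S2.headD [] = []
    · -- then S2 = []
      have hS2 : S2 = [] := eq_nil_of_headD_nil (fun c hcc => (hpos c hcc).2) hc0
      have hcond : (compl n ((compl n (S2.headD []) :: S1).headD [])).isEmpty = true := by
        show (compl n (compl n (S2.headD []))).isEmpty = true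
        rw [hcompl, hc0]
        rfl
      unfold sigmaMap
      rw [if_pos hcond]
      rw [hS2]
      rfl
    · have hS2ne : S2 ≠ [] := by
        intro h
        exact hc0 (by rw [h]; rfl)
      have hcond : ¬ (compl n ((compl n (S2.headD []) :: S1).headD [])).isEmpty = true := by
        show ¬ (compl n (compl n (S2.headD []))).isEmpty = true
        rw [hcompl, List.isEmpty_iff]
        exact hc0
      unfold sigmaMap
      rw [if_neg hcond]
      show (S1, compl n (compl n (S2.headD [])) :: S2.tail) = (S1, S2)
      rw [hcompl, cons_headD_tail hS2ne]

end Main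

theorem sigma_bijective_weight_shift (lam : Fin n → ℤ) (hlam : Antitone lam) :
    Set.BijOn (sigmaMap n)
      {T : RatTab n | IsRat n T ∧ HasShape n T lam}
      {T : RatTab n | IsRat n T ∧ HasShape n T (fun i => lam i + 1)} ∧
    ∀ T : RatTab n, IsRat n T → HasShape n T lam →
      ∀ i : Fin n, wtRat n (sigmaMap n T) i = wtRat n T i + 1 := by
  constructor
  · refine Set.InvOn.bijOn (f' := invMap n) ⟨?_, ?_⟩ ?_ ?_
    · intro T hT
      exact left_inv' hT.1
    · intro S hS
      exact right_inv' hS.1 hS.2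
    · intro T hT
      exact sigma_mem hT.1 hT.2
    · intro S hS
      exact inv_mem hS.1 hS.2
  · intro T hT hSh i
    exact weight_shift' hT i


end KP
end

section
/- The combinatorial R-matrix ς on pairs of level-one parabolically semistandard tableaux is an involution: for all (T_1,T_2) ∈ SST_{A/B}(k_1) × SST_{A/B}(k_2), applying ς twice returns (T_1,T_2). Moreover ς maps SST_{A/B}(k_1) × SST_{A/B}(k_2) bijectively onto SST_{A/B}(k_2) × SST_{A/B}(k_1), and it preserves the total weight: wt(T_1) + wt(T_2) = wt(T_2') + wt(T_1') where ς(T_1,T_2) = (T_2',T_1'). -/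
/-!
STATEMENT 6: The combinatorial R-matrix `ς` on pairs of level-one parabolically
semistandard tableaux is an involution; it maps
`SST_{A/B}(k₁) × SST_{A/B}(k₂)` bijectively onto `SST_{A/B}(k₂) × SST_{A/B}(k₁)`
and preserves the total weight (the moved entries are only redistributed).
-/

namespace KP

def tstep {γ : Type*} (x : Bool × γ) (l : List (Bool × γ)) : List (Bool × γ) :=
  match x.1, l with
  | true, (false, _) :: rest => rest
  | _, _ => x :: l

def treduce {γ : Type*} (l : List (Bool × γ)) : List (Bool × γ) := l.foldr tstep []

variable {A B : Type*} [LinearOrder A] [LinearOrder B]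

def IsSuperRow {α : Type*} [LinearOrder α] (par : α → Bool) (l : List α) : Prop :=
  l.Chain' (fun x y => x < y ∨ (x = y ∧ par x = false))

/-- A level-one parabolically semistandard tableau of shape `k`. -/
def IsLevelOne (parA : A → Bool) (parB : B → Bool) (T : List A × List B) (k : ℤ) : Prop :=
  IsSuperRow parA T.1 ∧ IsSuperRow parB T.2 ∧ (T.1.length : ℤ) - (T.2.length : ℤ) = k

/-- The tagged block of signs of a letter `a ∈ A` (multiplicities taken in `T₁`, `T₂`). -/
def tblockA (parA : A → Bool) (p₁ p₂ : List A) (a : A) : List (Bool × (A ⊕ B)) :=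
  if parA a then
    List.replicate (p₁.count a) (true, Sum.inl a) ++
      List.replicate (p₂.count a) (false, Sum.inl a)
  else
    List.replicate (p₂.count a) (false, Sum.inl a) ++
      List.replicate (p₁.count a) (true, Sum.inl a)

/-- The tagged block of signs of a letter `b ∈ B`. -/
def tblockB (parB : B → Bool) (q₁ q₂ : List B) (b : B) : List (Bool × (A ⊕ B)) :=
  if parB b then
    List.replicate (q₂.count b) (true, Sum.inr b) ++
      List.replicate (q₁.count b) (false, Sum.inr b)
  else
    List.replicate (q₁.count b) (false, Sum.inr b) ++
      List.replicate (q₂.count b) (true, Sum.inr b)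

/-- The tagged sign sequence of a pair `(T₁, T₂)`: blocks of letters of `A` in decreasing
order, followed by blocks of letters of `B` in increasing order. -/
def tsignSeq (parA : A → Bool) (parB : B → Bool) (T₁ T₂ : List A × List B) :
    List (Bool × (A ⊕ B)) :=
  ((List.insertionSort (· ≤ ·) (T₁.1 ++ T₂.1).dedup).reverse.flatMap
      (tblockA (B := B) parA T₁.1 T₂.1)) ++
  ((List.insertionSort (· ≤ ·) (T₁.2 ++ T₂.2).dedup).flatMap
      (tblockB (A := A) parB T₁.2 T₂.2))

/-- Move the entry corresponding to a `+` sign: a letter of `A` moves from `T₁⁺` to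
`T₂⁺`, a letter of `B` moves from `T₂⁻` to `T₁⁻`. -/
def movePlus (P : (List A × List B) × (List A × List B)) (y : A ⊕ B) :
    (List A × List B) × (List A × List B) :=
  match y with
  | Sum.inl a => ((P.1.1.erase a, P.1.2), (List.orderedInsert (· ≤ ·) a P.2.1, P.2.2))
  | Sum.inr b => ((P.1.1, List.orderedInsert (· ≤ ·) b P.1.2), (P.2.1, P.2.2.erase b))

/-- Move the entry corresponding to a `−` sign: a letter of `A` moves from `T₂⁺` to
`T₁⁺`, a letter of `B` moves from `T₁⁻` to `T₂⁻`. -/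
def moveMinus (P : (List A × List B) × (List A × List B)) (y : A ⊕ B) :
    (List A × List B) × (List A × List B) :=
  match y with
  | Sum.inl a => ((List.orderedInsert (· ≤ ·) a P.1.1, P.1.2), (P.2.1.erase a, P.2.2))
  | Sum.inr b => ((P.1.1, P.1.2.erase b), (P.2.1, List.orderedInsert (· ≤ ·) b P.2.2))

/-- The combinatorial R-matrix `ς`. -/
def varsigma (parA : A → Bool) (parB : B → Bool)
    (P : (List A × List B) × (List A × List B)) :
    (List A × List B) × (List A × List B) :=
  let k₁ : ℤ := (P.1.1.length : ℤ) - P.1.2.length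
  let k₂ : ℤ := (P.2.1.length : ℤ) - P.2.2.length
  if k₁ = k₂ then P
  else
    let red := treduce (tsignSeq parA parB P.1 P.2)
    if k₂ < k₁ then
      (((red.filter (fun x => x.1 = true)).take (k₁ - k₂).toNat).map Prod.snd).foldl
        movePlus P
    else
      ((((red.filter (fun x => x.1 = false)).reverse.take (k₂ - k₁).toNat).map
        Prod.snd).foldl moveMinus P)

section WordLemmas
variable {γ : Type*}

lemma tstep_false (c : γ) (l) : tstep (false, c) l = (false, c) :: l := by
  cases l with
  | nil => rfl
  | cons y t => rcases y with ⟨b, d⟩; cases b <;> rfl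

lemma tstep_fst_false {x : Bool × γ} (h : x.1 = false) (l) : tstep x l = x :: l := by
  rcases x with ⟨b, c⟩; cases b
  · exact tstep_false c l
  · simp at h

lemma tstep_true_nil (c : γ) : tstep (true, c) [] = [(true, c)] := rfl

lemma tstep_true_cons_false (c d : γ) (r) : tstep (true, c) ((false, d) :: r) = r := rfl

lemma tstep_true_cons_true (c d : γ) (r) :
    tstep (true, c) ((true, d) :: r) = (true, c) :: (true, d) :: r := rfl

lemma treduce_nil : treduce ([] : List (Bool × γ)) = [] := rfl

lemma treduce_cons (x : Bool × γ) (l) : treduce (x :: l) = tstep x (treduce l) := rfl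

lemma foldr_tstep_allF {l : List (Bool × γ)} (h : ∀ x ∈ l, x.1 = false) (s) :
    l.foldr tstep s = l ++ s := by
  induction l with
  | nil => rfl
  | cons x t ih =>
    simp only [List.foldr_cons]
    rw [ih (fun y hy => h y (List.mem_cons_of_mem _ hy)),
      tstep_fst_false (h x (List.mem_cons_self))]
    rfl

lemma tstep_cons_of_allT (c : γ) {L : List (Bool × γ)} (hL : ∀ y ∈ L, y.1 = true) :
    tstep (true, c) L = (true, c) :: L := by
  cases L with
  | nil => rfl
  | cons y r =>
    have hy : y.1 = true := hL y (List.mem_cons_self)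
    rcases y with ⟨by', cy⟩
    simp only at hy; subst hy
    rfl

lemma foldr_tstep_allT {l s : List (Bool × γ)} (h : ∀ x ∈ l, x.1 = true)
    (hs : ∀ y ∈ s, y.1 = true) : l.foldr tstep s = l ++ s := by
  induction l with
  | nil => rfl
  | cons x t ih =>
    simp only [List.foldr_cons]
    rw [ih (fun y hy => h y (List.mem_cons_of_mem _ hy))]
    rcases x with ⟨b, c⟩
    have hb : b = true := h (b, c) (List.mem_cons_self)
    subst hb
    have hall : ∀ y ∈ t ++ s, y.1 = true := by
      intro y hy
      rcases List.mem_append.1 hy with h' | h'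
      · exact h y (List.mem_cons_of_mem _ h')
      · exact hs y h'
    rw [tstep_cons_of_allT c hall, List.cons_append]

lemma treduce_allF {l : List (Bool × γ)} (h : ∀ x ∈ l, x.1 = false) : treduce l = l := by
  have := foldr_tstep_allF h []
  simpa [treduce] using this

lemma treduce_allT {l : List (Bool × γ)} (h : ∀ x ∈ l, x.1 = true) : treduce l = l := by
  have := foldr_tstep_allT h (s := []) (by simp)
  simpa [treduce] using this

lemma tstep_comm (x : Bool × γ) (r s : List (Bool × γ)) :
    (tstep x r).foldr tstep s = tstep x (r.foldr tstep s) := by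
  rcases x with ⟨b, c⟩
  cases b
  · rw [tstep_false]; rfl
  · cases r with
    | nil => rfl
    | cons y r' =>
      rcases y with ⟨by', cy⟩
      cases by'
      · rw [tstep_true_cons_false]
        simp only [List.foldr_cons]
        rw [tstep_false, tstep_true_cons_false]
      · rfl

lemma foldr_tstep_treduce (l s : List (Bool × γ)) :
    l.foldr tstep s = (treduce l).foldr tstep s := by
  induction l with
  | nil => rfl
  | cons x t ih =>
    simp only [List.foldr_cons, treduce_cons]
    rw [ih, tstep_comm]

lemma treduce_append (l l' : List (Bool × γ)) :
    treduce (l ++ l') = (treduce l).foldr tstep (treduce l') := by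
  rw [treduce, List.foldr_append, ← treduce, foldr_tstep_treduce]

lemma treduce_shape (l : List (Bool × γ)) :
    ∃ M T, treduce l = M ++ T ∧ (∀ x ∈ M, x.1 = false) ∧ (∀ x ∈ T, x.1 = true) := by
  induction l with
  | nil => exact ⟨[], [], rfl, by simp, by simp⟩
  | cons x t ih =>
    obtain ⟨M, T, hMT, hM, hT⟩ := ih
    rcases x with ⟨b, c⟩
    cases b
    · refine ⟨(false, c) :: M, T, ?_, ?_, hT⟩
      · rw [treduce_cons, hMT, tstep_false]; rfl
      · intro y hy
        rcases List.mem_cons.1 hy with h | h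
        · subst h; rfl
        · exact hM y h
    · cases M with
      | nil =>
        refine ⟨[], (true, c) :: T, ?_, by simp, ?_⟩
        · rw [treduce_cons, hMT]
          simp only [List.nil_append]
          rw [tstep_cons_of_allT c hT]
        · intro y hy
          rcases List.mem_cons.1 hy with h | h
          · subst h; rfl
          · exact hT y h
      | cons m M' =>
        have hm : m.1 = false := hM m (List.mem_cons_self)
        rcases m with ⟨bm, cm⟩; simp only at hm; subst hm
        exact ⟨M', T, by rw [treduce_cons, hMT]; rfl,
          fun y hy => hM y (List.mem_cons_of_mem _ hy), hT⟩

lemma treduce_subset (l : List (Bool × γ)) : ∀ x ∈ treduce l, x ∈ l := by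
  induction l with
  | nil => simp [treduce_nil]
  | cons y t ih =>
    intro x hx
    rw [treduce_cons] at hx
    rcases y with ⟨b, c⟩
    cases b
    · rw [tstep_false] at hx
      rcases List.mem_cons.1 hx with h | h
      · subst h; exact List.mem_cons_self
      · exact List.mem_cons_of_mem _ (ih x h)
    · cases hr : treduce t with
      | nil =>
        rw [hr, tstep_true_nil] at hx
        simp at hx; simp [hx]
      | cons z r =>
        rcases z with ⟨bz, cz⟩
        cases bz
        · rw [hr, tstep_true_cons_false] at hx
          exact List.mem_cons_of_mem _ (ih x (hr ▸ List.mem_cons_of_mem _ hx))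
        · rw [hr, tstep_true_cons_true] at hx
          rcases List.mem_cons.1 hx with h | h
          · subst h; exact List.mem_cons_self
          · exact List.mem_cons_of_mem _ (ih x (hr ▸ h))

/-- signed count -/
def eps (l : List (Bool × γ)) : ℤ :=
  (l.countP (fun x => x.1 = true) : ℤ) - (l.countP (fun x => x.1 = false) : ℤ)

lemma eps_append (l l' : List (Bool × γ)) : eps (l ++ l') = eps l + eps l' := by
  simp [eps, List.countP_append]; ring

lemma eps_tstep (x : Bool × γ) (l) : eps (tstep x l) = eps [x] + eps l := by
  rcases x with ⟨b, c⟩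
  cases b
  · rw [tstep_false]
    have : ((false, c) :: l) = [(false, c)] ++ l := rfl
    rw [this, eps_append]
  · cases l with
    | nil => simp [tstep_true_nil, eps]
    | cons y r =>
      rcases y with ⟨by', cy⟩
      cases by'
      · rw [tstep_true_cons_false]
        have : ((false, cy) :: r) = [(false, cy)] ++ r := rfl
        rw [this, eps_append]
        simp [eps]
      · rw [tstep_true_cons_true]
        have : ((true, c) :: (true, cy) :: r) = [(true, c)] ++ ((true, cy) :: r) := rfl
        rw [this, eps_append]

lemma eps_treduce (l : List (Bool × γ)) : eps (treduce l) = eps l := by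
  induction l with
  | nil => rfl
  | cons x t ih =>
    rw [treduce_cons, eps_tstep, ih]
    have : (x :: t) = [x] ++ t := rfl
    rw [this, eps_append]

lemma eps_allF {l : List (Bool × γ)} (h : ∀ x ∈ l, x.1 = false) : eps l = -(l.length : ℤ) := by
  have h1 : l.countP (fun x => x.1 = true) = 0 := by
    rw [List.countP_eq_zero]
    intro x hx; simp [h x hx]
  have h2 : l.countP (fun x => x.1 = false) = l.length := by
    rw [List.countP_eq_length]
    intro x hx; simp [h x hx]
  simp only [eps]; rw [h1, h2]; simp

lemma eps_allT {l : List (Bool × γ)} (h : ∀ x ∈ l, x.1 = true) : eps l = (l.length : ℤ) := by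
  have h1 : l.countP (fun x => x.1 = true) = l.length := by
    rw [List.countP_eq_length]
    intro x hx; simp [h x hx]
  have h2 : l.countP (fun x => x.1 = false) = 0 := by
    rw [List.countP_eq_zero]
    intro x hx; simp [h x hx]
  simp only [eps]; rw [h1, h2]; simp

/-- The split lemma: if the reduced word is `M ++ (true,t) :: T` with `M` all minus,
then the original word splits at that occurrence. -/
lemma split_plus {w M T : List (Bool × γ)} {t : γ}
    (h : treduce w = M ++ (true, t) :: T) (hM : ∀ x ∈ M, x.1 = false) :
    ∃ u v, w = u ++ (true, t) :: v ∧ treduce u = M ∧ treduce v = T := by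
  induction w generalizing M with
  | nil =>
    rw [treduce_nil] at h
    exact absurd h.symm (by simp)
  | cons y w' ih =>
    rw [treduce_cons] at h
    rcases y with ⟨b, c⟩
    cases b
    · rw [tstep_false] at h
      cases M with
      | nil => simp at h
      | cons m M' =>
        rw [List.cons_append] at h
        obtain ⟨h1, h2⟩ := List.cons_eq_cons.mp h
        obtain ⟨u, v, hw, hu, hv⟩ := ih h2 (fun x hx => hM x (List.mem_cons_of_mem _ hx))
        exact ⟨(false, c) :: u, v, by rw [hw]; rfl, by
          rw [treduce_cons, hu, tstep_false, h1], hv⟩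
    · cases hr : treduce w' with
      | nil =>
        rw [hr, tstep_true_nil] at h
        cases M with
        | nil =>
          simp only [List.nil_append] at h
          obtain ⟨h1, h2⟩ := List.cons_eq_cons.mp h
          refine ⟨[], w', ?_, rfl, by rw [hr, h2]⟩
          have : c = t := congrArg Prod.snd h1
          rw [this]; rfl
        | cons m M' =>
          rw [List.cons_append] at h
          obtain ⟨h1, h2⟩ := List.cons_eq_cons.mp h
          have := hM m (List.mem_cons_self)
          rw [← h1] at this; simp at this
      | cons z r =>
        rcases z with ⟨bz, cz⟩
        cases bz
        · rw [hr, tstep_true_cons_false] at h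
          have h2 : treduce w' = ((false, cz) :: M) ++ (true, t) :: T := by
            rw [hr, h]; rfl
          obtain ⟨u, v, hw, hu, hv⟩ := ih h2 (by
            intro x hx
            rcases List.mem_cons.1 hx with h' | h'
            · subst h'; rfl
            · exact hM x h')
          exact ⟨(true, c) :: u, v, by rw [hw]; rfl, by
            rw [treduce_cons, hu, tstep_true_cons_false], hv⟩
        · rw [hr, tstep_true_cons_true] at h
          cases M with
          | nil =>
            simp only [List.nil_append] at h
            obtain ⟨h1, h2⟩ := List.cons_eq_cons.mp h
            refine ⟨[], w', ?_, rfl, by rw [hr, h2]⟩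
            have : c = t := congrArg Prod.snd h1
            rw [this]; rfl
          | cons m M' =>
            rw [List.cons_append] at h
            obtain ⟨h1, h2⟩ := List.cons_eq_cons.mp h
            have := hM m (List.mem_cons_self)
            rw [← h1] at this; simp at this

/-- flip-and-reverse symmetry -/
def wswap (l : List (Bool × γ)) : List (Bool × γ) :=
  (l.map (fun x => (!x.1, x.2))).reverse

lemma wswap_append (l l' : List (Bool × γ)) : wswap (l ++ l') = wswap l' ++ wswap l := by
  simp [wswap]

lemma wswap_wswap (l : List (Bool × γ)) : wswap (wswap l) = l := by
  simp [wswap, List.map_reverse, List.map_map]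
  have : ((fun x : Bool × γ => (!x.1, x.2)) ∘ fun x : Bool × γ => (!x.1, x.2)) = id := by
    funext x; simp
  rw [this, List.map_id]

lemma wswap_cons (x : Bool × γ) (l) : wswap (x :: l) = wswap l ++ [(!x.1, x.2)] := by
  simp [wswap]

lemma mem_wswap {x : Bool × γ} {l} : x ∈ wswap l ↔ (!x.1, x.2) ∈ l := by
  simp only [wswap, List.mem_reverse, List.mem_map]
  constructor
  · rintro ⟨y, hy, rfl⟩; simpa using hy
  · intro h; exact ⟨(!x.1, x.2), h, by simp⟩

lemma treduce_wswap (l : List (Bool × γ)) : treduce (wswap l) = wswap (treduce l) := by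
  induction l with
  | nil => rfl
  | cons x t ih =>
    rw [wswap_cons, treduce_append, ih, treduce_cons]
    obtain ⟨M, T, hMT, hM, hT⟩ := treduce_shape t
    rw [hMT, wswap_append]
    have hswapT : ∀ y ∈ wswap T, y.1 = false := by
      intro y hy
      have := hT _ (mem_wswap.1 hy)
      rcases y with ⟨by', cy⟩
      cases by' <;> simp_all
    have hswapM : ∀ y ∈ wswap M, y.1 = true := by
      intro y hy
      have := hM _ (mem_wswap.1 hy)
      rcases y with ⟨by', cy⟩
      cases by' <;> simp_all
    rcases x with ⟨b, c⟩
    cases b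
    · -- x = (false, c); wswap x-part = [(true, c)]
      have hred : tstep (!(false, c).1, (false, c).2) (treduce ([] : List (Bool × γ))) = [(true, c)] := rfl
      rw [hred, List.foldr_append, foldr_tstep_allT hswapM (by simp),
        foldr_tstep_allF hswapT, treduce_cons, tstep_false, hMT, wswap_cons, wswap_append]
      simp
    · have hred : tstep (!(true, c).1, (true, c).2) (treduce ([] : List (Bool × γ))) = [(false, c)] := rfl
      rw [hred, List.foldr_append, treduce_cons, hMT]
      cases M with
      | nil =>
        have hwnil : wswap ([] : List (Bool × γ)) = [] := rfl
        rw [hwnil, List.foldr_nil, foldr_tstep_allF hswapT]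
        have h2 : tstep (true, c) ([] ++ T) = (true, c) :: T := by
          rw [List.nil_append, tstep_cons_of_allT c hT]
        rw [h2, wswap_cons]
        simp
      | cons m M' =>
        rcases m with ⟨bm, cm⟩
        have hbm : bm = false := hM _ (List.mem_cons_self)
        subst hbm
        rw [wswap_cons, List.foldr_append]
        have hcancel : List.foldr tstep [(false, c)] [(!(false, cm).1, (false, cm).2)] = [] := rfl
        rw [hcancel]
        have hM' : ∀ y ∈ wswap M', y.1 = true := by
          intro y hy
          exact hswapM y (by rw [wswap_cons]; exact List.mem_append_left _ hy)
        rw [foldr_tstep_allT hM' (by simp), List.append_nil, foldr_tstep_allF hswapT]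
        have hstep : tstep (true, c) ((false, cm) :: M' ++ T) = M' ++ T := rfl
        rw [hstep, wswap_append]

lemma split_minus {w M T : List (Bool × γ)} {t : γ}
    (h : treduce w = M ++ (false, t) :: T) (hT : ∀ x ∈ T, x.1 = true) :
    ∃ u v, w = u ++ (false, t) :: v ∧ treduce u = M ∧ treduce v = T := by
  have hsw : treduce (wswap w) = wswap T ++ (true, t) :: wswap M := by
    rw [treduce_wswap, h, wswap_append, wswap_cons]
    simp
  have hMF : ∀ x ∈ wswap T, x.1 = false := by
    intro y hy
    have := hT _ (mem_wswap.1 hy)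
    rcases y with ⟨by', cy⟩
    cases by' <;> simp_all
  obtain ⟨u₀, v₀, hw, hu₀, hv₀⟩ := split_plus hsw hMF
  refine ⟨wswap v₀, wswap u₀, ?_, ?_, ?_⟩
  · have := congrArg wswap hw
    rw [wswap_wswap, wswap_append, wswap_cons] at this
    rw [this]
    simp
  · rw [treduce_wswap, hv₀, wswap_wswap]
  · rw [treduce_wswap, hu₀, wswap_wswap]

lemma rep_split_plus {t : γ} {n m : ℕ} {p s : List (Bool × γ)}
    (h : List.replicate n (false, t) ++ List.replicate m (true, t) = p ++ (true, t) :: s) :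
    ∃ j k, m = j + 1 + k ∧ p = List.replicate n (false, t) ++ List.replicate j (true, t) ∧
      s = List.replicate k (true, t) := by
  induction n generalizing p with
  | zero =>
    simp only [List.replicate_zero, List.nil_append] at h
    have hp : ∀ x ∈ p, x = ((true, t) : Bool × γ) := by
      intro x hx
      exact List.eq_of_mem_replicate (h ▸ (List.mem_append_left _ hx))
    have hs : ∀ x ∈ s, x = ((true, t) : Bool × γ) := by
      intro x hx
      exact List.eq_of_mem_replicate (h ▸ (List.mem_append_right _ (List.mem_cons_of_mem _ hx)))
    have hpe : p = List.replicate p.length (true, t) := List.eq_replicate_of_mem hp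
    have hse : s = List.replicate s.length (true, t) := List.eq_replicate_of_mem hs
    have hlen : m = p.length + 1 + s.length := by
      have := congrArg List.length h
      simp only [List.length_replicate, List.length_append, List.length_cons] at this
      omega
    refine ⟨p.length, s.length, hlen, ?_, hse⟩
    rw [List.replicate_zero, List.nil_append]
    exact hpe
  | succ n ih =>
    rw [List.replicate_succ, List.cons_append] at h
    cases p with
    | nil =>
      simp only [List.nil_append] at h
      obtain ⟨h1, h2⟩ := List.cons_eq_cons.mp h
      simp at h1
    | cons y p' =>
      rw [List.cons_append] at h
      obtain ⟨h1, h2⟩ := List.cons_eq_cons.mp h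
      obtain ⟨j, k, hm, hp, hs⟩ := ih h2
      exact ⟨j, k, hm, by rw [List.replicate_succ, List.cons_append, ← h1, hp], hs⟩

lemma rep_split_minus {t : γ} {n m : ℕ} {p s : List (Bool × γ)}
    (h : List.replicate n (false, t) ++ List.replicate m (true, t) = p ++ (false, t) :: s) :
    ∃ j k, n = j + 1 + k ∧ p = List.replicate j (false, t) ∧
      s = List.replicate k (false, t) ++ List.replicate m (true, t) := by
  induction n generalizing p with
  | zero =>
    exfalso
    have : ((false, t) : Bool × γ) ∈ List.replicate m (true, t) := by
      rw [List.replicate_zero, List.nil_append] at h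
      rw [h]
      exact List.mem_append_right _ (List.mem_cons_self)
    have := List.eq_of_mem_replicate this
    simp at this
  | succ n ih =>
    rw [List.replicate_succ, List.cons_append] at h
    cases p with
    | nil =>
      simp only [List.nil_append] at h
      obtain ⟨h1, h2⟩ := List.cons_eq_cons.mp h
      exact ⟨0, n, by omega, rfl, by rw [← h2]⟩
    | cons y p' =>
      rw [List.cons_append] at h
      obtain ⟨h1, h2⟩ := List.cons_eq_cons.mp h
      obtain ⟨j, k, hn, hp, hs⟩ := ih h2
      exact ⟨j + 1, k, by omega, by rw [List.replicate_succ, ← h1, hp], hs⟩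

lemma rep_split_plus_TF {t : γ} {n m : ℕ} {p s : List (Bool × γ)} (hm : m ≤ 1)
    (h : List.replicate m (true, t) ++ List.replicate n (false, t) = p ++ (true, t) :: s) :
    m = 1 ∧ p = [] ∧ s = List.replicate n (false, t) := by
  have hmem : ((true, t) : Bool × γ) ∈ List.replicate m (true, t) ++ List.replicate n (false, t) := by
    rw [h]; exact List.mem_append_right _ (List.mem_cons_self)
  have hm1 : m = 1 := by
    rcases List.mem_append.1 hmem with h' | h'
    · have := List.mem_replicate.1 h'
      omega
    · have := List.eq_of_mem_replicate h'
      simp at this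
  subst hm1
  rw [List.replicate_one, List.singleton_append] at h
  cases p with
  | nil =>
    simp only [List.nil_append] at h
    obtain ⟨h1, h2⟩ := List.cons_eq_cons.mp h
    exact ⟨rfl, rfl, h2.symm⟩
  | cons y p' =>
    rw [List.cons_append] at h
    obtain ⟨h1, h2⟩ := List.cons_eq_cons.mp h
    exfalso
    have : ((true, t) : Bool × γ) ∈ List.replicate n (false, t) := by
      rw [h2]
      exact List.mem_append_right _ (List.mem_cons_self)
    have := List.eq_of_mem_replicate this
    simp at this

lemma rep_split_minus_TF_aux {t : γ} : ∀ (m : ℕ) (p s : List (Bool × γ)),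
    List.replicate m (true, t) ++ [(false, t)] = p ++ (false, t) :: s →
    p = List.replicate m (true, t) ∧ s = [] := by
  intro m
  induction m with
  | zero =>
    intro p s h
    simp only [List.replicate_zero, List.nil_append] at h
    have hlen := congrArg List.length h
    simp at hlen
    have hp : p = [] := List.length_eq_zero_iff.mp (by omega)
    subst hp
    simp only [List.nil_append] at h
    obtain ⟨h1, h2⟩ := List.cons_eq_cons.mp h
    exact ⟨rfl, h2.symm⟩
  | succ m ih =>
    intro p s h
    rw [List.replicate_succ, List.cons_append] at h
    cases p with
    | nil =>
      simp only [List.nil_append] at h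
      obtain ⟨h1, h2⟩ := List.cons_eq_cons.mp h
      simp at h1
    | cons y p' =>
      rw [List.cons_append] at h
      obtain ⟨h1, h2⟩ := List.cons_eq_cons.mp h
      obtain ⟨hp, hs⟩ := ih p' s h2
      exact ⟨by rw [List.replicate_succ, ← h1, hp], hs⟩

lemma rep_split_minus_TF {t : γ} {n m : ℕ} {p s : List (Bool × γ)} (hn : n ≤ 1)
    (h : List.replicate m (true, t) ++ List.replicate n (false, t) = p ++ (false, t) :: s) :
    n = 1 ∧ p = List.replicate m (true, t) ∧ s = [] := by
  have hmem : ((false, t) : Bool × γ) ∈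
      List.replicate m (true, t) ++ List.replicate n (false, t) := by
    rw [h]; exact List.mem_append_right _ (List.mem_cons_self)
  have hn1 : n = 1 := by
    rcases List.mem_append.1 hmem with h' | h'
    · have := List.eq_of_mem_replicate h'
      simp at this
    · have := List.mem_replicate.1 h'
      omega
  subst hn1
  rw [List.replicate_one] at h
  obtain ⟨hp, hs⟩ := rep_split_minus_TF_aux m p s h
  exact ⟨rfl, hp, hs⟩

/-- Splitting a three-part concatenation at an occurrence that avoids the outer parts. -/
lemma split3 {α : Type*} : ∀ (C m D u v : List α) (x : α),
    C ++ m ++ D = u ++ x :: v → x ∉ C → x ∉ D →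
    ∃ p s, m = p ++ x :: s ∧ u = C ++ p ∧ v = s ++ D := by
  intro C
  induction C with
  | nil =>
    intro m
    induction m with
    | nil =>
      intro D u v x h hC hD
      exfalso
      apply hD
      simp only [List.nil_append] at h
      rw [h]
      exact List.mem_append_right _ (List.mem_cons_self)
    | cons y m' ih =>
      intro D u v x h hC hD
      simp only [List.nil_append, List.cons_append] at h
      cases u with
      | nil =>
        simp only [List.nil_append] at h
        obtain ⟨h1, h2⟩ := List.cons_eq_cons.mp h
        exact ⟨[], m', by rw [h1]; rfl, rfl, h2.symm⟩
      | cons z u' =>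
        rw [List.cons_append] at h
        obtain ⟨h1, h2⟩ := List.cons_eq_cons.mp h
        obtain ⟨p, s, hm, hu, hv⟩ := ih D u' v x (by simpa using h2) hC hD
        exact ⟨y :: p, s, by rw [List.cons_append, hm], by rw [h1, hu]; rfl, hv⟩
  | cons c C' ihC =>
    intro m D u v x h hC hD
    cases u with
    | nil =>
      simp only [List.nil_append] at h
      rw [List.cons_append, List.cons_append] at h
      obtain ⟨h1, h2⟩ := List.cons_eq_cons.mp h
      exact absurd (h1 ▸ (List.mem_cons_self (a := c) (l := C'))) hC
    | cons z u' =>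
      rw [List.cons_append, List.cons_append, List.cons_append] at h
      obtain ⟨h1, h2⟩ := List.cons_eq_cons.mp h
      obtain ⟨p, s, hm, hu, hv⟩ := ihC m D u' v x h2
        (fun hx => hC (List.mem_cons_of_mem _ hx)) hD
      exact ⟨p, s, hm, by rw [hu, h1]; rfl, hv⟩

/-- appending an all-true replicate on the right commutes with reduction -/
lemma treduce_append_repT (E : List (Bool × γ)) (j : ℕ) (t : γ) :
    treduce (E ++ List.replicate j (true, t)) = treduce E ++ List.replicate j (true, t) := by
  rw [treduce_append, treduce_allT (l := List.replicate j (true, t))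
    (fun x hx => by rw [List.eq_of_mem_replicate hx])]
  obtain ⟨M, T, hMT, hM, hT⟩ := treduce_shape E
  rw [hMT, List.foldr_append, foldr_tstep_allT hT
    (fun x hx => by rw [List.eq_of_mem_replicate hx]), foldr_tstep_allF hM, List.append_assoc]

/-- prepending an all-false replicate on the left commutes with reduction -/
lemma treduce_repF_append (V : List (Bool × γ)) (n : ℕ) (t : γ) :
    treduce (List.replicate n (false, t) ++ V) = List.replicate n (false, t) ++ treduce V := by
  rw [treduce_append, treduce_allF (l := List.replicate n (false, t))
    (fun x hx => by rw [List.eq_of_mem_replicate hx]),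
    foldr_tstep_allF (fun x hx => by rw [List.eq_of_mem_replicate hx])]

/-- Surgery lemma: flipping the first unmatched plus, block shape `F^n T^m`. -/
lemma surgery_FT_plus {C D M T : List (Bool × γ)} {t : γ} {n m : ℕ}
    (hred : treduce (C ++ (List.replicate n (false, t) ++ List.replicate m (true, t)) ++ D)
      = M ++ (true, t) :: T)
    (hM : ∀ x ∈ M, x.1 = false) (hT : ∀ x ∈ T, x.1 = true)
    (hC : ((true, t) : Bool × γ) ∉ C) (hD : ((true, t) : Bool × γ) ∉ D) :
    1 ≤ m ∧
    treduce (C ++ (List.replicate (n + 1) (false, t) ++ List.replicate (m - 1) (true, t)) ++ D)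
      = M ++ (false, t) :: T := by
  obtain ⟨u, v, hw, hu, hv⟩ := split_plus hred hM
  obtain ⟨p, s, hm, hup, hvs⟩ := split3 C _ D u v (true, t) hw hC hD
  obtain ⟨j, k, hmjk, hp, hs⟩ := rep_split_plus hm
  -- j = 0
  have hj : j = 0 := by
    by_contra hj0
    have : treduce u = treduce (C ++ List.replicate n (false, t)) ++
        List.replicate j (true, t) := by
      rw [hup, hp, ← List.append_assoc, treduce_append_repT]
    rw [hu] at this
    have : ((true, t) : Bool × γ) ∈ M := by
      have hmem : ((true, t) : Bool × γ) ∈ M ++ ([] : List (Bool × γ)) := by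
        rw [List.append_nil, this]
        exact List.mem_append_right _ (List.mem_replicate.2 ⟨hj0, rfl⟩)
      simpa using hmem
    have := hM _ this
    simp at this
  subst hj
  simp only [List.replicate_zero, List.append_nil] at hp
  have hm1 : 1 ≤ m := by omega
  have hk : k = m - 1 := by omega
  subst hk
  refine ⟨hm1, ?_⟩
  have hCn : treduce (C ++ List.replicate n (false, t)) = M := by rw [← hp, ← hup, hu]
  have hrest : treduce (List.replicate (m - 1) (true, t) ++ D) = T := by
    rw [← hs, ← hvs, hv]
  have hshape : C ++ (List.replicate (n + 1) (false, t) ++ List.replicate (m - 1) (true, t)) ++ D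
      = (C ++ List.replicate n (false, t)) ++ ((false, t) :: (List.replicate (m - 1) (true, t) ++ D)) := by
    rw [List.replicate_succ' (n := n) (a := (false, t))]
    simp [List.append_assoc]
  rw [hshape, treduce_append, hCn, treduce_cons, hrest]
  rw [tstep_false, foldr_tstep_allF hM]

/-- Surgery lemma: flipping the unique plus, block shape `T^m F^n`, `m ≤ 1`. -/
lemma surgery_TF_plus {C D M T : List (Bool × γ)} {t : γ} {n m : ℕ} (hm : m ≤ 1)
    (hred : treduce (C ++ (List.replicate m (true, t) ++ List.replicate n (false, t)) ++ D)
      = M ++ (true, t) :: T)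
    (hM : ∀ x ∈ M, x.1 = false) (hT : ∀ x ∈ T, x.1 = true)
    (hC : ((true, t) : Bool × γ) ∉ C) (hD : ((true, t) : Bool × γ) ∉ D) :
    m = 1 ∧ n = 0 ∧ treduce (C ++ [((false, t) : Bool × γ)] ++ D) = M ++ (false, t) :: T := by
  obtain ⟨u, v, hw, hu, hv⟩ := split_plus hred hM
  obtain ⟨p, s, hmps, hup, hvs⟩ := split3 C _ D u v (true, t) hw hC hD
  obtain ⟨hm1, hp, hs⟩ := rep_split_plus_TF hm hmps
  have hn0 : n = 0 := by
    by_contra hn0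
    have hvT : treduce v = List.replicate n (false, t) ++ treduce D := by
      rw [hvs, hs, treduce_repF_append]
    rw [hv] at hvT
    have : ((false, t) : Bool × γ) ∈ T := by
      rw [hvT]
      exact List.mem_append_left _ (List.mem_replicate.2 ⟨hn0, rfl⟩)
    have := hT _ this
    simp at this
  subst hn0
  simp only [List.replicate_zero] at hs
  subst hs
  simp only [List.nil_append] at hvs
  subst hp
  simp only [List.append_nil] at hup
  refine ⟨hm1, rfl, ?_⟩
  have hCM : treduce C = M := by rw [← hup, hu]
  have hDT : treduce D = T := by rw [← hvs, hv]
  have hshape : C ++ [((false, t) : Bool × γ)] ++ D = C ++ ((false, t) :: D) := by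
    simp
  rw [hshape, treduce_append, hCM, treduce_cons, hDT, tstep_false, foldr_tstep_allF hM]

/-- Surgery lemma: flipping the last unmatched minus, block shape `F^n T^m`. -/
lemma surgery_FT_minus {C D M T : List (Bool × γ)} {t : γ} {n m : ℕ}
    (hred : treduce (C ++ (List.replicate n (false, t) ++ List.replicate m (true, t)) ++ D)
      = M ++ (false, t) :: T)
    (hM : ∀ x ∈ M, x.1 = false) (hT : ∀ x ∈ T, x.1 = true)
    (hC : ((false, t) : Bool × γ) ∉ C) (hD : ((false, t) : Bool × γ) ∉ D) :
    1 ≤ n ∧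
    treduce (C ++ (List.replicate (n - 1) (false, t) ++ List.replicate (m + 1) (true, t)) ++ D)
      = M ++ (true, t) :: T := by
  obtain ⟨u, v, hw, hu, hv⟩ := split_minus hred hT
  obtain ⟨p, s, hm, hup, hvs⟩ := split3 C _ D u v (false, t) hw hC hD
  obtain ⟨j, k, hnjk, hp, hs⟩ := rep_split_minus hm
  have hk : k = 0 := by
    by_contra hk0
    have hvT : treduce v = List.replicate k (false, t) ++
        treduce (List.replicate m (true, t) ++ D) := by
      rw [hvs, hs, List.append_assoc, treduce_repF_append]
    rw [hv] at hvT
    have : ((false, t) : Bool × γ) ∈ T := by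
      rw [hvT]
      exact List.mem_append_left _ (List.mem_replicate.2 ⟨hk0, rfl⟩)
    have := hT _ this
    simp at this
  subst hk
  simp only [List.replicate_zero, List.nil_append] at hs
  subst hs
  have hn1 : 1 ≤ n := by omega
  have hj : j = n - 1 := by omega
  subst hj
  refine ⟨hn1, ?_⟩
  have hCn : treduce (C ++ List.replicate (n - 1) (false, t)) = M := by
    rw [← hp, ← hup, hu]
  have hrest : treduce (List.replicate m (true, t) ++ D) = T := by rw [← hvs, hv]
  have hshape : C ++ (List.replicate (n - 1) (false, t) ++ List.replicate (m + 1) (true, t)) ++ D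
      = (C ++ List.replicate (n - 1) (false, t)) ++ ((true, t) :: (List.replicate m (true, t) ++ D)) := by
    rw [List.replicate_succ]
    simp [List.append_assoc]
  rw [hshape, treduce_append, hCn, treduce_cons, hrest, tstep_cons_of_allT t hT,
    foldr_tstep_allF hM]

/-- Surgery lemma: flipping the unique minus, block shape `T^m F^n`, `n ≤ 1`. -/
lemma surgery_TF_minus {C D M T : List (Bool × γ)} {t : γ} {n m : ℕ} (hn : n ≤ 1)
    (hred : treduce (C ++ (List.replicate m (true, t) ++ List.replicate n (false, t)) ++ D)
      = M ++ (false, t) :: T)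
    (hM : ∀ x ∈ M, x.1 = false) (hT : ∀ x ∈ T, x.1 = true)
    (hC : ((false, t) : Bool × γ) ∉ C) (hD : ((false, t) : Bool × γ) ∉ D) :
    n = 1 ∧ m = 0 ∧ treduce (C ++ [((true, t) : Bool × γ)] ++ D) = M ++ (true, t) :: T := by
  obtain ⟨u, v, hw, hu, hv⟩ := split_minus hred hT
  obtain ⟨p, s, hmps, hup, hvs⟩ := split3 C _ D u v (false, t) hw hC hD
  obtain ⟨hn1, hp, hs⟩ := rep_split_minus_TF hn hmps
  have hm0 : m = 0 := by
    by_contra hm0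
    have huM : treduce u = treduce C ++ List.replicate m (true, t) := by
      rw [hup, hp, treduce_append_repT]
    rw [hu] at huM
    have : ((true, t) : Bool × γ) ∈ M := by
      rw [huM]
      exact List.mem_append_right _ (List.mem_replicate.2 ⟨hm0, rfl⟩)
    have := hM _ this
    simp at this
  subst hm0
  simp only [List.replicate_zero] at hp
  subst hp
  simp only [List.append_nil] at hup
  subst hs
  simp only [List.nil_append] at hvs
  refine ⟨hn1, rfl, ?_⟩
  have hCM : treduce C = M := by rw [← hup, hu]
  have hDT : treduce D = T := by rw [← hvs, hv]
  have hshape : C ++ [((true, t) : Bool × γ)] ++ D = C ++ ((true, t) :: D) := by simp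
  rw [hshape, treduce_append, hCM, treduce_cons, hDT, tstep_cons_of_allT t hT,
    foldr_tstep_allF hM]

end WordLemmas

section TableauLemmas

variable {parA : A → Bool} {parB : B → Bool}

/-- the relation of a super row -/
abbrev srowRel {α : Type*} [LinearOrder α] (par : α → Bool) (x y : α) : Prop :=
  x < y ∨ (x = y ∧ par x = false)

lemma srowRel_trans {α : Type*} [LinearOrder α] (par : α → Bool) :
    Transitive (srowRel par) := by
  rintro x y z (h1 | ⟨rfl, h1⟩) (h2 | ⟨rfl, h2⟩)
  · exact Or.inl (h1.trans h2)
  · exact Or.inl h1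
  · exact Or.inl h2
  · exact Or.inr ⟨rfl, h1⟩

lemma isSuperRow_iff_pairwise {α : Type*} [LinearOrder α] {par : α → Bool} {l : List α} :
    IsSuperRow par l ↔ l.Pairwise (srowRel par) := by
  haveI : IsTrans α (srowRel par) := ⟨fun a b c hab hbc => srowRel_trans par hab hbc⟩
  exact List.isChain_iff_pairwise

lemma IsSuperRow.sorted {α : Type*} [LinearOrder α] {par : α → Bool} {l : List α}
    (h : IsSuperRow par l) : l.Pairwise (· ≤ ·) := by
  rw [isSuperRow_iff_pairwise] at h
  exact h.imp (by rintro a b (h | ⟨rfl, _⟩); exacts [le_of_lt h, le_refl a])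

lemma IsSuperRow.count_le_one {α : Type*} [LinearOrder α] {par : α → Bool} {l : List α}
    (h : IsSuperRow par l) {a : α} (ha : par a = true) : l.count a ≤ 1 := by
  by_contra hc
  have hd : l.Duplicate a := List.duplicate_iff_two_le_count.2 (by omega)
  have hsub : List.Sublist [a, a] l := List.duplicate_iff_sublist.1 hd
  rw [isSuperRow_iff_pairwise] at h
  have := h.sublist hsub
  rcases (List.pairwise_cons.1 this).1 a (List.mem_singleton_self a) with h' | ⟨_, h'⟩
  · exact absurd h' (lt_irrefl a)
  · rw [ha] at h'; simp at h'

lemma IsSuperRow.erase {α : Type*} [LinearOrder α] {par : α → Bool} {l : List α}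
    (h : IsSuperRow par l) (a : α) : IsSuperRow par (l.erase a) := by
  rw [isSuperRow_iff_pairwise] at h ⊢
  exact h.sublist (List.erase_sublist (a := a) (l := l))

lemma srowRel_le {α : Type*} [LinearOrder α] {par : α → Bool} {x y : α}
    (h : srowRel par x y) : x ≤ y := by
  rcases h with h | ⟨rfl, _⟩
  · exact le_of_lt h
  · exact le_refl x

lemma IsSuperRow.orderedInsert {α : Type*} [LinearOrder α] {par : α → Bool} {l : List α}
    (h : IsSuperRow par l) {a : α} (ha : par a = false ∨ a ∉ l) :
    IsSuperRow par (List.orderedInsert (· ≤ ·) a l) := by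
  rw [isSuperRow_iff_pairwise] at h ⊢
  induction l with
  | nil => simp [List.orderedInsert]
  | cons b t ih =>
    rw [List.orderedInsert]
    by_cases hab : a ≤ b
    · rw [if_pos hab]
      refine List.pairwise_cons.2 ⟨?_, h⟩
      intro y hy
      have hay : a ≤ y := by
        rcases List.mem_cons.1 hy with rfl | hyt
        · exact hab
        · exact hab.trans (srowRel_le ((List.pairwise_cons.1 h).1 y hyt))
      rcases lt_or_eq_of_le hay with hlt | heq
      · exact Or.inl hlt
      · refine Or.inr ⟨heq, ?_⟩
        rcases ha with hpar | hnotmem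
        · exact hpar
        · exact absurd (heq ▸ hy) hnotmem
    · rw [if_neg hab]
      push_neg at hab
      refine List.pairwise_cons.2 ⟨?_, ?_⟩
      · intro y hy
        rcases (List.mem_orderedInsert _).1 hy with rfl | hyt
        · exact Or.inl hab
        · exact (List.pairwise_cons.1 h).1 y hyt
      · exact ih (List.pairwise_cons.1 h).2
          (by rcases ha with hp | hm
              exacts [Or.inl hp, Or.inr (fun hc => hm (List.mem_cons_of_mem _ hc))])

lemma sortDedup_congr {α : Type*} [LinearOrder α] {l₁ l₂ : List α}
    (h : ∀ x, x ∈ l₁ ↔ x ∈ l₂) :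
    List.insertionSort (· ≤ ·) l₁.dedup = List.insertionSort (· ≤ ·) l₂.dedup := by
  apply (fun hp h1 h2 => List.Perm.eq_of_pairwise' (r := (· ≤ · : α → α → Prop)) h1 h2 hp)
  · refine (List.perm_insertionSort _ _).trans
      (List.Perm.trans ?_ (List.perm_insertionSort (· ≤ ·) l₂.dedup).symm)
    refine (List.perm_ext_iff_of_nodup l₁.nodup_dedup l₂.nodup_dedup).2 ?_
    intro x
    rw [List.mem_dedup, List.mem_dedup]
    exact h x
  · exact List.pairwise_insertionSort _ _
  · exact List.pairwise_insertionSort _ _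

lemma tblockA_snd (p₁ p₂ : List A) (a : A) :
    ∀ x ∈ tblockA (B := B) parA p₁ p₂ a, x.2 = Sum.inl a := by
  intro x hx
  unfold tblockA at hx
  split at hx <;>
  · rcases List.mem_append.1 hx with h | h <;>
    · rw [List.eq_of_mem_replicate h]

lemma tblockB_snd (q₁ q₂ : List B) (b : B) :
    ∀ x ∈ tblockB (A := A) parB q₁ q₂ b, x.2 = Sum.inr b := by
  intro x hx
  unfold tblockB at hx
  split at hx <;>
  · rcases List.mem_append.1 hx with h | h <;>
    · rw [List.eq_of_mem_replicate h]

lemma tblockA_congr {p₁ p₂ p₁' p₂' : List A} {c : A}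
    (h1 : p₁'.count c = p₁.count c) (h2 : p₂'.count c = p₂.count c) :
    tblockA (B := B) parA p₁' p₂' c = tblockA (B := B) parA p₁ p₂ c := by
  unfold tblockA
  rw [h1, h2]

lemma tblockB_congr {q₁ q₂ q₁' q₂' : List B} {c : B}
    (h1 : q₁'.count c = q₁.count c) (h2 : q₂'.count c = q₂.count c) :
    tblockB (A := A) parB q₁' q₂' c = tblockB (A := A) parB q₁ q₂ c := by
  unfold tblockB
  rw [h1, h2]

/-- Decomposition of the sign sequence at the block of a letter `a ∈ A`,
stable under modifications of `p₁, p₂` that fix all other letters. -/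
lemma wordA_decomp (p₁ p₂ : List A) (q₁ q₂ : List B) {a : A} (ha : a ∈ p₁ ++ p₂) :
    ∃ C D : List (Bool × (A ⊕ B)),
      (∀ x ∈ C, x.2 ≠ Sum.inl a) ∧ (∀ x ∈ D, x.2 ≠ Sum.inl a) ∧
      ∀ p₁' p₂' : List A,
        (∀ c, c ≠ a → p₁'.count c = p₁.count c) →
        (∀ c, c ≠ a → p₂'.count c = p₂.count c) →
        (∀ y, y ∈ p₁' ++ p₂' ↔ y ∈ p₁ ++ p₂) →
        tsignSeq parA parB (p₁', q₁) (p₂', q₂) = C ++ tblockA parA p₁' p₂' a ++ D := by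
  classical
  set L : List A := (List.insertionSort (· ≤ ·) (p₁ ++ p₂).dedup).reverse with hL
  have haL : a ∈ L := by
    rw [hL, List.mem_reverse, List.mem_insertionSort, List.mem_dedup]
    exact ha
  have hnodup : L.Nodup := by
    rw [hL]
    exact List.nodup_reverse.2 (((p₁ ++ p₂).nodup_dedup).perm (List.perm_insertionSort _ _).symm)
  obtain ⟨L₁, L₂, hL12⟩ := List.append_of_mem haL
  have hnd := hL12 ▸ hnodup
  have haL₁ : a ∉ L₁ := by
    intro hc
    rw [List.nodup_append] at hnd
    exact hnd.2.2 _ hc _ List.mem_cons_self rfl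
  have haL₂ : a ∉ L₂ := by
    rw [List.nodup_append] at hnd
    exact (List.nodup_cons.1 hnd.2.1).1
  refine ⟨L₁.flatMap (tblockA parA p₁ p₂),
    L₂.flatMap (tblockA parA p₁ p₂) ++
      ((List.insertionSort (· ≤ ·) (q₁ ++ q₂).dedup).flatMap (tblockB parB q₁ q₂)),
    ?_, ?_, ?_⟩
  · intro x hx
    obtain ⟨c, hc, hxc⟩ := List.mem_flatMap.1 hx
    rw [tblockA_snd p₁ p₂ c x hxc]
    intro hcon
    exact haL₁ (Sum.inl_injective hcon ▸ hc)
  · intro x hx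
    rcases List.mem_append.1 hx with h | h
    · obtain ⟨c, hc, hxc⟩ := List.mem_flatMap.1 h
      rw [tblockA_snd p₁ p₂ c x hxc]
      intro hcon
      exact haL₂ (Sum.inl_injective hcon ▸ hc)
    · obtain ⟨c, _, hxc⟩ := List.mem_flatMap.1 h
      rw [tblockB_snd q₁ q₂ c x hxc]
      simp
  · intro p₁' p₂' hc1 hc2 hmem
    have hL' : (List.insertionSort (· ≤ ·) (p₁' ++ p₂').dedup).reverse = L := by
      rw [hL]
      congr 1
      exact sortDedup_congr hmem
    unfold tsignSeq
    rw [hL', hL12, List.flatMap_append, List.flatMap_cons]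
    have e1 : L₁.flatMap (tblockA (B := B) parA p₁' p₂') =
        L₁.flatMap (tblockA parA p₁ p₂) := by
      apply List.flatMap_congr
      intro c hcin
      exact tblockA_congr (hc1 c (fun h => haL₁ (h ▸ hcin)))
        (hc2 c (fun h => haL₁ (h ▸ hcin)))
    have e2 : L₂.flatMap (tblockA (B := B) parA p₁' p₂') =
        L₂.flatMap (tblockA parA p₁ p₂) := by
      apply List.flatMap_congr
      intro c hcin
      exact tblockA_congr (hc1 c (fun h => haL₂ (h ▸ hcin)))
        (hc2 c (fun h => haL₂ (h ▸ hcin)))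
    rw [e1, e2]
    simp [List.append_assoc]

/-- Decomposition of the sign sequence at the block of a letter `b ∈ B`. -/
lemma wordB_decomp (p₁ p₂ : List A) (q₁ q₂ : List B) {b : B} (hb : b ∈ q₁ ++ q₂) :
    ∃ C D : List (Bool × (A ⊕ B)),
      (∀ x ∈ C, x.2 ≠ Sum.inr b) ∧ (∀ x ∈ D, x.2 ≠ Sum.inr b) ∧
      ∀ q₁' q₂' : List B,
        (∀ c, c ≠ b → q₁'.count c = q₁.count c) →
        (∀ c, c ≠ b → q₂'.count c = q₂.count c) →
        (∀ y, y ∈ q₁' ++ q₂' ↔ y ∈ q₁ ++ q₂) →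
        tsignSeq parA parB (p₁, q₁') (p₂, q₂') = C ++ tblockB parB q₁' q₂' b ++ D := by
  classical
  set L : List B := List.insertionSort (· ≤ ·) (q₁ ++ q₂).dedup with hL
  have hbL : b ∈ L := by
    rw [hL, List.mem_insertionSort, List.mem_dedup]
    exact hb
  have hnodup : L.Nodup := by
    rw [hL]
    exact ((q₁ ++ q₂).nodup_dedup).perm (List.perm_insertionSort _ _).symm
  obtain ⟨L₁, L₂, hL12⟩ := List.append_of_mem hbL
  have hnd := hL12 ▸ hnodup
  have hbL₁ : b ∉ L₁ := by
    intro hc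
    rw [List.nodup_append] at hnd
    exact hnd.2.2 _ hc _ List.mem_cons_self rfl
  have hbL₂ : b ∉ L₂ := by
    rw [List.nodup_append] at hnd
    exact (List.nodup_cons.1 hnd.2.1).1
  refine ⟨((List.insertionSort (· ≤ ·) (p₁ ++ p₂).dedup).reverse.flatMap
      (tblockA parA p₁ p₂)) ++ L₁.flatMap (tblockB parB q₁ q₂),
    L₂.flatMap (tblockB parB q₁ q₂), ?_, ?_, ?_⟩
  · intro x hx
    rcases List.mem_append.1 hx with h | h
    · obtain ⟨c, _, hxc⟩ := List.mem_flatMap.1 h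
      rw [tblockA_snd p₁ p₂ c x hxc]
      simp
    · obtain ⟨c, hc, hxc⟩ := List.mem_flatMap.1 h
      rw [tblockB_snd q₁ q₂ c x hxc]
      intro hcon
      exact hbL₁ (Sum.inr_injective hcon ▸ hc)
  · intro x hx
    obtain ⟨c, hc, hxc⟩ := List.mem_flatMap.1 hx
    rw [tblockB_snd q₁ q₂ c x hxc]
    intro hcon
    exact hbL₂ (Sum.inr_injective hcon ▸ hc)
  · intro q₁' q₂' hc1 hc2 hmem
    have hL' : List.insertionSort (· ≤ ·) (q₁' ++ q₂').dedup = L := by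
      rw [hL]
      exact sortDedup_congr hmem
    unfold tsignSeq
    rw [hL', hL12, List.flatMap_append, List.flatMap_cons]
    have e1 : L₁.flatMap (tblockB (A := A) parB q₁' q₂') =
        L₁.flatMap (tblockB parB q₁ q₂) := by
      apply List.flatMap_congr
      intro c hcin
      exact tblockB_congr (hc1 c (fun h => hbL₁ (h ▸ hcin)))
        (hc2 c (fun h => hbL₁ (h ▸ hcin)))
    have e2 : L₂.flatMap (tblockB (A := A) parB q₁' q₂') =
        L₂.flatMap (tblockB parB q₁ q₂) := by
      apply List.flatMap_congr
      intro c hcin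
      exact tblockB_congr (hc1 c (fun h => hbL₂ (h ▸ hcin)))
        (hc2 c (fun h => hbL₂ (h ▸ hcin)))
    rw [e1, e2]
    simp [List.append_assoc]

end TableauLemmas


section StepLemmas

variable {parA : A → Bool} {parB : B → Bool}

/-- all four rows of a pair of tableaux are super rows -/
def SRows (parA : A → Bool) (parB : B → Bool)
    (P : (List A × List B) × (List A × List B)) : Prop :=
  IsSuperRow parA P.1.1 ∧ IsSuperRow parB P.1.2 ∧
    IsSuperRow parA P.2.1 ∧ IsSuperRow parB P.2.2

lemma count_pos_of_mem_word_inl {p₁ p₂ : List A} {q₁ q₂ : List B} {bb : Bool} {a : A}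
    (hx : ((bb, Sum.inl a) : Bool × (A ⊕ B)) ∈ tsignSeq parA parB (p₁, q₁) (p₂, q₂)) :
    (bb = true → 0 < p₁.count a) ∧ (bb = false → 0 < p₂.count a) := by
  unfold tsignSeq at hx
  rcases List.mem_append.1 hx with h | h
  · obtain ⟨c, _, hxc⟩ := List.mem_flatMap.1 h
    have hca : a = c := Sum.inl_injective (tblockA_snd _ _ c _ hxc)
    subst hca
    unfold tblockA at hxc
    split at hxc <;>
      rcases List.mem_append.1 hxc with h' | h' <;>
      · have := List.mem_replicate.1 h'
        constructor <;> intro hbb <;> subst hbb <;>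
          first
            | (exact Nat.pos_of_ne_zero this.1)
            | (exfalso; exact absurd (congrArg Prod.fst this.2) (by simp))
  · obtain ⟨c, _, hxc⟩ := List.mem_flatMap.1 h
    have := tblockB_snd (parB := parB) _ _ c _ hxc
    simp at this

lemma count_pos_of_mem_word_inr {p₁ p₂ : List A} {q₁ q₂ : List B} {bb : Bool} {b : B}
    (hx : ((bb, Sum.inr b) : Bool × (A ⊕ B)) ∈ tsignSeq parA parB (p₁, q₁) (p₂, q₂)) :
    (bb = true → 0 < q₂.count b) ∧ (bb = false → 0 < q₁.count b) := by
  unfold tsignSeq at hx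
  rcases List.mem_append.1 hx with h | h
  · obtain ⟨c, _, hxc⟩ := List.mem_flatMap.1 h
    have := tblockA_snd (parA := parA) (B := B) _ _ c _ hxc
    simp at this
  · obtain ⟨c, _, hxc⟩ := List.mem_flatMap.1 h
    have hcb : b = c := Sum.inr_injective (tblockB_snd _ _ c _ hxc)
    subst hcb
    unfold tblockB at hxc
    split at hxc <;>
      rcases List.mem_append.1 hxc with h' | h' <;>
      · have := List.mem_replicate.1 h'
        constructor <;> intro hbb <;> subst hbb <;>
          first
            | (exact Nat.pos_of_ne_zero this.1)
            | (exfalso; exact absurd (congrArg Prod.fst this.2) (by simp))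

lemma step_plus {P : (List A × List B) × (List A × List B)}
    (hsr : SRows parA parB P)
    {M T : List (Bool × (A ⊕ B))} {y : A ⊕ B}
    (hred : treduce (tsignSeq parA parB P.1 P.2) = M ++ (true, y) :: T)
    (hM : ∀ x ∈ M, x.1 = false) (hT : ∀ x ∈ T, x.1 = true) :
    SRows parA parB (movePlus P y) ∧
    treduce (tsignSeq parA parB (movePlus P y).1 (movePlus P y).2) = M ++ (false, y) :: T ∧
    moveMinus (movePlus P y) y = P ∧
    ((movePlus P y).1.1 ++ (movePlus P y).2.1).Perm (P.1.1 ++ P.2.1) ∧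
    ((movePlus P y).1.2 ++ (movePlus P y).2.2).Perm (P.1.2 ++ P.2.2) ∧
    ((movePlus P y).1.1.length : ℤ) - (movePlus P y).1.2.length
      = (P.1.1.length : ℤ) - P.1.2.length - 1 ∧
    ((movePlus P y).2.1.length : ℤ) - (movePlus P y).2.2.length
      = (P.2.1.length : ℤ) - P.2.2.length + 1 := by
  classical
  obtain ⟨⟨p₁, q₁⟩, ⟨p₂, q₂⟩⟩ := P
  obtain ⟨hs₁, hs₂, hs₃, hs₄⟩ := hsr
  simp only at hs₁ hs₂ hs₃ hs₄
  have hxmem : ((true, y) : Bool × (A ⊕ B)) ∈ tsignSeq parA parB (p₁, q₁) (p₂, q₂) :=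
    treduce_subset _ _ (hred ▸ List.mem_append_right _ (List.mem_cons_self))
  cases y with
  | inl a =>
    have hcnt : 0 < p₁.count a := (count_pos_of_mem_word_inl hxmem).1 rfl
    have hap₁ : a ∈ p₁ := List.count_pos_iff.1 hcnt
    obtain ⟨C, D, hC, hD, hdec⟩ :=
      wordA_decomp (parA := parA) (parB := parB) p₁ p₂ q₁ q₂ (List.mem_append_left _ hap₁)
    have hw : tsignSeq parA parB (p₁, q₁) (p₂, q₂) = C ++ tblockA parA p₁ p₂ a ++ D :=
      hdec p₁ p₂ (fun _ _ => rfl) (fun _ _ => rfl) (fun _ => Iff.rfl)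
    have hC' : ((true, Sum.inl a) : Bool × (A ⊕ B)) ∉ C := fun hc => hC _ hc rfl
    have hD' : ((true, Sum.inl a) : Bool × (A ⊕ B)) ∉ D := fun hc => hD _ hc rfl
    have hC'' : ((false, Sum.inl a) : Bool × (A ⊕ B)) ∉ C := fun hc => hC _ hc rfl
    have hD'' : ((false, Sum.inl a) : Bool × (A ⊕ B)) ∉ D := fun hc => hD _ hc rfl
    -- new lists
    set p₁' := p₁.erase a with hp₁'
    set p₂' := List.orderedInsert (· ≤ ·) a p₂ with hp₂'
    have hc1 : ∀ c, c ≠ a → p₁'.count c = p₁.count c := by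
      intro c hca
      rw [hp₁', List.count_erase_of_ne hca]
    have hc2 : ∀ c, c ≠ a → p₂'.count c = p₂.count c := by
      intro c hca
      rw [hp₂', (List.perm_orderedInsert _ _ _).count_eq, List.count_cons_of_ne hca.symm]
    have hmemiff : ∀ z, z ∈ p₁' ++ p₂' ↔ z ∈ p₁ ++ p₂ := by
      intro z
      simp only [List.mem_append, hp₁', hp₂', List.mem_orderedInsert]
      constructor
      · rintro (h | h | h)
        · exact Or.inl ((List.erase_sublist (a := a) (l := p₁)).subset h)
        · exact Or.inl (h ▸ hap₁)
        · exact Or.inr h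
      · rintro (h | h)
        · by_cases hz : z = a
          · exact Or.inr (Or.inl hz)
          · exact Or.inl (List.mem_erase_of_ne hz |>.2 h)
        · exact Or.inr (Or.inr h)
    have hw' : tsignSeq parA parB (p₁', q₁) (p₂', q₂) = C ++ tblockA parA p₁' p₂' a ++ D :=
      hdec p₁' p₂' hc1 hc2 hmemiff
    have hcnt1' : p₁'.count a = p₁.count a - 1 := by
      rw [hp₁', List.count_erase_self]
    have hcnt2' : p₂'.count a = p₂.count a + 1 := by
      rw [hp₂', (List.perm_orderedInsert _ _ _).count_eq, List.count_cons_self]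
    -- the undo and lengths are common to both parity cases
    have hundo : moveMinus (movePlus ((p₁, q₁), (p₂, q₂)) (Sum.inl a)) (Sum.inl a)
        = ((p₁, q₁), (p₂, q₂)) := by
      show ((List.orderedInsert (· ≤ ·) a (p₁.erase a), q₁),
        ((List.orderedInsert (· ≤ ·) a p₂).erase a, q₂)) = ((p₁, q₁), (p₂, q₂))
      rw [List.orderedInsert_erase a p₁ hap₁ hs₁.sorted, List.erase_orderedInsert]
    have hlen1 : (p₁'.length : ℤ) = (p₁.length : ℤ) - 1 := by
      have := List.length_erase_add_one hap₁
      rw [hp₁']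
      omega
    have hlen2 : (p₂'.length : ℤ) = (p₂.length : ℤ) + 1 := by
      rw [hp₂', List.orderedInsert_length]
      push_cast
      ring
    have hperm1 : (p₁' ++ p₂').Perm (p₁ ++ p₂) := by
      refine ((List.Perm.append_left p₁' (List.perm_orderedInsert _ _ _)).trans ?_)
      refine (List.perm_middle).trans ?_
      exact (List.perm_cons_erase hap₁).symm.append_right p₂
    -- case on parity
    by_cases hpar : parA a = true
    · have hble : tblockA (B := B) parA p₁ p₂ a =
          List.replicate (p₁.count a) (true, Sum.inl a) ++
            List.replicate (p₂.count a) (false, Sum.inl a) := by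
        unfold tblockA
        rw [if_pos hpar]
      rw [hw, hble] at hred
      obtain ⟨hm1, hn0, hred'⟩ := surgery_TF_plus (hs₁.count_le_one hpar) hred hM hT hC' hD'
      have hnotp₂ : a ∉ p₂ := List.count_eq_zero.1 hn0
      have hble' : tblockA (B := B) parA p₁' p₂' a = [(false, Sum.inl a)] := by
        unfold tblockA
        rw [if_pos hpar, hcnt1', hcnt2', hm1, hn0]
        rfl
      refine ⟨⟨hs₁.erase a, hs₂, hs₃.orderedInsert (Or.inr hnotp₂), hs₄⟩, ?_, hundo, ?_, ?_, ?_, ?_⟩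
      · show treduce (tsignSeq parA parB (p₁', q₁) (p₂', q₂)) = _
        rw [hw', hble']
        exact hred'
      · exact hperm1
      · exact List.Perm.refl _
      · show (p₁'.length : ℤ) - (q₁.length : ℤ) = _
        rw [hlen1]; push_cast; ring
      · show (p₂'.length : ℤ) - (q₂.length : ℤ) = _
        rw [hlen2]; push_cast; ring
    · have hpar' : parA a = false := by
        cases h : parA a
        · rfl
        · exact absurd h hpar
      have hble : tblockA (B := B) parA p₁ p₂ a =
          List.replicate (p₂.count a) (false, Sum.inl a) ++
            List.replicate (p₁.count a) (true, Sum.inl a) := by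
        unfold tblockA
        rw [if_neg (by simp [hpar'])]
      rw [hw, hble] at hred
      obtain ⟨hm1, hred'⟩ := surgery_FT_plus hred hM hT hC' hD'
      have hble' : tblockA (B := B) parA p₁' p₂' a =
          List.replicate (p₂.count a + 1) (false, Sum.inl a) ++
            List.replicate (p₁.count a - 1) (true, Sum.inl a) := by
        unfold tblockA
        rw [if_neg (by simp [hpar']), hcnt1', hcnt2']
      refine ⟨⟨hs₁.erase a, hs₂, hs₃.orderedInsert (Or.inl hpar'), hs₄⟩, ?_, hundo, ?_, ?_, ?_, ?_⟩
      · show treduce (tsignSeq parA parB (p₁', q₁) (p₂', q₂)) = _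
        rw [hw', hble']
        exact hred'
      · exact hperm1
      · exact List.Perm.refl _
      · show (p₁'.length : ℤ) - (q₁.length : ℤ) = _
        rw [hlen1]; push_cast; ring
      · show (p₂'.length : ℤ) - (q₂.length : ℤ) = _
        rw [hlen2]; push_cast; ring
  | inr b =>
    have hcnt : 0 < q₂.count b := (count_pos_of_mem_word_inr hxmem).1 rfl
    have hbq₂ : b ∈ q₂ := List.count_pos_iff.1 hcnt
    obtain ⟨C, D, hC, hD, hdec⟩ :=
      wordB_decomp (parA := parA) (parB := parB) p₁ p₂ q₁ q₂ (List.mem_append_right _ hbq₂)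
    have hw : tsignSeq parA parB (p₁, q₁) (p₂, q₂) = C ++ tblockB parB q₁ q₂ b ++ D :=
      hdec q₁ q₂ (fun _ _ => rfl) (fun _ _ => rfl) (fun _ => Iff.rfl)
    have hC' : ((true, Sum.inr b) : Bool × (A ⊕ B)) ∉ C := fun hc => hC _ hc rfl
    have hD' : ((true, Sum.inr b) : Bool × (A ⊕ B)) ∉ D := fun hc => hD _ hc rfl
    set q₁' := List.orderedInsert (· ≤ ·) b q₁ with hq₁'
    set q₂' := q₂.erase b with hq₂'
    have hc1 : ∀ c, c ≠ b → q₁'.count c = q₁.count c := by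
      intro c hcb
      rw [hq₁', (List.perm_orderedInsert _ _ _).count_eq, List.count_cons_of_ne hcb.symm]
    have hc2 : ∀ c, c ≠ b → q₂'.count c = q₂.count c := by
      intro c hcb
      rw [hq₂', List.count_erase_of_ne hcb]
    have hmemiff : ∀ z, z ∈ q₁' ++ q₂' ↔ z ∈ q₁ ++ q₂ := by
      intro z
      simp only [List.mem_append, hq₁', hq₂', List.mem_orderedInsert]
      constructor
      · rintro ((h | h) | h)
        · exact Or.inr (h ▸ hbq₂)
        · exact Or.inl h
        · exact Or.inr ((List.erase_sublist (a := b) (l := q₂)).subset h)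
      · rintro (h | h)
        · exact Or.inl (Or.inr h)
        · by_cases hz : z = b
          · exact Or.inl (Or.inl hz)
          · exact Or.inr (List.mem_erase_of_ne hz |>.2 h)
    have hw' : tsignSeq parA parB (p₁, q₁') (p₂, q₂') = C ++ tblockB parB q₁' q₂' b ++ D :=
      hdec q₁' q₂' hc1 hc2 hmemiff
    have hcnt1' : q₁'.count b = q₁.count b + 1 := by
      rw [hq₁', (List.perm_orderedInsert _ _ _).count_eq, List.count_cons_self]
    have hcnt2' : q₂'.count b = q₂.count b - 1 := by
      rw [hq₂', List.count_erase_self]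
    have hundo : moveMinus (movePlus ((p₁, q₁), (p₂, q₂)) (Sum.inr b)) (Sum.inr b)
        = ((p₁, q₁), (p₂, q₂)) := by
      show ((p₁, (List.orderedInsert (· ≤ ·) b q₁).erase b),
        (p₂, List.orderedInsert (· ≤ ·) b (q₂.erase b))) = ((p₁, q₁), (p₂, q₂))
      rw [List.orderedInsert_erase b q₂ hbq₂ hs₄.sorted, List.erase_orderedInsert]
    have hlen1 : (q₁'.length : ℤ) = (q₁.length : ℤ) + 1 := by
      rw [hq₁', List.orderedInsert_length]
      push_cast
      ring
    have hlen2 : (q₂'.length : ℤ) = (q₂.length : ℤ) - 1 := by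
      have := List.length_erase_add_one hbq₂
      rw [hq₂']
      omega
    have hperm2 : (q₁' ++ q₂').Perm (q₁ ++ q₂) := by
      refine ((List.Perm.append_right q₂' (List.perm_orderedInsert _ _ _)).trans ?_)
      show (b :: (q₁ ++ q₂.erase b)).Perm (q₁ ++ q₂)
      refine (List.perm_middle.symm.trans ?_)
      exact (List.perm_cons_erase hbq₂).symm.append_left q₁
    by_cases hpar : parB b = true
    · have hble : tblockB (A := A) parB q₁ q₂ b =
          List.replicate (q₂.count b) (true, Sum.inr b) ++
            List.replicate (q₁.count b) (false, Sum.inr b) := by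
        unfold tblockB
        rw [if_pos hpar]
      rw [hw, hble] at hred
      obtain ⟨hm1, hn0, hred'⟩ := surgery_TF_plus (hs₄.count_le_one hpar) hred hM hT hC' hD'
      have hnotq₁ : b ∉ q₁ := List.count_eq_zero.1 hn0
      have hble' : tblockB (A := A) parB q₁' q₂' b = [(false, Sum.inr b)] := by
        unfold tblockB
        rw [if_pos hpar, hcnt1', hcnt2', hm1, hn0]
        rfl
      refine ⟨⟨hs₁, hs₂.orderedInsert (Or.inr hnotq₁), hs₃, hs₄.erase b⟩, ?_, hundo, ?_, ?_, ?_, ?_⟩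
      · show treduce (tsignSeq parA parB (p₁, q₁') (p₂, q₂')) = _
        rw [hw', hble']
        exact hred'
      · exact List.Perm.refl _
      · exact hperm2
      · show (p₁.length : ℤ) - (q₁'.length : ℤ) = _
        rw [hlen1]; push_cast; ring
      · show (p₂.length : ℤ) - (q₂'.length : ℤ) = _
        rw [hlen2]; push_cast; ring
    · have hpar' : parB b = false := by
        cases h : parB b
        · rfl
        · exact absurd h hpar
      have hble : tblockB (A := A) parB q₁ q₂ b =
          List.replicate (q₁.count b) (false, Sum.inr b) ++
            List.replicate (q₂.count b) (true, Sum.inr b) := by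
        unfold tblockB
        rw [if_neg (by simp [hpar'])]
      rw [hw, hble] at hred
      obtain ⟨hm1, hred'⟩ := surgery_FT_plus hred hM hT hC' hD'
      have hble' : tblockB (A := A) parB q₁' q₂' b =
          List.replicate (q₁.count b + 1) (false, Sum.inr b) ++
            List.replicate (q₂.count b - 1) (true, Sum.inr b) := by
        unfold tblockB
        rw [if_neg (by simp [hpar']), hcnt1', hcnt2']
      refine ⟨⟨hs₁, hs₂.orderedInsert (Or.inl hpar'), hs₃, hs₄.erase b⟩, ?_, hundo, ?_, ?_, ?_, ?_⟩
      · show treduce (tsignSeq parA parB (p₁, q₁') (p₂, q₂')) = _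
        rw [hw', hble']
        exact hred'
      · exact List.Perm.refl _
      · exact hperm2
      · show (p₁.length : ℤ) - (q₁'.length : ℤ) = _
        rw [hlen1]; push_cast; ring
      · show (p₂.length : ℤ) - (q₂'.length : ℤ) = _
        rw [hlen2]; push_cast; ring

lemma step_minus {P : (List A × List B) × (List A × List B)}
    (hsr : SRows parA parB P)
    {M T : List (Bool × (A ⊕ B))} {y : A ⊕ B}
    (hred : treduce (tsignSeq parA parB P.1 P.2) = M ++ (false, y) :: T)
    (hM : ∀ x ∈ M, x.1 = false) (hT : ∀ x ∈ T, x.1 = true) :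
    SRows parA parB (moveMinus P y) ∧
    treduce (tsignSeq parA parB (moveMinus P y).1 (moveMinus P y).2) = M ++ (true, y) :: T ∧
    movePlus (moveMinus P y) y = P ∧
    ((moveMinus P y).1.1 ++ (moveMinus P y).2.1).Perm (P.1.1 ++ P.2.1) ∧
    ((moveMinus P y).1.2 ++ (moveMinus P y).2.2).Perm (P.1.2 ++ P.2.2) ∧
    ((moveMinus P y).1.1.length : ℤ) - (moveMinus P y).1.2.length
      = (P.1.1.length : ℤ) - P.1.2.length + 1 ∧
    ((moveMinus P y).2.1.length : ℤ) - (moveMinus P y).2.2.length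
      = (P.2.1.length : ℤ) - P.2.2.length - 1 := by
  classical
  obtain ⟨⟨p₁, q₁⟩, ⟨p₂, q₂⟩⟩ := P
  obtain ⟨hs₁, hs₂, hs₃, hs₄⟩ := hsr
  simp only at hs₁ hs₂ hs₃ hs₄
  have hxmem : ((false, y) : Bool × (A ⊕ B)) ∈ tsignSeq parA parB (p₁, q₁) (p₂, q₂) :=
    treduce_subset _ _ (hred ▸ List.mem_append_right _ (List.mem_cons_self))
  cases y with
  | inl a =>
    have hcnt : 0 < p₂.count a := (count_pos_of_mem_word_inl hxmem).2 rfl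
    have hap₂ : a ∈ p₂ := List.count_pos_iff.1 hcnt
    obtain ⟨C, D, hC, hD, hdec⟩ :=
      wordA_decomp (parA := parA) (parB := parB) p₁ p₂ q₁ q₂ (List.mem_append_right _ hap₂)
    have hw : tsignSeq parA parB (p₁, q₁) (p₂, q₂) = C ++ tblockA parA p₁ p₂ a ++ D :=
      hdec p₁ p₂ (fun _ _ => rfl) (fun _ _ => rfl) (fun _ => Iff.rfl)
    have hC' : ((false, Sum.inl a) : Bool × (A ⊕ B)) ∉ C := fun hc => hC _ hc rfl
    have hD' : ((false, Sum.inl a) : Bool × (A ⊕ B)) ∉ D := fun hc => hD _ hc rfl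
    set p₁' := List.orderedInsert (· ≤ ·) a p₁ with hp₁'
    set p₂' := p₂.erase a with hp₂'
    have hc1 : ∀ c, c ≠ a → p₁'.count c = p₁.count c := by
      intro c hca
      rw [hp₁', (List.perm_orderedInsert _ _ _).count_eq, List.count_cons_of_ne hca.symm]
    have hc2 : ∀ c, c ≠ a → p₂'.count c = p₂.count c := by
      intro c hca
      rw [hp₂', List.count_erase_of_ne hca]
    have hmemiff : ∀ z, z ∈ p₁' ++ p₂' ↔ z ∈ p₁ ++ p₂ := by
      intro z
      simp only [List.mem_append, hp₁', hp₂', List.mem_orderedInsert]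
      constructor
      · rintro ((h | h) | h)
        · exact Or.inr (h ▸ hap₂)
        · exact Or.inl h
        · exact Or.inr ((List.erase_sublist (a := a) (l := p₂)).subset h)
      · rintro (h | h)
        · exact Or.inl (Or.inr h)
        · by_cases hz : z = a
          · exact Or.inl (Or.inl hz)
          · exact Or.inr (List.mem_erase_of_ne hz |>.2 h)
    have hw' : tsignSeq parA parB (p₁', q₁) (p₂', q₂) = C ++ tblockA parA p₁' p₂' a ++ D :=
      hdec p₁' p₂' hc1 hc2 hmemiff
    have hcnt1' : p₁'.count a = p₁.count a + 1 := by
      rw [hp₁', (List.perm_orderedInsert _ _ _).count_eq, List.count_cons_self]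
    have hcnt2' : p₂'.count a = p₂.count a - 1 := by
      rw [hp₂', List.count_erase_self]
    have hundo : movePlus (moveMinus ((p₁, q₁), (p₂, q₂)) (Sum.inl a)) (Sum.inl a)
        = ((p₁, q₁), (p₂, q₂)) := by
      show (((List.orderedInsert (· ≤ ·) a p₁).erase a, q₁),
        (List.orderedInsert (· ≤ ·) a (p₂.erase a), q₂)) = ((p₁, q₁), (p₂, q₂))
      rw [List.orderedInsert_erase a p₂ hap₂ hs₃.sorted, List.erase_orderedInsert]
    have hlen1 : (p₁'.length : ℤ) = (p₁.length : ℤ) + 1 := by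
      rw [hp₁', List.orderedInsert_length]
      push_cast
      ring
    have hlen2 : (p₂'.length : ℤ) = (p₂.length : ℤ) - 1 := by
      have := List.length_erase_add_one hap₂
      rw [hp₂']
      omega
    have hperm1 : (p₁' ++ p₂').Perm (p₁ ++ p₂) := by
      refine ((List.Perm.append_right p₂' (List.perm_orderedInsert _ _ _)).trans ?_)
      show (a :: (p₁ ++ p₂.erase a)).Perm (p₁ ++ p₂)
      refine (List.perm_middle.symm.trans ?_)
      exact (List.perm_cons_erase hap₂).symm.append_left p₁
    by_cases hpar : parA a = true
    · have hble : tblockA (B := B) parA p₁ p₂ a =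
          List.replicate (p₁.count a) (true, Sum.inl a) ++
            List.replicate (p₂.count a) (false, Sum.inl a) := by
        unfold tblockA
        rw [if_pos hpar]
      rw [hw, hble] at hred
      obtain ⟨hn1, hm0, hred'⟩ := surgery_TF_minus (hs₃.count_le_one hpar) hred hM hT hC' hD'
      have hnotp₁ : a ∉ p₁ := List.count_eq_zero.1 hm0
      have hble' : tblockA (B := B) parA p₁' p₂' a = [(true, Sum.inl a)] := by
        unfold tblockA
        rw [if_pos hpar, hcnt1', hcnt2', hm0, hn1]
        rfl
      refine ⟨⟨hs₁.orderedInsert (Or.inr hnotp₁), hs₂, hs₃.erase a, hs₄⟩, ?_, hundo, ?_, ?_, ?_, ?_⟩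
      · show treduce (tsignSeq parA parB (p₁', q₁) (p₂', q₂)) = _
        rw [hw', hble']
        exact hred'
      · exact hperm1
      · exact List.Perm.refl _
      · show (p₁'.length : ℤ) - (q₁.length : ℤ) = _
        rw [hlen1]; push_cast; ring
      · show (p₂'.length : ℤ) - (q₂.length : ℤ) = _
        rw [hlen2]; push_cast; ring
    · have hpar' : parA a = false := by
        cases h : parA a
        · rfl
        · exact absurd h hpar
      have hble : tblockA (B := B) parA p₁ p₂ a =
          List.replicate (p₂.count a) (false, Sum.inl a) ++
            List.replicate (p₁.count a) (true, Sum.inl a) := by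
        unfold tblockA
        rw [if_neg (by simp [hpar'])]
      rw [hw, hble] at hred
      obtain ⟨hn1, hred'⟩ := surgery_FT_minus hred hM hT hC' hD'
      have hble' : tblockA (B := B) parA p₁' p₂' a =
          List.replicate (p₂.count a - 1) (false, Sum.inl a) ++
            List.replicate (p₁.count a + 1) (true, Sum.inl a) := by
        unfold tblockA
        rw [if_neg (by simp [hpar']), hcnt1', hcnt2']
      refine ⟨⟨hs₁.orderedInsert (Or.inl hpar'), hs₂, hs₃.erase a, hs₄⟩, ?_, hundo, ?_, ?_, ?_, ?_⟩
      · show treduce (tsignSeq parA parB (p₁', q₁) (p₂', q₂)) = _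
        rw [hw', hble']
        exact hred'
      · exact hperm1
      · exact List.Perm.refl _
      · show (p₁'.length : ℤ) - (q₁.length : ℤ) = _
        rw [hlen1]; push_cast; ring
      · show (p₂'.length : ℤ) - (q₂.length : ℤ) = _
        rw [hlen2]; push_cast; ring
  | inr b =>
    have hcnt : 0 < q₁.count b := (count_pos_of_mem_word_inr hxmem).2 rfl
    have hbq₁ : b ∈ q₁ := List.count_pos_iff.1 hcnt
    obtain ⟨C, D, hC, hD, hdec⟩ :=
      wordB_decomp (parA := parA) (parB := parB) p₁ p₂ q₁ q₂ (List.mem_append_left _ hbq₁)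
    have hw : tsignSeq parA parB (p₁, q₁) (p₂, q₂) = C ++ tblockB parB q₁ q₂ b ++ D :=
      hdec q₁ q₂ (fun _ _ => rfl) (fun _ _ => rfl) (fun _ => Iff.rfl)
    have hC' : ((false, Sum.inr b) : Bool × (A ⊕ B)) ∉ C := fun hc => hC _ hc rfl
    have hD' : ((false, Sum.inr b) : Bool × (A ⊕ B)) ∉ D := fun hc => hD _ hc rfl
    set q₁' := q₁.erase b with hq₁'
    set q₂' := List.orderedInsert (· ≤ ·) b q₂ with hq₂'
    have hc1 : ∀ c, c ≠ b → q₁'.count c = q₁.count c := by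
      intro c hcb
      rw [hq₁', List.count_erase_of_ne hcb]
    have hc2 : ∀ c, c ≠ b → q₂'.count c = q₂.count c := by
      intro c hcb
      rw [hq₂', (List.perm_orderedInsert _ _ _).count_eq, List.count_cons_of_ne hcb.symm]
    have hmemiff : ∀ z, z ∈ q₁' ++ q₂' ↔ z ∈ q₁ ++ q₂ := by
      intro z
      simp only [List.mem_append, hq₁', hq₂', List.mem_orderedInsert]
      constructor
      · rintro (h | h | h)
        · exact Or.inl ((List.erase_sublist (a := b) (l := q₁)).subset h)
        · exact Or.inl (h ▸ hbq₁)
        · exact Or.inr h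
      · rintro (h | h)
        · by_cases hz : z = b
          · exact Or.inr (Or.inl hz)
          · exact Or.inl (List.mem_erase_of_ne hz |>.2 h)
        · exact Or.inr (Or.inr h)
    have hw' : tsignSeq parA parB (p₁, q₁') (p₂, q₂') = C ++ tblockB parB q₁' q₂' b ++ D :=
      hdec q₁' q₂' hc1 hc2 hmemiff
    have hcnt1' : q₁'.count b = q₁.count b - 1 := by
      rw [hq₁', List.count_erase_self]
    have hcnt2' : q₂'.count b = q₂.count b + 1 := by
      rw [hq₂', (List.perm_orderedInsert _ _ _).count_eq, List.count_cons_self]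
    have hundo : movePlus (moveMinus ((p₁, q₁), (p₂, q₂)) (Sum.inr b)) (Sum.inr b)
        = ((p₁, q₁), (p₂, q₂)) := by
      show ((p₁, List.orderedInsert (· ≤ ·) b (q₁.erase b)),
        (p₂, (List.orderedInsert (· ≤ ·) b q₂).erase b)) = ((p₁, q₁), (p₂, q₂))
      rw [List.orderedInsert_erase b q₁ hbq₁ hs₂.sorted, List.erase_orderedInsert]
    have hlen1 : (q₁'.length : ℤ) = (q₁.length : ℤ) - 1 := by
      have := List.length_erase_add_one hbq₁
      rw [hq₁']
      omega
    have hlen2 : (q₂'.length : ℤ) = (q₂.length : ℤ) + 1 := by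
      rw [hq₂', List.orderedInsert_length]
      push_cast
      ring
    have hperm2 : (q₁' ++ q₂').Perm (q₁ ++ q₂) := by
      refine ((List.Perm.append_left q₁' (List.perm_orderedInsert _ _ _)).trans ?_)
      refine (List.perm_middle).trans ?_
      exact (List.perm_cons_erase hbq₁).symm.append_right q₂
    by_cases hpar : parB b = true
    · have hble : tblockB (A := A) parB q₁ q₂ b =
          List.replicate (q₂.count b) (true, Sum.inr b) ++
            List.replicate (q₁.count b) (false, Sum.inr b) := by
        unfold tblockB
        rw [if_pos hpar]
      rw [hw, hble] at hred
      obtain ⟨hn1, hm0, hred'⟩ := surgery_TF_minus (hs₂.count_le_one hpar) hred hM hT hC' hD'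
      have hnotq₂ : b ∉ q₂ := List.count_eq_zero.1 hm0
      have hble' : tblockB (A := A) parB q₁' q₂' b = [(true, Sum.inr b)] := by
        unfold tblockB
        rw [if_pos hpar, hcnt1', hcnt2', hm0, hn1]
        rfl
      refine ⟨⟨hs₁, hs₂.erase b, hs₃, hs₄.orderedInsert (Or.inr hnotq₂)⟩, ?_, hundo, ?_, ?_, ?_, ?_⟩
      · show treduce (tsignSeq parA parB (p₁, q₁') (p₂, q₂')) = _
        rw [hw', hble']
        exact hred'
      · exact List.Perm.refl _
      · exact hperm2
      · show (p₁.length : ℤ) - (q₁'.length : ℤ) = _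
        rw [hlen1]; push_cast; ring
      · show (p₂.length : ℤ) - (q₂'.length : ℤ) = _
        rw [hlen2]; push_cast; ring
    · have hpar' : parB b = false := by
        cases h : parB b
        · rfl
        · exact absurd h hpar
      have hble : tblockB (A := A) parB q₁ q₂ b =
          List.replicate (q₁.count b) (false, Sum.inr b) ++
            List.replicate (q₂.count b) (true, Sum.inr b) := by
        unfold tblockB
        rw [if_neg (by simp [hpar'])]
      rw [hw, hble] at hred
      obtain ⟨hn1, hred'⟩ := surgery_FT_minus hred hM hT hC' hD'
      have hble' : tblockB (A := A) parB q₁' q₂' b =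
          List.replicate (q₁.count b - 1) (false, Sum.inr b) ++
            List.replicate (q₂.count b + 1) (true, Sum.inr b) := by
        unfold tblockB
        rw [if_neg (by simp [hpar']), hcnt1', hcnt2']
      refine ⟨⟨hs₁, hs₂.erase b, hs₃, hs₄.orderedInsert (Or.inl hpar')⟩, ?_, hundo, ?_, ?_, ?_, ?_⟩
      · show treduce (tsignSeq parA parB (p₁, q₁') (p₂, q₂')) = _
        rw [hw', hble']
        exact hred'
      · exact List.Perm.refl _
      · exact hperm2
      · show (p₁.length : ℤ) - (q₁'.length : ℤ) = _
        rw [hlen1]; push_cast; ring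
      · show (p₂.length : ℤ) - (q₂'.length : ℤ) = _
        rw [hlen2]; push_cast; ring

lemma iter_plus : ∀ (d : ℕ) (P : (List A × List B) × (List A × List B))
    (M T : List (Bool × (A ⊕ B))),
    SRows parA parB P →
    treduce (tsignSeq parA parB P.1 P.2) = M ++ T →
    (∀ x ∈ M, x.1 = false) → (∀ x ∈ T, x.1 = true) → d ≤ T.length →
    SRows parA parB (((T.take d).map Prod.snd).foldl movePlus P) ∧
    treduce (tsignSeq parA parB (((T.take d).map Prod.snd).foldl movePlus P).1
        (((T.take d).map Prod.snd).foldl movePlus P).2)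
      = M ++ (T.take d).map (fun x => ((false, x.2) : Bool × (A ⊕ B))) ++ T.drop d ∧
    (((T.take d).map Prod.snd).reverse).foldl moveMinus
        (((T.take d).map Prod.snd).foldl movePlus P) = P ∧
    ((((T.take d).map Prod.snd).foldl movePlus P).1.1 ++
        (((T.take d).map Prod.snd).foldl movePlus P).2.1).Perm (P.1.1 ++ P.2.1) ∧
    ((((T.take d).map Prod.snd).foldl movePlus P).1.2 ++
        (((T.take d).map Prod.snd).foldl movePlus P).2.2).Perm (P.1.2 ++ P.2.2) ∧
    ((((T.take d).map Prod.snd).foldl movePlus P).1.1.length : ℤ) -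
        (((T.take d).map Prod.snd).foldl movePlus P).1.2.length
      = (P.1.1.length : ℤ) - P.1.2.length - d ∧
    ((((T.take d).map Prod.snd).foldl movePlus P).2.1.length : ℤ) -
        (((T.take d).map Prod.snd).foldl movePlus P).2.2.length
      = (P.2.1.length : ℤ) - P.2.2.length + d := by
  intro d
  induction d with
  | zero =>
    intro P M T hsr hred hM hT _
    refine ⟨hsr, ?_, rfl, List.Perm.refl _, List.Perm.refl _, ?_, ?_⟩
    · show treduce (tsignSeq parA parB P.1 P.2) = _
      rw [hred]
      simp
    · show (P.1.1.length : ℤ) - P.1.2.length = _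
      push_cast; ring
    · show (P.2.1.length : ℤ) - P.2.2.length = _
      push_cast; ring
  | succ d ih =>
    intro P M T hsr hred hM hT hd
    cases T with
    | nil => simp at hd
    | cons x T' =>
      have hx : x = (true, x.2) := by
        have := hT x (List.mem_cons_self)
        rcases x with ⟨bx, cx⟩
        simp only at this
        rw [this]
      have hred' : treduce (tsignSeq parA parB P.1 P.2) = M ++ (true, x.2) :: T' := by
        rw [hred, ← hx]
      have hT' : ∀ z ∈ T', z.1 = true := fun z hz => hT z (List.mem_cons_of_mem _ hz)
      obtain ⟨s1, s2, s3, s4, s5, s6, s7⟩ := step_plus hsr hred' hM hT'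
      have hred₁ : treduce (tsignSeq parA parB (movePlus P x.2).1 (movePlus P x.2).2)
          = (M ++ [((false, x.2) : Bool × (A ⊕ B))]) ++ T' := by
        rw [s2]; simp
      have hM₁ : ∀ z ∈ M ++ [((false, x.2) : Bool × (A ⊕ B))], z.1 = false := by
        intro z hz
        rcases List.mem_append.1 hz with h | h
        · exact hM z h
        · simp at h; rw [h]
      have hd' : d ≤ T'.length := by
        simp only [List.length_cons] at hd
        omega
      obtain ⟨i1, i2, i3, i4, i5, i6, i7⟩ := ih (movePlus P x.2) _ T' s1 hred₁ hM₁ hT' hd'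
      have hfold : ((x :: T').take (d + 1)).map Prod.snd = x.2 :: (T'.take d).map Prod.snd := by
        simp
      rw [hfold]
      simp only [List.foldl_cons, List.reverse_cons]
      refine ⟨i1, ?_, ?_, i4.trans s4, i5.trans s5, ?_, ?_⟩
      · rw [i2]
        simp [List.append_assoc]
      · rw [List.foldl_append, i3]
        simpa using s3
      · rw [i6, s6]
        push_cast
        ring
      · rw [i7, s7]
        push_cast
        ring

lemma iter_minus : ∀ (d : ℕ) (P : (List A × List B) × (List A × List B))
    (M T : List (Bool × (A ⊕ B))),
    SRows parA parB P →
    treduce (tsignSeq parA parB P.1 P.2) = M ++ T →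
    (∀ x ∈ M, x.1 = false) → (∀ x ∈ T, x.1 = true) → d ≤ M.length →
    SRows parA parB (((M.reverse.take d).map Prod.snd).foldl moveMinus P) ∧
    treduce (tsignSeq parA parB (((M.reverse.take d).map Prod.snd).foldl moveMinus P).1
        (((M.reverse.take d).map Prod.snd).foldl moveMinus P).2)
      = M.take (M.length - d) ++
        (M.drop (M.length - d)).map (fun x => ((true, x.2) : Bool × (A ⊕ B))) ++ T ∧
    (((M.reverse.take d).map Prod.snd).reverse).foldl movePlus
        (((M.reverse.take d).map Prod.snd).foldl moveMinus P) = P ∧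
    ((((M.reverse.take d).map Prod.snd).foldl moveMinus P).1.1 ++
        (((M.reverse.take d).map Prod.snd).foldl moveMinus P).2.1).Perm (P.1.1 ++ P.2.1) ∧
    ((((M.reverse.take d).map Prod.snd).foldl moveMinus P).1.2 ++
        (((M.reverse.take d).map Prod.snd).foldl moveMinus P).2.2).Perm (P.1.2 ++ P.2.2) ∧
    ((((M.reverse.take d).map Prod.snd).foldl moveMinus P).1.1.length : ℤ) -
        (((M.reverse.take d).map Prod.snd).foldl moveMinus P).1.2.length
      = (P.1.1.length : ℤ) - P.1.2.length + d ∧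
    ((((M.reverse.take d).map Prod.snd).foldl moveMinus P).2.1.length : ℤ) -
        (((M.reverse.take d).map Prod.snd).foldl moveMinus P).2.2.length
      = (P.2.1.length : ℤ) - P.2.2.length - d := by
  intro d
  induction d with
  | zero =>
    intro P M T hsr hred hM hT _
    refine ⟨hsr, ?_, rfl, List.Perm.refl _, List.Perm.refl _, ?_, ?_⟩
    · show treduce (tsignSeq parA parB P.1 P.2) = _
      rw [hred]
      simp
    · show (P.1.1.length : ℤ) - P.1.2.length = _
      push_cast; ring
    · show (P.2.1.length : ℤ) - P.2.2.length = _
      push_cast; ring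
  | succ d ih =>
    intro P M T hsr hred hM hT hd
    cases hMr : M.reverse with
    | nil =>
      rw [List.reverse_eq_nil_iff] at hMr
      subst hMr
      simp at hd
    | cons y Mr' =>
      have hM' : M = Mr'.reverse ++ [y] := by
        have := congrArg List.reverse hMr
        rw [List.reverse_reverse] at this
        rw [this]
        simp
      have hy : y = (false, y.2) := by
        have := hM y (by rw [hM']; exact List.mem_append_right _ (List.mem_singleton_self _))
        rcases y with ⟨by', cy⟩
        simp only at this
        rw [this]
      have hMall' : ∀ z ∈ Mr'.reverse, z.1 = false := by
        intro z hz
        exact hM z (by rw [hM']; exact List.mem_append_left _ hz)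
      have hred' : treduce (tsignSeq parA parB P.1 P.2) = Mr'.reverse ++ (false, y.2) :: T := by
        rw [hred, hM', ← hy]
        simp [List.append_assoc]
      obtain ⟨s1, s2, s3, s4, s5, s6, s7⟩ := step_minus hsr hred' hMall' hT
      have hT₁ : ∀ z ∈ ((true, y.2) : Bool × (A ⊕ B)) :: T, z.1 = true := by
        intro z hz
        rcases List.mem_cons.1 hz with rfl | h
        · rfl
        · exact hT z h
      have hd' : d ≤ Mr'.reverse.length := by
        have : M.length = Mr'.reverse.length + 1 := by rw [hM']; simp
        omega
      obtain ⟨i1, i2, i3, i4, i5, i6, i7⟩ :=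
        ih (moveMinus P y.2) Mr'.reverse _ s1 s2 hMall' hT₁ hd'
      simp only [List.reverse_reverse] at i1 i2 i3 i4 i5 i6 i7
      have hfold : ((y :: Mr').take (d + 1)).map Prod.snd
          = y.2 :: (Mr'.take d).map Prod.snd := by
        rw [List.take_succ_cons, List.map_cons]
      rw [hfold]
      simp only [List.foldl_cons, List.reverse_cons]
      have hlenM : M.length = Mr'.reverse.length + 1 := by rw [hM']; simp
      have hidx : M.length - (d + 1) = Mr'.reverse.length - d := by omega
      refine ⟨i1, ?_, ?_, i4.trans s4, i5.trans s5, ?_, ?_⟩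
      · rw [i2]
        have h1 : M.take (M.length - (d + 1)) = Mr'.reverse.take (Mr'.reverse.length - d) := by
          rw [hidx, hM']
          exact List.take_append_of_le_length (by omega)
        have h2 : M.drop (M.length - (d + 1)) = Mr'.reverse.drop (Mr'.reverse.length - d) ++ [y] := by
          rw [hidx, hM']
          exact List.drop_append_of_le_length (by omega)
        rw [h1, h2, List.map_append]
        simp only [List.map_cons, List.map_nil, ← hy]
        simp [List.append_assoc, ← hy]
      · rw [List.foldl_append, i3]
        simpa using s3
      · rw [i6, s6]
        push_cast
        ring
      · rw [i7, s7]
        push_cast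
        ring

end StepLemmas





section Counting

variable {parA : A → Bool} {parB : B → Bool}

lemma sum_ite_eq_zero {α : Type*} [DecidableEq α] {S : List α} {x : α} (hx : x ∉ S) :
    (S.map (fun a => if a = x then (1 : ℤ) else 0)).sum = 0 := by
  induction S with
  | nil => simp
  | cons y S' ih =>
    have hyx : y ≠ x := fun h => hx (h ▸ List.mem_cons_self)
    simp only [List.map_cons, List.sum_cons, if_neg hyx]
    rw [ih (fun h => hx (List.mem_cons_of_mem _ h))]
    ring

lemma sum_ite_eq_one {α : Type*} [DecidableEq α] {S : List α} (hS : S.Nodup) {x : α}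
    (hx : x ∈ S) : (S.map (fun a => if a = x then (1 : ℤ) else 0)).sum = 1 := by
  induction S with
  | nil => simp at hx
  | cons y S' ih =>
    rcases List.mem_cons.1 hx with rfl | hx'
    · simp only [List.map_cons, List.sum_cons, if_pos rfl]
      rw [sum_ite_eq_zero (List.nodup_cons.1 hS).1]
      norm_num
    · have hyx : y ≠ x := fun h => (List.nodup_cons.1 hS).1 (h ▸ hx')
      simp only [List.map_cons, List.sum_cons, if_neg hyx]
      rw [ih (List.nodup_cons.1 hS).2 hx']
      ring

lemma sum_map_add {α : Type*} (S : List α) (f g : α → ℤ) :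
    (S.map (fun a => f a + g a)).sum = (S.map f).sum + (S.map g).sum := by
  induction S with
  | nil => simp
  | cons y S' ih =>
    simp only [List.map_cons, List.sum_cons, ih]
    ring

lemma sum_map_sub {α : Type*} (S : List α) (f g : α → ℤ) :
    (S.map (fun a => f a - g a)).sum = (S.map f).sum - (S.map g).sum := by
  induction S with
  | nil => simp
  | cons y S' ih =>
    simp only [List.map_cons, List.sum_cons, ih]
    ring

lemma sum_count_int {α : Type*} [DecidableEq α] (l : List α) {S : List α} (hS : S.Nodup)
    (hsub : ∀ x ∈ l, x ∈ S) : (S.map (fun a => (l.count a : ℤ))).sum = l.length := by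
  induction l with
  | nil => simp
  | cons x t ih =>
    have h1 : (S.map (fun a => ((x :: t).count a : ℤ))).sum
        = (S.map (fun a => (t.count a : ℤ) + if a = x then 1 else 0)).sum := by
      congr 1
      apply List.map_congr_left
      intro a _
      rw [List.count_cons]
      by_cases hax : a = x
      · simp [hax]
      · simp [hax, Ne.symm hax]
    rw [h1, sum_map_add, ih (fun z hz => hsub z (List.mem_cons_of_mem _ hz)),
      sum_ite_eq_one hS (hsub x (List.mem_cons_self))]
    simp only [List.length_cons]
    push_cast
    ring

lemma eps_flatMap {α : Type*} {γ : Type*} (L : List α) (f : α → List (Bool × γ)) :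
    eps (L.flatMap f) = (L.map (fun c => eps (f c))).sum := by
  induction L with
  | nil => simp [eps]
  | cons y L' ih =>
    rw [List.flatMap_cons, eps_append, ih, List.map_cons, List.sum_cons]

lemma eps_replicate_true {γ : Type*} (n : ℕ) (t : γ) :
    eps (List.replicate n ((true : Bool), t)) = n := by
  rw [eps_allT (fun x hx => by rw [List.eq_of_mem_replicate hx]), List.length_replicate]

lemma eps_replicate_false {γ : Type*} (n : ℕ) (t : γ) :
    eps (List.replicate n ((false : Bool), t)) = -(n : ℤ) := by
  rw [eps_allF (fun x hx => by rw [List.eq_of_mem_replicate hx]), List.length_replicate]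

lemma eps_tblockA (p₁ p₂ : List A) (a : A) :
    eps (tblockA (B := B) parA p₁ p₂ a) = (p₁.count a : ℤ) - (p₂.count a : ℤ) := by
  unfold tblockA
  split <;>
    rw [eps_append, eps_replicate_true, eps_replicate_false] <;> ring

lemma eps_tblockB (q₁ q₂ : List B) (b : B) :
    eps (tblockB (A := A) parB q₁ q₂ b) = (q₂.count b : ℤ) - (q₁.count b : ℤ) := by
  unfold tblockB
  split <;> rw [eps_append] <;>
    first
      | (rw [eps_replicate_true, eps_replicate_false]; ring)
      | (rw [eps_replicate_false, eps_replicate_true]; ring)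

lemma eps_tsignSeq (p₁ p₂ : List A) (q₁ q₂ : List B) :
    eps (tsignSeq parA parB (p₁, q₁) (p₂, q₂))
      = ((p₁.length : ℤ) - (q₁.length : ℤ)) - ((p₂.length : ℤ) - (q₂.length : ℤ)) := by
  unfold tsignSeq
  rw [eps_append, eps_flatMap, eps_flatMap]
  have hLA : ((List.insertionSort (· ≤ ·) ((p₁, q₁).1 ++ (p₂, q₂).1).dedup).reverse).Nodup :=
    List.nodup_reverse.2 ((((p₁, q₁).1 ++ (p₂, q₂).1).nodup_dedup).perm
      (List.perm_insertionSort _ _).symm)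
  have hsubA : ∀ x ∈ p₁ ++ p₂,
      x ∈ (List.insertionSort (· ≤ ·) ((p₁, q₁).1 ++ (p₂, q₂).1).dedup).reverse := by
    intro x hx
    rw [List.mem_reverse, List.mem_insertionSort, List.mem_dedup]
    exact hx
  have hLB : (List.insertionSort (· ≤ ·) ((p₁, q₁).2 ++ (p₂, q₂).2).dedup).Nodup :=
    (((p₁, q₁).2 ++ (p₂, q₂).2).nodup_dedup).perm (List.perm_insertionSort _ _).symm
  have hsubB : ∀ x ∈ q₁ ++ q₂,
      x ∈ List.insertionSort (· ≤ ·) ((p₁, q₁).2 ++ (p₂, q₂).2).dedup := by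
    intro x hx
    rw [List.mem_insertionSort, List.mem_dedup]
    exact hx
  have eA : (((List.insertionSort (· ≤ ·) ((p₁, q₁).1 ++ (p₂, q₂).1).dedup).reverse).map
      (fun c => eps (tblockA (B := B) parA (p₁, q₁).1 (p₂, q₂).1 c))).sum
      = (p₁.length : ℤ) - (p₂.length : ℤ) := by
    have h1 : ∀ c, eps (tblockA (B := B) parA p₁ p₂ c)
        = (p₁.count c : ℤ) - (p₂.count c : ℤ) := eps_tblockA p₁ p₂
    simp only at *
    rw [List.map_congr_left (fun c _ => h1 c), sum_map_sub,
      sum_count_int p₁ hLA (fun z hz => hsubA z (List.mem_append_left _ hz)),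
      sum_count_int p₂ hLA (fun z hz => hsubA z (List.mem_append_right _ hz))]
  have eB : (((List.insertionSort (· ≤ ·) ((p₁, q₁).2 ++ (p₂, q₂).2).dedup)).map
      (fun c => eps (tblockB (A := A) parB (p₁, q₁).2 (p₂, q₂).2 c))).sum
      = (q₂.length : ℤ) - (q₁.length : ℤ) := by
    have h1 : ∀ c, eps (tblockB (A := A) parB q₁ q₂ c)
        = (q₂.count c : ℤ) - (q₁.count c : ℤ) := eps_tblockB q₁ q₂
    simp only at *
    rw [List.map_congr_left (fun c _ => h1 c), sum_map_sub,
      sum_count_int q₂ hLB (fun z hz => hsubB z (List.mem_append_right _ hz)),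
      sum_count_int q₁ hLB (fun z hz => hsubB z (List.mem_append_left _ hz))]
  simp only at eA eB
  rw [eA, eB]
  ring

lemma eps_shape {M T : List (Bool × (A ⊕ B))}
    (hM : ∀ x ∈ M, x.1 = false) (hT : ∀ x ∈ T, x.1 = true) :
    eps (M ++ T) = (T.length : ℤ) - (M.length : ℤ) := by
  rw [eps_append, eps_allF hM, eps_allT hT]
  ring

lemma filterT {M T : List (Bool × (A ⊕ B))}
    (hM : ∀ x ∈ M, x.1 = false) (hT : ∀ x ∈ T, x.1 = true) :
    (M ++ T).filter (fun x => x.1 = true) = T := by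
  rw [List.filter_append, List.filter_eq_nil_iff.2 (by intro x hx; simp [hM x hx]),
    List.filter_eq_self.2 (by intro x hx; simp [hT x hx]), List.nil_append]

lemma filterF {M T : List (Bool × (A ⊕ B))}
    (hM : ∀ x ∈ M, x.1 = false) (hT : ∀ x ∈ T, x.1 = true) :
    (M ++ T).filter (fun x => x.1 = false) = M := by
  rw [List.filter_append, List.filter_eq_self.2 (by intro x hx; simp [hM x hx]),
    List.filter_eq_nil_iff.2 (by intro x hx; simp [hT x hx]), List.append_nil]

end Counting



section Main

variable {parA : A → Bool} {parB : B → Bool}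

lemma varsigma_eq (P : (List A × List B) × (List A × List B)) :
    varsigma parA parB P =
      if (P.1.1.length : ℤ) - P.1.2.length = (P.2.1.length : ℤ) - P.2.2.length then P
      else if (P.2.1.length : ℤ) - P.2.2.length < (P.1.1.length : ℤ) - P.1.2.length then
        ((((treduce (tsignSeq parA parB P.1 P.2)).filter (fun x => x.1 = true)).take
          (((P.1.1.length : ℤ) - P.1.2.length) - ((P.2.1.length : ℤ) - P.2.2.length)).toNat).map
            Prod.snd).foldl movePlus P
      else
        ((((treduce (tsignSeq parA parB P.1 P.2)).filter (fun x => x.1 = false)).reverse.take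
          (((P.2.1.length : ℤ) - P.2.2.length) - ((P.1.1.length : ℤ) - P.1.2.length)).toNat).map
            Prod.snd).foldl moveMinus P := rfl

lemma varsigma_main {k₁ k₂ : ℤ} {P : (List A × List B) × (List A × List B)}
    (h₁ : IsLevelOne parA parB P.1 k₁) (h₂ : IsLevelOne parA parB P.2 k₂) :
    IsLevelOne parA parB (varsigma parA parB P).1 k₂ ∧
    IsLevelOne parA parB (varsigma parA parB P).2 k₁ ∧
    varsigma parA parB (varsigma parA parB P) = P ∧
    ((varsigma parA parB P).1.1 ++ (varsigma parA parB P).2.1).Perm (P.1.1 ++ P.2.1) ∧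
    ((varsigma parA parB P).1.2 ++ (varsigma parA parB P).2.2).Perm (P.1.2 ++ P.2.2) := by
  obtain ⟨ha1, hb1, hk1⟩ := h₁
  obtain ⟨ha2, hb2, hk2⟩ := h₂
  have hsr : SRows parA parB P := ⟨ha1, hb1, ha2, hb2⟩
  obtain ⟨M, T, hMT, hM, hT⟩ := treduce_shape (tsignSeq parA parB P.1 P.2)
  have hcount : (T.length : ℤ) - M.length = k₁ - k₂ := by
    have h1 := eps_treduce (tsignSeq parA parB P.1 P.2)
    rw [hMT, eps_shape hM hT] at h1
    have h2 : eps (tsignSeq parA parB P.1 P.2)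
        = ((P.1.1.length : ℤ) - P.1.2.length) - ((P.2.1.length : ℤ) - P.2.2.length) := by
      have := eps_tsignSeq (parA := parA) (parB := parB) P.1.1 P.2.1 P.1.2 P.2.2
      simpa using this
    rw [h2, hk1, hk2] at h1
    exact h1
  rcases lt_trichotomy k₁ k₂ with hlt | heq | hgt
  · -- k₁ < k₂ : minus moves
    set d := (k₂ - k₁).toNat with hddef
    have hdz : (d : ℤ) = k₂ - k₁ := Int.toNat_of_nonneg (by omega)
    have hdM : d ≤ M.length := by omega
    have hQ : varsigma parA parB P = ((M.reverse.take d).map Prod.snd).foldl moveMinus P := by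
      rw [varsigma_eq, if_neg (by rw [hk1, hk2]; omega), if_neg (by rw [hk1, hk2]; omega),
        hMT, filterF hM hT, hk1, hk2]
    obtain ⟨i1, i2, i3, i4, i5, i6, i7⟩ := iter_minus d P M T hsr hMT hM hT hdM
    have hkQ1 : ((((M.reverse.take d).map Prod.snd).foldl moveMinus P).1.1.length : ℤ)
        - (((M.reverse.take d).map Prod.snd).foldl moveMinus P).1.2.length = k₂ := by
      rw [i6, hk1]; omega
    have hkQ2 : ((((M.reverse.take d).map Prod.snd).foldl moveMinus P).2.1.length : ℤ)
        - (((M.reverse.take d).map Prod.snd).foldl moveMinus P).2.2.length = k₁ := by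
      rw [i7, hk2]; omega
    rw [hQ]
    refine ⟨⟨i1.1, i1.2.1, hkQ1⟩, ⟨i1.2.2.1, i1.2.2.2, hkQ2⟩, ?_, i4, i5⟩
    -- second application
    have hflipslen : ((M.drop (M.length - d)).map
        (fun x => ((true, x.2) : Bool × (A ⊕ B)))).length = d := by
      simp [List.length_drop]
      omega
    have hred2 : treduce (tsignSeq parA parB
        (((M.reverse.take d).map Prod.snd).foldl moveMinus P).1
        (((M.reverse.take d).map Prod.snd).foldl moveMinus P).2)
        = M.take (M.length - d) ++
          ((M.drop (M.length - d)).map (fun x => ((true, x.2) : Bool × (A ⊕ B))) ++ T) := by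
      rw [i2, List.append_assoc]
    have hMF : ∀ x ∈ M.take (M.length - d), x.1 = false :=
      fun x hx => hM x ((List.take_sublist _ _).subset hx)
    have hTT : ∀ x ∈ (M.drop (M.length - d)).map
        (fun x => ((true, x.2) : Bool × (A ⊕ B))) ++ T, x.1 = true := by
      intro x hx
      rcases List.mem_append.1 hx with h | h
      · obtain ⟨z, _, rfl⟩ := List.mem_map.1 h
        rfl
      · exact hT x h
    rw [varsigma_eq, if_neg (by rw [hkQ1, hkQ2]; omega),
      if_pos (by rw [hkQ1, hkQ2]; omega), hkQ1, hkQ2, hred2, filterT hMF hTT]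
    have htake : (((M.drop (M.length - d)).map
        (fun x => ((true, x.2) : Bool × (A ⊕ B))) ++ T)).take ((k₂ - k₁).toNat)
        = (M.drop (M.length - d)).map (fun x => ((true, x.2) : Bool × (A ⊕ B))) :=
      List.take_left' hflipslen
    rw [htake]
    have hmaps : ((M.drop (M.length - d)).map
        (fun x => ((true, x.2) : Bool × (A ⊕ B)))).map Prod.snd
        = ((M.reverse.take d).map Prod.snd).reverse := by
      rw [List.take_reverse, List.map_reverse, List.reverse_reverse, List.map_map]
      rfl
    rw [hmaps]
    exact i3
  · -- k₁ = k₂ : identity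
    have hP : varsigma parA parB P = P := by
      rw [varsigma_eq, if_pos (by rw [hk1, hk2, heq])]
    rw [hP, hP]
    exact ⟨⟨ha1, hb1, by rw [hk1, heq]⟩, ⟨ha2, hb2, by rw [hk2, ← heq]⟩, rfl,
      List.Perm.refl _, List.Perm.refl _⟩
  · -- k₂ < k₁ : plus moves
    set d := (k₁ - k₂).toNat with hddef
    have hdz : (d : ℤ) = k₁ - k₂ := Int.toNat_of_nonneg (by omega)
    have hdT : d ≤ T.length := by omega
    have hQ : varsigma parA parB P = ((T.take d).map Prod.snd).foldl movePlus P := by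
      rw [varsigma_eq, if_neg (by rw [hk1, hk2]; omega), if_pos (by rw [hk1, hk2]; omega),
        hMT, filterT hM hT, hk1, hk2]
    obtain ⟨i1, i2, i3, i4, i5, i6, i7⟩ := iter_plus d P M T hsr hMT hM hT hdT
    have hkQ1 : ((((T.take d).map Prod.snd).foldl movePlus P).1.1.length : ℤ)
        - (((T.take d).map Prod.snd).foldl movePlus P).1.2.length = k₂ := by
      rw [i6, hk1]; omega
    have hkQ2 : ((((T.take d).map Prod.snd).foldl movePlus P).2.1.length : ℤ)
        - (((T.take d).map Prod.snd).foldl movePlus P).2.2.length = k₁ := by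
      rw [i7, hk2]; omega
    rw [hQ]
    refine ⟨⟨i1.1, i1.2.1, hkQ1⟩, ⟨i1.2.2.1, i1.2.2.2, hkQ2⟩, ?_, i4, i5⟩
    have hflipslen : (((T.take d).map
        (fun x => ((false, x.2) : Bool × (A ⊕ B)))).reverse).length = d := by
      simp [List.length_take]
      omega
    have hMF : ∀ x ∈ M ++ (T.take d).map (fun x => ((false, x.2) : Bool × (A ⊕ B))),
        x.1 = false := by
      intro x hx
      rcases List.mem_append.1 hx with h | h
      · exact hM x h
      · obtain ⟨z, _, rfl⟩ := List.mem_map.1 h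
        rfl
    have hTT : ∀ x ∈ T.drop d, x.1 = true :=
      fun x hx => hT x ((List.drop_sublist _ _).subset hx)
    rw [varsigma_eq, if_neg (by rw [hkQ1, hkQ2]; omega),
      if_neg (by rw [hkQ1, hkQ2]; omega), hkQ1, hkQ2, i2, filterF hMF hTT,
      List.reverse_append, List.take_left' hflipslen]
    have hmaps : (((T.take d).map
        (fun x => ((false, x.2) : Bool × (A ⊕ B)))).reverse).map Prod.snd
        = ((T.take d).map Prod.snd).reverse := by
      rw [List.map_reverse, List.map_map]
      rfl
    rw [hmaps]
    exact i3

end Main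

theorem varsigma_involutive_bijective_weight_preserving
    (parA : A → Bool) (parB : B → Bool) (k₁ k₂ : ℤ) :
    (∀ P : (List A × List B) × (List A × List B),
      IsLevelOne parA parB P.1 k₁ → IsLevelOne parA parB P.2 k₂ →
        varsigma parA parB (varsigma parA parB P) = P ∧
        ((varsigma parA parB P).1.1 ++ (varsigma parA parB P).2.1).Perm
          (P.1.1 ++ P.2.1) ∧
        ((varsigma parA parB P).1.2 ++ (varsigma parA parB P).2.2).Perm
          (P.1.2 ++ P.2.2)) ∧
    Set.BijOn (varsigma parA parB)
      {P | IsLevelOne parA parB P.1 k₁ ∧ IsLevelOne parA parB P.2 k₂}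
      {P | IsLevelOne parA parB P.1 k₂ ∧ IsLevelOne parA parB P.2 k₁} := by
  constructor
  · intro P h1 h2
    obtain ⟨_, _, hinv, hp1, hp2⟩ := varsigma_main h1 h2
    exact ⟨hinv, hp1, hp2⟩
  · refine ⟨?_, ?_, ?_⟩
    · intro P hP
      obtain ⟨l1, l2, _, _, _⟩ := varsigma_main hP.1 hP.2
      exact ⟨l1, l2⟩
    · intro P hP Q hQ heq
      have h1 := (varsigma_main hP.1 hP.2).2.2.1
      have h2 := (varsigma_main hQ.1 hQ.2).2.2.1
      rw [← h1, heq, h2]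
    · intro Q hQ
      obtain ⟨l1, l2, hinv, _, _⟩ := varsigma_main hQ.1 hQ.2
      exact ⟨varsigma parA parB Q, ⟨l1, l2⟩, hinv⟩

end KP
end
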